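/- arXiv:0802.0851 — 11 statements merged into one kernel-verified Lean document; each statement's English description precedes it below -/
import Mathlib

section
/- Let α ∈ (0,2) and c ≤ α + 1. Then the function r ↦ e^{c r}/(e^r − 1)^{α+1} is strictly decreasing on (0, ∞). (This shows that every Lamperti stable distribution belongs to the Jurek class.) -/
open Set

lemma lamperti_aux (β : ℝ) (hβ : β ≤ 1) :
    StrictMonoOn (fun r : ℝ => Real.exp ((1 - β) * r) - Real.exp (-β * r))
      (Set.Ici 0) := by
  apply strictMonoOn_of_deriv_pos (convex_Ici 0)
  · fun_prop
  · intro r hr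
    rw [interior_Ici] at hr
    have h1 : HasDerivAt (fun r : ℝ => Real.exp ((1 - β) * r))
        (Real.exp ((1 - β) * r) * (1 - β)) r := by
      simpa using ((hasDerivAt_id r).const_mul (1 - β)).exp
    have h2 : HasDerivAt (fun r : ℝ => Real.exp (-β * r))
        (Real.exp (-β * r) * (-β)) r := by
      simpa using ((hasDerivAt_id r).const_mul (-β)).exp
    rw [(show HasDerivAt (fun r : ℝ => Real.exp ((1 - β) * r) - Real.exp (-β * r)) _ r
      from h1.sub h2).deriv]
    have he : Real.exp ((1 - β) * r) = Real.exp r * Real.exp (-β * r) := by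
      rw [← Real.exp_add]; ring_nf
    have hE : 1 < Real.exp r := Real.one_lt_exp_iff.mpr hr
    have hA : 0 < Real.exp (-β * r) := Real.exp_pos _
    rw [he]
    nlinarith [mul_nonneg (sub_nonneg.mpr hβ) (le_of_lt (sub_pos.mpr hE))]

theorem lamperti_stable_density_strictAnti
    (α c : ℝ) (hα : α ∈ Set.Ioo (0:ℝ) 2) (hc : c ≤ α + 1) :
    StrictAntiOn (fun r : ℝ => Real.exp (c * r) / (Real.exp r - 1) ^ (α + 1))
      (Set.Ioi 0) := by
  obtain ⟨hα0, hα2⟩ := hα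
  have hα1 : (0:ℝ) < α + 1 := by linarith
  set β := c / (α + 1) with hβdef
  have hβ : β ≤ 1 := (div_le_one hα1).mpr hc
  have hβc : β * (α + 1) = c := by rw [hβdef]; field_simp
  intro x hx y hy hxy
  simp only [Set.mem_Ioi] at hx hy
  have hfact : ∀ r : ℝ, Real.exp ((1 - β) * r) - Real.exp (-β * r)
      = (Real.exp (β * r))⁻¹ * (Real.exp r - 1) := by
    intro r
    rw [mul_sub, ← Real.exp_neg, ← Real.exp_add]
    ring_nf
  have hpos : ∀ r : ℝ, 0 < r →
      0 < Real.exp ((1 - β) * r) - Real.exp (-β * r) := by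
    intro r hr
    rw [hfact]
    have h1 : (1:ℝ) < Real.exp r := Real.one_lt_exp_iff.mpr hr
    have h2 : (0:ℝ) < Real.exp r - 1 := by linarith
    positivity
  have hmono := lamperti_aux β hβ (le_of_lt hx) (le_of_lt hy) hxy
  have hid : ∀ r : ℝ, 0 < r →
      (1 / (Real.exp ((1 - β) * r) - Real.exp (-β * r))) ^ (α + 1)
        = Real.exp (c * r) / (Real.exp r - 1) ^ (α + 1) := by
    intro r hr
    have hE : 1 < Real.exp r := Real.one_lt_exp_iff.mpr hr
    have h2 : 1 / (Real.exp ((1 - β) * r) - Real.exp (-β * r))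
        = Real.exp (β * r) / (Real.exp r - 1) := by
      rw [hfact, one_div, mul_inv, inv_inv, div_eq_mul_inv]
    rw [h2, Real.div_rpow (le_of_lt (Real.exp_pos _)) (by linarith),
      ← Real.exp_mul]
    congr 1
    rw [← hβc]; ring
  rw [show (fun r : ℝ => Real.exp (c * r) / (Real.exp r - 1) ^ (α + 1)) y
      = (1 / (Real.exp ((1 - β) * y) - Real.exp (-β * y))) ^ (α + 1)
      from (hid y hy).symm,
    show (fun r : ℝ => Real.exp (c * r) / (Real.exp r - 1) ^ (α + 1)) x
      = (1 / (Real.exp ((1 - β) * x) - Real.exp (-β * x))) ^ (α + 1)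
      from (hid x hx).symm]
  refine Real.rpow_lt_rpow (one_div_pos.mpr (hpos y hy)).le ?_ hα1
  exact one_div_lt_one_div_of_lt (hpos x hx) hmono
end

section
/- Let α ∈ (0,2) and c ≤ α + 1/2. Then the function r ↦ r · e^{c r}/(e^r − 1)^{α+1} is strictly decreasing on (0, ∞). Equivalently, for all r > 0 one has e^r (1 + (c − α − 1) r) − c r − 1 < 0. (This is the key step proving that a Lamperti stable distribution with f(ξ) ≤ α + 1/2 for all ξ is self-decomposable.) -/
open Set

private lemma pade_key (r : ℝ) (hr : 0 ≤ r) : Real.exp r * (2 - r) ≤ 2 + r := by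
  set ψ : ℝ → ℝ := fun x => 2 + x - Real.exp x * (2 - x) with hψ
  have hd : ∀ x : ℝ, HasDerivAt ψ (1 - (Real.exp x * (2 - x) + Real.exp x * (0 - 1))) x := by
    intro x
    exact ((hasDerivAt_id x).const_add 2).sub
      ((Real.hasDerivAt_exp x).mul ((hasDerivAt_const x (2:ℝ)).sub (hasDerivAt_id x)))
  have hmono : MonotoneOn ψ (Set.Ici 0) := by
    apply monotoneOn_of_deriv_nonneg (convex_Ici 0)
    · exact fun x _ => ((hd x).continuousAt.continuousWithinAt)
    · exact fun x _ => (hd x).differentiableAt.differentiableWithinAt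
    · intro x _
      rw [(hd x).deriv]
      have h1 : (1 : ℝ) + (-x) ≤ Real.exp (-x) := by linarith [Real.add_one_le_exp (-x)]
      have h2 : (1 + (-x)) * Real.exp x ≤ Real.exp (-x) * Real.exp x :=
        mul_le_mul_of_nonneg_right h1 (Real.exp_pos x).le
      rw [← Real.exp_add] at h2
      simp only [neg_add_cancel, Real.exp_zero] at h2
      nlinarith [Real.exp_pos x]
  have h0 : ψ 0 ≤ ψ r := hmono (by simp) (by simpa using hr) hr
  simp only [hψ, Real.exp_zero] at h0
  linarith

private lemma part2_key (α c : ℝ) (hα : 0 < α) (hc : c ≤ α + 1/2) (r : ℝ) (hr : 0 < r) :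
    Real.exp r * (1 + (c - α - 1) * r) - c * r - 1 < 0 := by
  have hK := pade_key r hr.le
  have hE : (1 : ℝ) ≤ Real.exp r := Real.one_le_exp hr.le
  have hP : 0 ≤ (Real.exp r - 1) * r * (α + 1/2 - c) :=
    mul_nonneg (mul_nonneg (by linarith) hr.le) (by linarith)
  nlinarith [mul_pos hα hr]

theorem lamperti_stable_selfdecomposable_key
    (α c : ℝ) (hα : α ∈ Set.Ioo (0:ℝ) 2) (hc : c ≤ α + 1/2) :
    StrictAntiOn (fun r : ℝ => r * Real.exp (c * r) / (Real.exp r - 1) ^ (α + 1))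
      (Set.Ioi 0) ∧
    ∀ r : ℝ, 0 < r → Real.exp r * (1 + (c - α - 1) * r) - c * r - 1 < 0 := by
  obtain ⟨hα0, hα2⟩ := hα
  have part2 : ∀ r : ℝ, 0 < r → Real.exp r * (1 + (c - α - 1) * r) - c * r - 1 < 0 :=
    fun r hr => part2_key α c hα0 hc r hr
  refine ⟨?_, part2⟩
  have hderiv : ∀ x ∈ Set.Ioi (0:ℝ),
      HasDerivAt (fun r : ℝ => r * Real.exp (c * r) / (Real.exp r - 1) ^ (α + 1))
        (((1 * Real.exp (c * x) + x * (Real.exp (c * x) * (c * 1))) * (Real.exp x - 1) ^ (α + 1)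
          - x * Real.exp (c * x) * (Real.exp x * (α + 1) * (Real.exp x - 1) ^ (α + 1 - 1)))
          / ((Real.exp x - 1) ^ (α + 1)) ^ 2) x := by
    intro x hx
    have hx0 : (0:ℝ) < x := hx
    have hpos : 0 < Real.exp x - 1 := by nlinarith [Real.add_one_le_exp x]
    have hg : HasDerivAt (fun r : ℝ => r * Real.exp (c * r))
        (1 * Real.exp (c * x) + x * (Real.exp (c * x) * (c * 1))) x :=
      (hasDerivAt_id x).mul ((hasDerivAt_id x).const_mul c).exp
    have hh : HasDerivAt (fun r : ℝ => (Real.exp r - 1) ^ (α + 1))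
        (Real.exp x * (α + 1) * (Real.exp x - 1) ^ (α + 1 - 1)) x :=
      ((Real.hasDerivAt_exp x).sub_const 1).rpow_const (Or.inl hpos.ne')
    exact hg.div hh (Real.rpow_pos_of_pos hpos _).ne'
  apply strictAntiOn_of_deriv_neg (convex_Ioi 0)
  · exact fun x hx => (hderiv x hx).differentiableAt.continuousAt.continuousWithinAt
  · intro x hx
    rw [interior_Ioi] at hx
    have hx0 : (0:ℝ) < x := hx
    have hpos : 0 < Real.exp x - 1 := by nlinarith [Real.add_one_le_exp x]
    rw [(hderiv x hx).deriv]
    apply div_neg_of_neg_of_pos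
    · have hnum : (1 * Real.exp (c * x) + x * (Real.exp (c * x) * (c * 1))) * (Real.exp x - 1) ^ (α + 1)
          - x * Real.exp (c * x) * (Real.exp x * (α + 1) * (Real.exp x - 1) ^ (α + 1 - 1))
          = (Real.exp x - 1) ^ α * Real.exp (c * x)
            * (Real.exp x * (1 + (c - α - 1) * x) - c * x - 1) := by
        rw [show α + 1 - 1 = α by ring, Real.rpow_add_one hpos.ne']
        ring
      rw [hnum]
      exact mul_neg_of_pos_of_neg
        (mul_pos (Real.rpow_pos_of_pos hpos α) (Real.exp_pos _)) (part2 x hx0)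
    · exact pow_pos (Real.rpow_pos_of_pos hpos _) 2
end

section
/- Let α ∈ (0,2) and β ∈ ℝ. Then liminf_{r → 0^+} r^{α−2} · ∫_0^r x² · e^{β x}(e^x − 1)^{−(α+1)} dx > 0; in fact there exist K > 0 and r₀ > 0 such that ∫_0^r x² e^{β x}(e^x − 1)^{−(α+1)} dx ≥ K r^{2−α} for all r ∈ (0, r₀). (By Sato's smoothness criterion, this implies that every one-dimensional Lamperti stable distribution has a C^∞ density all of whose derivatives vanish at infinity.) -/
open MeasureTheory Set Filter

theorem lamperti_stable_smooth_density_criterion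
    (α β : ℝ) (hα : α ∈ Set.Ioo (0:ℝ) 2) :
    0 < Filter.liminf
        (fun r : ℝ => r ^ (α - 2) *
          ∫ x in Set.Ioc (0:ℝ) r, x ^ 2 * Real.exp (β * x) * (Real.exp x - 1) ^ (-(α + 1)))
        (nhdsWithin 0 (Set.Ioi 0)) ∧
    ∃ K > (0:ℝ), ∃ r₀ > (0:ℝ), ∀ r ∈ Set.Ioo (0:ℝ) r₀,
      K * r ^ (2 - α) ≤
        ∫ x in Set.Ioc (0:ℝ) r, x ^ 2 * Real.exp (β * x) * (Real.exp x - 1) ^ (-(α + 1)) := by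
  obtain ⟨hα0, hα2⟩ := hα
  have hexp1 : (0:ℝ) < Real.exp 1 := Real.exp_pos 1
  set g : ℝ → ℝ := fun x => x ^ 2 * Real.exp (β * x) * (Real.exp x - 1) ^ (-(α + 1)) with hg
  set c : ℝ := Real.exp (-|β|) * (Real.exp 1) ^ (-(α + 1)) with hc
  have hc0 : 0 < c := by positivity
  set K : ℝ := c / (2 - α) with hKdef
  set C : ℝ := Real.exp |β| / (2 - α) with hCdef
  have h2α : (0:ℝ) < 2 - α := by linarith
  have hK0 : 0 < K := div_pos hc0 h2α
  have hC0 : 0 < C := div_pos (Real.exp_pos _) h2α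
  have hm1 : (-1:ℝ) < 1 - α := by linarith
  -- main bounds
  have main : ∀ r ∈ Set.Ioo (0:ℝ) 1,
      K * r ^ (2 - α) ≤ (∫ x in Set.Ioc (0:ℝ) r, g x) ∧
      (∫ x in Set.Ioc (0:ℝ) r, g x) ≤ C * r ^ (2 - α) := by
    intro r hr
    obtain ⟨hr0, hr1⟩ := hr
    -- pointwise lower bound
    have hpt : ∀ x ∈ Set.Ioc (0:ℝ) r, c * x ^ (1 - α) ≤ g x := by
      intro x hx
      obtain ⟨hx0, hxr⟩ := hx
      have hx1 : x ≤ 1 := le_of_lt (lt_of_le_of_lt hxr hr1)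
      have hex1 : (0:ℝ) < Real.exp x - 1 := by
        have := Real.one_lt_exp_iff.mpr hx0
        linarith
      have hxx : x ^ 2 * x ^ (-(α + 1)) = x ^ (1 - α) := by
        rw [← Real.rpow_natCast x 2, ← Real.rpow_add hx0]
        congr 1
        push_cast
        ring
      have hβ : Real.exp (-|β|) ≤ Real.exp (β * x) := by
        apply Real.exp_le_exp.mpr
        have h1 : |β * x| ≤ |β| := by
          rw [abs_mul, abs_of_pos hx0]
          nlinarith [abs_nonneg β]
        have := abs_le.mp h1
        linarith [this.1]
      have hub : Real.exp x - 1 ≤ Real.exp 1 * x := by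
        have h1 : -x + 1 ≤ Real.exp (-x) := Real.add_one_le_exp (-x)
        have h2 : Real.exp (-x) * Real.exp x = 1 := by
          rw [← Real.exp_add]; simp
        have h3 : Real.exp x ≤ Real.exp 1 := Real.exp_le_exp.mpr hx1
        nlinarith [Real.exp_pos x]
      have hrpow : (Real.exp 1 * x) ^ (-(α + 1)) ≤ (Real.exp x - 1) ^ (-(α + 1)) :=
        Real.rpow_le_rpow_of_nonpos hex1 hub (by linarith)
      have heq : c * x ^ (1 - α) = x ^ 2 * Real.exp (-|β|) * (Real.exp 1 * x) ^ (-(α + 1)) := by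
        rw [Real.mul_rpow hexp1.le hx0.le, hc, ← hxx]
        ring
      rw [heq]
      show x ^ 2 * Real.exp (-|β|) * (Real.exp 1 * x) ^ (-(α + 1)) ≤
        x ^ 2 * Real.exp (β * x) * (Real.exp x - 1) ^ (-(α + 1))
      apply mul_le_mul (mul_le_mul_of_nonneg_left hβ (sq_nonneg x)) hrpow
        (le_of_lt (Real.rpow_pos_of_pos (by positivity) _)) (by positivity)
    -- pointwise upper bound
    have hptu : ∀ x ∈ Set.Ioc (0:ℝ) r, g x ≤ Real.exp |β| * x ^ (1 - α) := by
      intro x hx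
      obtain ⟨hx0, hxr⟩ := hx
      have hex1 : (0:ℝ) < Real.exp x - 1 := by
        have := Real.one_lt_exp_iff.mpr hx0
        linarith
      have hxx : x ^ 2 * x ^ (-(α + 1)) = x ^ (1 - α) := by
        rw [← Real.rpow_natCast x 2, ← Real.rpow_add hx0]
        congr 1
        push_cast
        ring
      have hβ : Real.exp (β * x) ≤ Real.exp |β| := by
        apply Real.exp_le_exp.mpr
        have h1 : |β * x| ≤ |β| := by
          rw [abs_mul, abs_of_pos hx0]
          nlinarith [abs_nonneg β, lt_of_le_of_lt hxr hr1]
        linarith [(abs_le.mp h1).2]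
      have hlb : x ≤ Real.exp x - 1 := by linarith [Real.add_one_le_exp x]
      have hrpow : (Real.exp x - 1) ^ (-(α + 1)) ≤ x ^ (-(α + 1)) :=
        Real.rpow_le_rpow_of_nonpos hx0 hlb (by linarith)
      calc g x ≤ x ^ 2 * Real.exp |β| * x ^ (-(α + 1)) := by
            show x ^ 2 * Real.exp (β * x) * (Real.exp x - 1) ^ (-(α + 1)) ≤ _
            apply mul_le_mul (mul_le_mul_of_nonneg_left hβ (sq_nonneg x)) hrpow
              (le_of_lt (Real.rpow_pos_of_pos hex1 _)) (by positivity)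
        _ = Real.exp |β| * x ^ (1 - α) := by rw [← hxx]; ring
    -- integrability of x ^ (1 - α)
    have hrpow_int : IntegrableOn (fun x : ℝ => x ^ (1 - α)) (Set.Ioc (0:ℝ) r) := by
      have h := intervalIntegral.intervalIntegrable_rpow' hm1 (a := (0:ℝ)) (b := r)
      rwa [intervalIntegrable_iff, Set.uIoc_of_le hr0.le] at h
    have hint_low : IntegrableOn (fun x => c * x ^ (1 - α)) (Set.Ioc (0:ℝ) r) :=
      hrpow_int.const_mul c
    have hint_up : IntegrableOn (fun x => Real.exp |β| * x ^ (1 - α)) (Set.Ioc (0:ℝ) r) :=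
      hrpow_int.const_mul _
    -- integrability of g
    have hgmeas : AEStronglyMeasurable g (volume.restrict (Set.Ioc (0:ℝ) r)) := by
      apply ContinuousOn.aestronglyMeasurable _ measurableSet_Ioc
      apply ContinuousOn.mul
      · exact ((continuous_pow 2).mul (Real.continuous_exp.comp (continuous_const.mul
          continuous_id))).continuousOn
      · apply ContinuousOn.rpow_const (Real.continuous_exp.sub continuous_const).continuousOn
        intro x hx
        left
        have := Real.one_lt_exp_iff.mpr hx.1
        have : (0:ℝ) < Real.exp x - 1 := by linarith
        exact ne_of_gt this
    have hint_g : IntegrableOn g (Set.Ioc (0:ℝ) r) := by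
      apply hint_up.mono' hgmeas
      filter_upwards [ae_restrict_mem measurableSet_Ioc] with x hx
      have hex1 : (0:ℝ) < Real.exp x - 1 := by
        have := Real.one_lt_exp_iff.mpr hx.1
        linarith
      have hgnn : 0 ≤ g x := by
        have h1 : (0:ℝ) < (Real.exp x - 1) ^ (-(α + 1)) := Real.rpow_pos_of_pos hex1 _
        have h2 : (0:ℝ) < Real.exp (β * x) := Real.exp_pos _
        have h3 : (0:ℝ) ≤ x ^ 2 := sq_nonneg x
        show (0:ℝ) ≤ x ^ 2 * Real.exp (β * x) * (Real.exp x - 1) ^ (-(α + 1))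
        positivity
      rw [Real.norm_of_nonneg hgnn]
      exact hptu x hx
    -- values of the bounding integrals
    have hval : ∀ a : ℝ, ∫ x in Set.Ioc (0:ℝ) r, a * x ^ (1 - α)
        = (a / (2 - α)) * r ^ (2 - α) := by
      intro a
      rw [MeasureTheory.integral_const_mul]
      have h1 : ∫ x in Set.Ioc (0:ℝ) r, x ^ (1 - α) = ∫ x in (0:ℝ)..r, x ^ (1 - α) := by
        rw [intervalIntegral.integral_of_le hr0.le]
      rw [h1, integral_rpow (Or.inl hm1),
        Real.zero_rpow (by intro h; rw [show (1 - α) + 1 = 2 - α by ring] at h; linarith),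
        show (1 - α) + 1 = 2 - α by ring]
      field_simp
      ring
    constructor
    · have hcmp : ∫ x in Set.Ioc (0:ℝ) r, c * x ^ (1 - α) ≤ ∫ x in Set.Ioc (0:ℝ) r, g x :=
        setIntegral_mono_on hint_low hint_g measurableSet_Ioc hpt
      rw [hval c] at hcmp
      exact le_trans (le_of_eq (by rw [hKdef])) hcmp
    · have hcmp : ∫ x in Set.Ioc (0:ℝ) r, g x
          ≤ ∫ x in Set.Ioc (0:ℝ) r, Real.exp |β| * x ^ (1 - α) :=
        setIntegral_mono_on hint_g hint_up measurableSet_Ioc hptu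
      rw [hval (Real.exp |β|)] at hcmp
      exact le_trans hcmp (le_of_eq (by rw [hCdef]))
  refine ⟨?_, K, hK0, 1, one_pos, fun r hr => (main r hr).1⟩
  -- liminf part
  have h1 : ∀ᶠ r in nhdsWithin (0:ℝ) (Set.Ioi 0), r ∈ Set.Ioi (0:ℝ) :=
    self_mem_nhdsWithin
  have h2 : ∀ᶠ r in nhdsWithin (0:ℝ) (Set.Ioi 0), r < 1 :=
    eventually_nhdsWithin_of_eventually_nhds (eventually_lt_nhds one_pos)
  have hpowc : ∀ r : ℝ, 0 < r → ∀ a : ℝ, r ^ (α - 2) * (a * r ^ (2 - α)) = a := by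
    intro r hr0 a
    rw [mul_comm a, ← mul_assoc, ← Real.rpow_add hr0]
    norm_num
  have hev : ∀ᶠ r in nhdsWithin (0:ℝ) (Set.Ioi 0),
      K ≤ r ^ (α - 2) * ∫ x in Set.Ioc (0:ℝ) r, g x := by
    filter_upwards [h1, h2] with r hr0 hr1
    have hr0' : (0:ℝ) < r := hr0
    have hineq := (main r ⟨hr0', hr1⟩).1
    calc K = r ^ (α - 2) * (K * r ^ (2 - α)) := (hpowc r hr0' K).symm
      _ ≤ r ^ (α - 2) * ∫ x in Set.Ioc (0:ℝ) r, g x := by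
          apply mul_le_mul_of_nonneg_left hineq
          positivity
  have hevu : ∀ᶠ r in nhdsWithin (0:ℝ) (Set.Ioi 0),
      (r ^ (α - 2) * ∫ x in Set.Ioc (0:ℝ) r, g x) ≤ C := by
    filter_upwards [h1, h2] with r hr0 hr1
    have hr0' : (0:ℝ) < r := hr0
    have hineq := (main r ⟨hr0', hr1⟩).2
    calc r ^ (α - 2) * ∫ x in Set.Ioc (0:ℝ) r, g x
        ≤ r ^ (α - 2) * (C * r ^ (2 - α)) := by
          apply mul_le_mul_of_nonneg_left hineq
          positivity
      _ = C := hpowc r hr0' C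
  have hcobdd : IsCoboundedUnder (· ≥ ·) (nhdsWithin (0:ℝ) (Set.Ioi 0))
      (fun r : ℝ => r ^ (α - 2) * ∫ x in Set.Ioc (0:ℝ) r, g x) :=
    isCoboundedUnder_ge_of_eventually_le _ hevu
  exact lt_of_lt_of_le hK0 (le_liminf_of_le hcobdd hev)
end

section
/- Let α ∈ (0,2) and β < α + 1, and define the tail function ν̄(u) = ∫_u^∞ e^{β r}(e^r − 1)^{−(α+1)} dr for u > 0. Then for every x ∈ ℝ, lim_{u → ∞} ν̄(u − x)/ν̄(u) = e^{(α+1−β)x}. (That is, the tail of the Lévy measure of a one-dimensional Lamperti stable distribution belongs to the convolution class 𝓛^{(α+1−β)}.) -/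
open MeasureTheory Set Filter

theorem lamperti_stable_tail_class_L
    (α β : ℝ) (hα : α ∈ Set.Ioo (0:ℝ) 2) (hβ : β < α + 1) (x : ℝ) :
    Filter.Tendsto
      (fun u : ℝ =>
        (∫ r in Set.Ioi (u - x), Real.exp (β * r) * (Real.exp r - 1) ^ (-(α + 1))) /
          ∫ r in Set.Ioi u, Real.exp (β * r) * (Real.exp r - 1) ^ (-(α + 1)))
      Filter.atTop (nhds (Real.exp ((α + 1 - β) * x))) := by
  obtain ⟨hα0, hα2⟩ := hα
  set f : ℝ → ℝ := fun r => Real.exp (β * r) * (Real.exp r - 1) ^ (-(α + 1)) with hfdef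
  have hfpos : ∀ r : ℝ, 0 < r → 0 < f r := by
    intro r hr
    have h1 : (0:ℝ) < Real.exp r - 1 := by
      nlinarith [Real.add_one_lt_exp (ne_of_gt hr)]
    exact mul_pos (Real.exp_pos _) (Real.rpow_pos_of_pos h1 _)
  have hmeas : Measurable f := by
    apply Measurable.mul
    · exact (measurable_const.mul measurable_id).exp
    · exact (Real.measurable_exp.sub measurable_const).pow measurable_const
  -- integrability on Ioi 1
  have hb : (0:ℝ) < α + 1 - β := by linarith
  have hint : IntegrableOn f (Set.Ioi (1:ℝ)) := by
    set c : ℝ := 1 - Real.exp (-1) with hc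
    have hc0 : 0 < c := by
      have := Real.exp_lt_one_iff.mpr (by norm_num : (-1:ℝ) < 0)
      linarith
    have hmaj : IntegrableOn (fun r => c ^ (-(α+1)) * Real.exp (-(α + 1 - β) * r))
        (Set.Ioi (1:ℝ)) := (exp_neg_integrableOn_Ioi 1 hb).const_mul _
    refine Integrable.mono' hmaj (hmeas.aestronglyMeasurable.restrict) ?_
    filter_upwards [ae_restrict_mem measurableSet_Ioi] with r hr
    have hr1 : (1:ℝ) ≤ r := le_of_lt hr
    have hr0 : (0:ℝ) < r := by linarith
    have h1 : (0:ℝ) < Real.exp r - 1 := by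
      nlinarith [Real.add_one_lt_exp (ne_of_gt hr0)]
    have hce : c * Real.exp r ≤ Real.exp r - 1 := by
      have h2 : (1:ℝ) ≤ Real.exp (r - 1) := Real.one_le_exp (by linarith)
      have h3 : Real.exp (r - 1) = Real.exp (-1) * Real.exp r := by
        rw [← Real.exp_add]; congr 1; ring
      have h4 : (1:ℝ) ≤ Real.exp (-1) * Real.exp r := h3 ▸ h2
      rw [hc]; nlinarith [h4]
    have hcpos : 0 < c * Real.exp r := mul_pos hc0 (Real.exp_pos _)
    have hkey : (Real.exp r - 1) ^ (-(α+1)) ≤ (c * Real.exp r) ^ (-(α+1)) :=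
      Real.rpow_le_rpow_of_nonpos hcpos hce (by linarith)
    have hsplit : (c * Real.exp r) ^ (-(α+1))
        = c ^ (-(α+1)) * Real.exp (-(α+1) * r) := by
      rw [Real.mul_rpow hc0.le (Real.exp_pos r).le, ← Real.exp_mul, mul_comm r]
    rw [Real.norm_eq_abs, abs_of_pos (hfpos r hr0)]
    calc f r = Real.exp (β * r) * (Real.exp r - 1) ^ (-(α+1)) := rfl
      _ ≤ Real.exp (β * r) * (c ^ (-(α+1)) * Real.exp (-(α+1) * r)) := by
          rw [hsplit] at hkey
          exact mul_le_mul_of_nonneg_left hkey (Real.exp_pos _).le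
      _ = c ^ (-(α+1)) * Real.exp (-(α + 1 - β) * r) := by
          rw [mul_comm, mul_assoc, ← Real.exp_add]; congr 2; ring
  set F : ℝ → ℝ := fun u => ∫ r in Set.Ioi u, f r with hFdef
  have hF_eq : ∀ u : ℝ, 1 ≤ u → F u = F 1 - ∫ r in (1:ℝ)..u, f r := by
    intro u hu
    have hsplit : Set.Ioc (1:ℝ) u ∪ Set.Ioi u = Set.Ioi (1:ℝ) :=
      Set.Ioc_union_Ioi_eq_Ioi hu
    have hdisj : Disjoint (Set.Ioc (1:ℝ) u) (Set.Ioi u) := Set.Ioc_disjoint_Ioi le_rfl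
    have h1 : IntegrableOn f (Set.Ioc (1:ℝ) u) :=
      hint.mono_set Set.Ioc_subset_Ioi_self
    have h2 : IntegrableOn f (Set.Ioi u) :=
      hint.mono_set (Set.Ioi_subset_Ioi hu)
    have := MeasureTheory.setIntegral_union hdisj measurableSet_Ioi h1 h2
    rw [hsplit] at this
    rw [intervalIntegral.integral_of_le hu]
    simp only [hFdef]
    rw [this]; ring
  have hcont : ∀ v : ℝ, 0 < v → ContinuousAt f v := by
    intro v hv
    have h1 : (0:ℝ) < Real.exp v - 1 := by
      nlinarith [Real.add_one_lt_exp (ne_of_gt hv)]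
    apply ContinuousAt.mul
    · exact (Real.continuous_exp.comp (continuous_const.mul continuous_id)).continuousAt
    · exact ContinuousAt.rpow_const
        ((Real.continuous_exp.sub continuous_const).continuousAt) (Or.inl h1.ne')
  have hderiv : ∀ v : ℝ, 1 < v → HasDerivAt F (-(f v)) v := by
    intro v hv
    have hii : IntervalIntegrable f volume 1 v := by
      rw [intervalIntegrable_iff_integrableOn_Ioc_of_le hv.le]
      exact hint.mono_set Set.Ioc_subset_Ioi_self
    have hd : HasDerivAt (fun u => F 1 - ∫ r in (1:ℝ)..u, f r) (-(f v)) v := by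
      have := (intervalIntegral.integral_hasDerivAt_right hii
        (hmeas.stronglyMeasurable.stronglyMeasurableAtFilter) (hcont v (by linarith)))
      simpa using this.const_sub (F 1)
    apply hd.congr_of_eventuallyEq
    filter_upwards [Ioi_mem_nhds hv] with u hu
    exact hF_eq u (le_of_lt hu)
  have hF0 : Tendsto F atTop (nhds 0) := by
    have h1 : Tendsto (fun u : ℝ => F 1 - ∫ r in (1:ℝ)..u, f r) atTop (nhds (F 1 - F 1)) := by
      apply Tendsto.const_sub
      exact MeasureTheory.intervalIntegral_tendsto_integral_Ioi 1 hint tendsto_id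
    rw [sub_self] at h1
    apply h1.congr'
    filter_upwards [eventually_ge_atTop (1:ℝ)] with u hu
    exact (hF_eq u hu).symm
  -- the ratio of densities
  have hratio : Tendsto (fun u : ℝ => f (u - x) / f u) atTop
      (nhds (Real.exp ((α + 1 - β) * x))) := by
    have hq : Tendsto (fun u : ℝ => (Real.exp (u - x) - 1) / (Real.exp u - 1)) atTop
        (nhds (Real.exp (-x))) := by
      have h1 : Tendsto (fun u : ℝ => (Real.exp (-x) - Real.exp (-u)) / (1 - Real.exp (-u)))
          atTop (nhds ((Real.exp (-x) - 0) / (1 - 0))) := by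
        apply Tendsto.div
        · exact tendsto_const_nhds.sub Real.tendsto_exp_neg_atTop_nhds_zero
        · exact tendsto_const_nhds.sub Real.tendsto_exp_neg_atTop_nhds_zero
        · norm_num
      norm_num at h1
      apply h1.congr'
      filter_upwards [eventually_gt_atTop (0:ℝ)] with u hu
      have hA : (0:ℝ) < Real.exp u - 1 := by
        nlinarith [Real.add_one_lt_exp (ne_of_gt hu)]
      have hB : (0:ℝ) < 1 - Real.exp (-u) := by
        have : Real.exp (-u) < 1 := Real.exp_lt_one_iff.mpr (by linarith)
        linarith
      rw [div_eq_div_iff hB.ne' hA.ne']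
      have e1 : Real.exp (u - x) = Real.exp u * Real.exp (-x) := by
        rw [← Real.exp_add, sub_eq_add_neg]
      have e2 : Real.exp u * Real.exp (-u) = 1 := by
        rw [← Real.exp_add]; simp
      linear_combination (-(1 - Real.exp (-u))) * e1 + (-(1 - Real.exp (-x))) * e2
    have hrpow : Tendsto (fun u : ℝ => ((Real.exp (u - x) - 1) / (Real.exp u - 1)) ^ (-(α+1)))
        atTop (nhds ((Real.exp (-x)) ^ (-(α+1)))) := by
      have hc := Real.continuousAt_rpow_const (Real.exp (-x)) (-(α+1))
        (Or.inl (Real.exp_ne_zero _))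
      exact hc.tendsto.comp hq
    have hmain : Tendsto (fun u : ℝ =>
        Real.exp (-(β * x)) * ((Real.exp (u - x) - 1) / (Real.exp u - 1)) ^ (-(α+1)))
        atTop (nhds (Real.exp (-(β * x)) * (Real.exp (-x)) ^ (-(α+1)))) :=
      hrpow.const_mul _
    have hval : Real.exp (-(β * x)) * (Real.exp (-x)) ^ (-(α+1))
        = Real.exp ((α + 1 - β) * x) := by
      rw [← Real.exp_mul, ← Real.exp_add]; congr 1; ring
    rw [hval] at hmain
    apply hmain.congr'
    filter_upwards [eventually_gt_atTop (max 1 (x + 1))] with u hu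
    have hu1 : 1 < u := lt_of_le_of_lt (le_max_left _ _) hu
    have hux : 0 < u - x := by
      have := lt_of_le_of_lt (le_max_right _ _) hu; linarith
    have h1 : (0:ℝ) < Real.exp (u - x) - 1 := by
      nlinarith [Real.add_one_lt_exp (ne_of_gt hux)]
    have h2 : (0:ℝ) < Real.exp u - 1 := by
      nlinarith [Real.add_one_lt_exp (ne_of_gt (by linarith : (0:ℝ) < u))]
    have hdiv : ((Real.exp (u - x) - 1) / (Real.exp u - 1)) ^ (-(α+1))
        = (Real.exp (u - x) - 1) ^ (-(α+1)) / (Real.exp u - 1) ^ (-(α+1)) :=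
      Real.div_rpow h1.le h2.le _
    rw [hdiv]
    simp only [hfdef]
    rw [mul_div_mul_comm]
    congr 1
    rw [← Real.exp_sub]
    congr 1
    ring
  -- L'Hopital
  have hFx0 : Tendsto (fun u : ℝ => F (u - x)) atTop (nhds 0) := by
    apply hF0.comp
    exact (tendsto_atTop_add_const_right atTop (-x) tendsto_id).congr
      (fun u => by simp [sub_eq_add_neg])
  have hderivx : ∀ᶠ u in atTop, HasDerivAt (fun u : ℝ => F (u - x)) (-(f (u - x))) u := by
    filter_upwards [eventually_gt_atTop (max 1 (x + 1))] with u hu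
    have hux : 1 < u - x := by
      have := lt_of_le_of_lt (le_max_right _ _) hu; linarith
    exact (hderiv (u - x) hux).comp_sub_const u x
  have hderivF : ∀ᶠ u in atTop, HasDerivAt F (-(f u)) u := by
    filter_upwards [eventually_gt_atTop (1:ℝ)] with u hu
    exact hderiv u hu
  have hg' : ∀ᶠ u in atTop, -(f u) ≠ 0 := by
    filter_upwards [eventually_gt_atTop (1:ℝ)] with u hu
    exact neg_ne_zero.mpr (hfpos u (by linarith)).ne'
  have hdiv : Tendsto (fun u : ℝ => (-(f (u - x))) / (-(f u))) atTop
      (nhds (Real.exp ((α + 1 - β) * x))) := by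
    apply hratio.congr
    intro u
    rw [neg_div_neg_eq]
  exact HasDerivAt.lhopital_zero_atTop hderivx hderivF hg' hFx0 hF0 hdiv
end

section
/- Let α ∈ (0,2) and β < α + 1. Then lim_{x → 0^+} x^α · ∫_x^∞ e^{β r}(e^r − 1)^{−(α+1)} dr = 1/α. (This is the near-zero stable-like asymptotic of the tail of the Lamperti stable Lévy measure, used in the proofs of the creeping and regularity results.) -/
open MeasureTheory Set Filter

lemma exp_sub_one_pos {r : ℝ} (hr : 0 < r) : (0:ℝ) < Real.exp r - 1 := by
  have : (1:ℝ) < Real.exp r := by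
    have := Real.add_one_lt_exp (x := r) hr.ne'
    linarith
  linarith

/-- Continuity of the Lamperti stable density on `(0, ∞)`. -/
lemma lamperti_cont (α β : ℝ) :
    ContinuousOn (fun r : ℝ => Real.exp (β * r) * (Real.exp r - 1) ^ (-(α + 1))) (Ioi 0) := by
  refine ContinuousOn.mul ?_ ?_
  · exact (Real.continuous_exp.comp (continuous_const.mul continuous_id)).continuousOn
  · exact ContinuousOn.rpow_const (Real.continuous_exp.sub continuous_const).continuousOn
      (fun r hr => Or.inl (exp_sub_one_pos hr).ne')

/-- Integrability of the density on `(x, ∞)` for `x > 0`. -/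
lemma lamperti_int (α β : ℝ) (hα : 0 < α) (hβ : β < α + 1) {x : ℝ} (hx : 0 < x) :
    IntegrableOn (fun r : ℝ => Real.exp (β * r) * (Real.exp r - 1) ^ (-(α + 1))) (Ioi x) := by
  set C : ℝ := (1 - Real.exp (-x)) ^ (-(α + 1)) with hC
  have hb : 0 < α + 1 - β := by linarith
  have hg : IntegrableOn (fun r : ℝ => C * Real.exp (-(α + 1 - β) * r)) (Ioi x) :=
    (exp_neg_integrableOn_Ioi x hb).const_mul C
  apply Integrable.mono' hg
  · exact ((lamperti_cont α β).mono (Ioi_subset_Ioi hx.le)).aestronglyMeasurable measurableSet_Ioi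
  · filter_upwards [ae_restrict_mem measurableSet_Ioi] with r hr
    have hrx : x < r := hr
    have hr0 : 0 < r := hx.trans hrx
    have h1 : (0:ℝ) < Real.exp r - 1 := exp_sub_one_pos hr0
    have hfnn : 0 ≤ Real.exp (β * r) * (Real.exp r - 1) ^ (-(α + 1)) := by positivity
    rw [Real.norm_eq_abs, abs_of_nonneg hfnn]
    have hex : 0 < 1 - Real.exp (-x) := by
      have : Real.exp (-x) < 1 := Real.exp_lt_one_iff.mpr (by linarith)
      linarith
    have hlow : Real.exp r * (1 - Real.exp (-x)) ≤ Real.exp r - 1 := by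
      have h2 : Real.exp r * Real.exp (-x) = Real.exp (r - x) := by
        rw [← Real.exp_add]; ring_nf
      have h3 : (1:ℝ) ≤ Real.exp (r - x) := Real.one_le_exp (by linarith)
      nlinarith [Real.exp_pos r]
    have hmono : (Real.exp r - 1) ^ (-(α + 1)) ≤ (Real.exp r * (1 - Real.exp (-x))) ^ (-(α + 1)) :=
      Real.rpow_le_rpow_of_nonpos (by positivity) hlow (by linarith)
    have heq : (Real.exp r * (1 - Real.exp (-x))) ^ (-(α + 1))
        = Real.exp (-(α+1) * r) * C := by
      rw [Real.mul_rpow (Real.exp_pos r).le hex.le, ← Real.exp_mul, hC, mul_comm r]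
    calc Real.exp (β * r) * (Real.exp r - 1) ^ (-(α + 1))
        ≤ Real.exp (β * r) * (Real.exp (-(α+1) * r) * C) := by
          rw [← heq]; exact mul_le_mul_of_nonneg_left hmono (Real.exp_pos _).le
      _ = Real.exp (β * r) * Real.exp (-(α+1) * r) * C := by ring
      _ = C * Real.exp (-(α + 1 - β) * r) := by
          rw [← Real.exp_add]
          rw [show β * r + -(α + 1) * r = -(α + 1 - β) * r by ring]
          ring
  
/-- Near zero, the density behaves like `r ^ (-(α+1))`. -/
lemma lamperti_near_zero (α β : ℝ) :
    Tendsto (fun r : ℝ => (Real.exp (β * r) * (Real.exp r - 1) ^ (-(α + 1))) * r ^ (α + 1))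
      (nhdsWithin 0 (Ioi 0)) (nhds 1) := by
  have hslope : Tendsto (fun r : ℝ => (Real.exp r - 1) / r) (nhdsWithin 0 (Ioi 0)) (nhds 1) := by
    have h := (Real.hasDerivAt_exp 0)
    rw [hasDerivAt_iff_tendsto_slope] at h
    have h2 : Tendsto (slope Real.exp 0) (nhdsWithin 0 (Ioi 0)) (nhds 1) := by
      simpa [Real.exp_zero] using h.mono_left (nhdsWithin_mono _ (s := Ioi (0:ℝ)) (fun y hy => ne_of_gt hy))
    refine h2.congr' ?_
    filter_upwards [self_mem_nhdsWithin] with r hr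
    simp [slope_def_field, Real.exp_zero]
  have hinv : Tendsto (fun r : ℝ => r / (Real.exp r - 1)) (nhdsWithin 0 (Ioi 0)) (nhds 1) := by
    have := hslope.inv₀ one_ne_zero
    simpa using this.congr (fun r => by rw [inv_div])
  have hrpow : Tendsto (fun r : ℝ => (r / (Real.exp r - 1)) ^ (α + 1))
      (nhdsWithin 0 (Ioi 0)) (nhds 1) := by
    have hc : ContinuousAt (fun t : ℝ => t ^ (α + 1)) 1 :=
      Real.continuousAt_rpow_const 1 (α + 1) (Or.inl one_ne_zero)
    have := hc.tendsto.comp hinv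
    simpa [Function.comp_def] using this
  have hexp : Tendsto (fun r : ℝ => Real.exp (β * r)) (nhdsWithin 0 (Ioi 0)) (nhds 1) := by
    have : ContinuousAt (fun r : ℝ => Real.exp (β * r)) 0 :=
      (Real.continuous_exp.comp (continuous_const.mul continuous_id)).continuousAt
    simpa using this.tendsto.mono_left nhdsWithin_le_nhds
  have hmul := hexp.mul hrpow
  rw [mul_one] at hmul
  refine hmul.congr' ?_
  filter_upwards [self_mem_nhdsWithin] with r hr
  have hr0 : (0:ℝ) < r := hr
  have h1 : (0:ℝ) < Real.exp r - 1 := exp_sub_one_pos hr0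
  rw [Real.div_rpow hr0.le h1.le, Real.rpow_neg h1.le]
  field_simp

theorem lamperti_stable_tail_asymptotic_at_zero
    (α β : ℝ) (hα : α ∈ Set.Ioo (0:ℝ) 2) (hβ : β < α + 1) :
    Filter.Tendsto
      (fun x : ℝ => x ^ α * ∫ r in Set.Ioi x, Real.exp (β * r) * (Real.exp r - 1) ^ (-(α + 1)))
      (nhdsWithin 0 (Set.Ioi 0)) (nhds (1 / α)) := by
  obtain ⟨hα0, hα2⟩ := hα
  set f : ℝ → ℝ := fun r => Real.exp (β * r) * (Real.exp r - 1) ^ (-(α + 1)) with hf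
  rw [Metric.tendsto_nhds]
  intro ε hε
  set ε₁ : ℝ := ε * α / 4 with hε₁def
  have hε₁ : 0 < ε₁ := by positivity
  have hev := (Metric.tendsto_nhds.mp (lamperti_near_zero α β)) ε₁ hε₁
  obtain ⟨y, hy0, hysub⟩ := mem_nhdsGT_iff_exists_Ioc_subset.mp hev
  have hy0' : (0:ℝ) < y := hy0
  set C : ℝ := ∫ r in Ioi y, f r with hCdef
  have hC0 : 0 ≤ C := by
    apply setIntegral_nonneg measurableSet_Ioi
    intro r hr
    have h1 := exp_sub_one_pos (hy0'.trans hr)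
    have : 0 ≤ (Real.exp r - 1) ^ (-(α + 1)) := Real.rpow_nonneg h1.le _
    positivity
  set K : ℝ := y ^ (-α) / α + C with hKdef
  have hyα : 0 ≤ y ^ (-α) := Real.rpow_nonneg hy0'.le _
  have hx0tend : Tendsto (fun x : ℝ => x ^ α) (nhdsWithin 0 (Ioi 0)) (nhds 0) := by
    have h := (Real.continuousAt_rpow_const 0 α (Or.inr hα0.le)).tendsto.mono_left
      (nhdsWithin_le_nhds (s := Ioi (0:ℝ)))
    simpa [Real.zero_rpow hα0.ne'] using h
  have htend : Tendsto (fun x : ℝ => x ^ α * K) (nhdsWithin 0 (Ioi 0)) (nhds 0) := by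
    simpa using hx0tend.mul_const K
  have hev2 : ∀ᶠ x in nhdsWithin 0 (Ioi 0), x ^ α * K < ε / 2 :=
    htend.eventually_lt_const (by positivity)
  have hevy : ∀ᶠ x in nhdsWithin 0 (Ioi 0), x < y :=
    Filter.Tendsto.eventually_lt_const hy0' (tendsto_id.mono_left nhdsWithin_le_nhds)
  filter_upwards [self_mem_nhdsWithin, hevy, hev2] with x hx hxy hxK
  have hx0' : (0:ℝ) < x := hx
  have hxα : 0 < x ^ α := Real.rpow_pos_of_pos hx0' α
  -- split the integral
  have intIoi : IntegrableOn f (Ioi x) := lamperti_int α β hα0 hβ hx0'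
  have intIoc : IntegrableOn f (Ioc x y) := intIoi.mono_set Ioc_subset_Ioi_self
  have intIoiY : IntegrableOn f (Ioi y) := lamperti_int α β hα0 hβ hy0'
  have hsplit : ∫ r in Ioi x, f r = (∫ r in Ioc x y, f r) + C := by
    rw [hCdef, ← setIntegral_union (Ioc_disjoint_Ioi le_rfl) measurableSet_Ioi intIoc intIoiY,
      Ioc_union_Ioi_eq_Ioi hxy.le]
  set J : ℝ := ∫ r in Ioc x y, f r with hJdef
  set I : ℝ := ∫ r in Ioc x y, (r : ℝ) ^ (-(α + 1)) with hIdef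
  have hIval : I = (x ^ (-α) - y ^ (-α)) / α := by
    have h1 : ∫ r in x..y, (r:ℝ) ^ (-(α+1)) = ((y:ℝ) ^ (-(α+1)+1) - x ^ (-(α+1)+1)) / (-(α+1)+1) :=
      integral_rpow (Or.inr ⟨fun h => hα0.ne' (by linarith), by
        rw [Set.uIcc_of_le hxy.le]; exact fun h => absurd h.1 (not_le.mpr hx0')⟩)
    rw [intervalIntegral.integral_of_le hxy.le] at h1
    rw [hIdef, h1, show -(α + 1) + 1 = -α by ring]
    rw [show (y:ℝ) ^ (-α) - x ^ (-α) = -(x ^ (-α) - y ^ (-α)) by ring, neg_div_neg_eq]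
  -- integrability of the power function
  have hpow_int : IntegrableOn (fun r : ℝ => r ^ (-(α + 1))) (Ioc x y) := by
    have hcont : ContinuousOn (fun r : ℝ => r ^ (-(α + 1))) (Icc x y) :=
      ContinuousOn.rpow_const continuousOn_id
        (fun r hr => Or.inl (ne_of_gt (lt_of_lt_of_le hx0' hr.1)))
    exact hcont.integrableOn_Icc.mono_set Ioc_subset_Icc_self
  -- pointwise bounds
  have hpt : ∀ r ∈ Ioc x y, (1 - ε₁) * r ^ (-(α + 1)) ≤ f r ∧ f r ≤ (1 + ε₁) * r ^ (-(α + 1)) := by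
    intro r hr
    have hr0 : 0 < r := hx0'.trans hr.1
    have hmem : r ∈ Ioc (0:ℝ) y := ⟨hr0, hr.2⟩
    have hdist := hysub hmem
    rw [Set.mem_setOf_eq, Real.dist_eq, abs_lt] at hdist
    have hrpos : 0 < (r:ℝ) ^ (-(α + 1)) := Real.rpow_pos_of_pos hr0 _
    have hrpos' : 0 < (r:ℝ) ^ (α + 1) := Real.rpow_pos_of_pos hr0 _
    have hprod : (r:ℝ) ^ (α + 1) * r ^ (-(α + 1)) = 1 := by
      rw [← Real.rpow_add hr0, show α + 1 + -(α + 1) = 0 by ring, Real.rpow_zero]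
    have hfr : f r = (f r * r ^ (α + 1)) * r ^ (-(α + 1)) := by
      rw [mul_assoc, hprod, mul_one]
    have hk : f r * r ^ (α + 1)
        = Real.exp (β * r) * (Real.exp r - 1) ^ (-(α + 1)) * r ^ (α + 1) := by
      simp only [hf]
    constructor
    · rw [hfr]
      exact mul_le_mul_of_nonneg_right (by linarith [hdist.1, hk.ge, hk.le]) hrpos.le
    · rw [hfr]
      exact mul_le_mul_of_nonneg_right (by linarith [hdist.2, hk.ge, hk.le]) hrpos.le
  have hub : J ≤ (1 + ε₁) * I := by
    rw [hJdef, hIdef, ← MeasureTheory.integral_const_mul]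
    exact setIntegral_mono_on intIoc (hpow_int.const_mul _) measurableSet_Ioc
      (fun r hr => (hpt r hr).2)
  have hlb : (1 - ε₁) * I ≤ J := by
    rw [hJdef, hIdef, ← MeasureTheory.integral_const_mul]
    exact setIntegral_mono_on (hpow_int.const_mul _) intIoc measurableSet_Ioc
      (fun r hr => (hpt r hr).1)
  -- arithmetic
  set D : ℝ := x ^ α * y ^ (-α) with hDdef
  have hD0 : 0 ≤ D := by positivity
  have hDα : 0 ≤ D / α := by positivity
  have haI : x ^ α * I = (1 - D) / α := by
    rw [hIval, hDdef]
    have h1 : x ^ α * x ^ (-α) = 1 := by rw [← Real.rpow_add hx0']; simp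
    field_simp
    nlinarith [h1]
  have hxC : 0 ≤ x ^ α * C := by positivity
  have hf7 : D / α + x ^ α * C < ε / 2 := by
    have : x ^ α * K = D / α + x ^ α * C := by rw [hKdef, hDdef]; ring
    linarith [hxK, this ▸ hxK]
  have h8 : ε₁ / α = ε / 4 := by rw [hε₁def]; field_simp
  have hup2 : (1 + ε₁) * (x ^ α * I) ≤ 1 / α + ε / 4 - D / α := by
    rw [haI]
    have hq : 0 ≤ ε₁ * D / α := by positivity
    have hexp : (1 + ε₁) * ((1 - D) / α) = 1 / α + ε₁ / α - D / α - ε₁ * D / α := by ring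
    rw [hexp, h8]; linarith
  have hlo2 : 1 / α - ε / 4 - D / α ≤ (1 - ε₁) * (x ^ α * I) := by
    rw [haI]
    have hq : 0 ≤ ε₁ * D / α := by positivity
    have hexp : (1 - ε₁) * ((1 - D) / α) = 1 / α - ε₁ / α - D / α + ε₁ * D / α := by ring
    rw [hexp, h8]; linarith
  have hubJ : x ^ α * J ≤ (1 + ε₁) * (x ^ α * I) :=
    calc x ^ α * J ≤ x ^ α * ((1 + ε₁) * I) := mul_le_mul_of_nonneg_left hub hxα.le
      _ = (1 + ε₁) * (x ^ α * I) := by ring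
  have hlbJ : (1 - ε₁) * (x ^ α * I) ≤ x ^ α * J :=
    calc (1 - ε₁) * (x ^ α * I) = x ^ α * ((1 - ε₁) * I) := by ring
      _ ≤ x ^ α * J := mul_le_mul_of_nonneg_left hlb hxα.le
  rw [hsplit, Real.dist_eq, abs_lt]
  have heq : x ^ α * (J + C) = x ^ α * J + x ^ α * C := by ring
  constructor
  · linarith [hubJ, hup2, hlbJ, hlo2, hf7, hxC, hDα, heq]
  · linarith [hubJ, hup2, hlbJ, hlo2, hf7, hxC, hDα, heq]
end

section
/- Let α ∈ (1,2) and ρ < α + 1. Define N(u) = ∫_u^∞ e^{ρ r}(e^r − 1)^{−(α+1)} dr for u > 0 and H(x) = ∫_0^x ∫_y^1 N(u) du dy for x ∈ (0,1]. Then lim_{x → 0^+} x^{α−2} H(x) = 1/((2−α)(α−1)α), and ∫_0^1 x·N(x)/H(x) dx = +∞. (By Kyprianou–Loeffen's criterion, this divergence shows that a Lamperti stable process with index α ∈ (1,2) does not creep upwards.) -/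
open MeasureTheory Set Filter

lemma aux_head (β c : ℝ) (hβ : -1 < β) (f : ℝ → ℝ)
    (hint : IntegrableOn f (Ioc (0:ℝ) 1))
    (hf : Tendsto (fun y : ℝ => y ^ (-β) * f y) (nhdsWithin 0 (Ioi 0)) (nhds c)) :
    Tendsto (fun x : ℝ => x ^ (-β - 1) * ∫ y in Ioc (0:ℝ) x, f y)
      (nhdsWithin 0 (Ioi 0)) (nhds (c / (β + 1))) := by
  have hβ1 : 0 < β + 1 := by linarith
  rw [Metric.tendsto_nhdsWithin_nhds] at hf ⊢
  intro ε hε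
  set ε' : ℝ := ε * (β + 1) / 2 with hε'def
  have hε' : 0 < ε' := by positivity
  obtain ⟨δ₀, hδ₀, hbound⟩ := hf _ hε'
  refine ⟨min δ₀ 1, lt_min hδ₀ one_pos, fun x hx hxd => ?_⟩
  have hx0 : (0:ℝ) < x := hx
  rw [Real.dist_eq, sub_zero, abs_of_pos hx0] at hxd
  have hxδ₀ : x < δ₀ := lt_of_lt_of_le hxd (min_le_left _ _)
  have hx1 : x ≤ 1 := le_of_lt (lt_of_lt_of_le hxd (min_le_right _ _))
  -- pointwise bound on Ioc 0 x
  have hpt : ∀ y ∈ Ioc (0:ℝ) x, |f y - c * y ^ β| ≤ ε' * y ^ β := by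
    intro y hy
    have hy0 : (0:ℝ) < y := hy.1
    have hyd : dist y 0 < δ₀ := by
      rw [Real.dist_eq, sub_zero, abs_of_pos hy0]; exact lt_of_le_of_lt hy.2 hxδ₀
    have := hbound hy0 hyd
    rw [Real.dist_eq] at this
    have hne : y ^ β ≠ 0 := (Real.rpow_pos_of_pos hy0 β).ne'
    have hid : f y - c * y ^ β = y ^ β * (y ^ (-β) * f y - c) := by
      rw [mul_sub, ← mul_assoc, ← Real.rpow_add hy0]
      ring_nf
      rw [Real.rpow_zero]
      ring
    rw [hid, abs_mul, abs_of_pos (Real.rpow_pos_of_pos hy0 β), mul_comm]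
    exact mul_le_mul_of_nonneg_right this.le (Real.rpow_pos_of_pos hy0 β).le
  -- integrability
  have hix : IntegrableOn f (Ioc 0 x) := hint.mono_set (Ioc_subset_Ioc_right hx1)
  have hrp : IntegrableOn (fun y : ℝ => y ^ β) (Ioc 0 x) := by
    have := intervalIntegral.intervalIntegrable_rpow' (a := 0) (b := x) hβ
    rwa [intervalIntegrable_iff, uIoc_of_le hx0.le] at this
  -- value of ∫ y^β
  have hJ : ∫ y in Ioc (0:ℝ) x, y ^ β = x ^ (β + 1) / (β + 1) := by
    rw [← intervalIntegral.integral_of_le hx0.le, integral_rpow (Or.inl hβ),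
      Real.zero_rpow hβ1.ne', sub_zero]
  have hxinv : x ^ (-β - 1) * x ^ (β + 1) = 1 := by
    rw [← Real.rpow_add hx0, show (-β - 1) + (β + 1) = 0 by ring, Real.rpow_zero]
  set I : ℝ := ∫ y in Ioc (0:ℝ) x, f y with hIdef
  have hdiff : |I - c * (x ^ (β + 1) / (β + 1))| ≤ ε' * (x ^ (β + 1) / (β + 1)) := by
    have h1 : I - c * (x ^ (β + 1) / (β + 1)) = ∫ y in Ioc (0:ℝ) x, (f y - c * y ^ β) := by
      rw [integral_sub hix (hrp.const_mul c), integral_const_mul, hJ]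
    rw [h1]
    calc |∫ y in Ioc (0:ℝ) x, (f y - c * y ^ β)|
        ≤ ∫ y in Ioc (0:ℝ) x, |f y - c * y ^ β| := by
          simpa [Real.norm_eq_abs] using
            norm_integral_le_integral_norm (μ := volume.restrict (Ioc (0:ℝ) x))
              (fun y => f y - c * y ^ β)
      _ ≤ ∫ y in Ioc (0:ℝ) x, ε' * y ^ β := by
          refine setIntegral_mono_on ((hix.sub (hrp.const_mul c)).abs) (hrp.const_mul ε')
            measurableSet_Ioc hpt
      _ = ε' * (x ^ (β + 1) / (β + 1)) := by rw [integral_const_mul, hJ]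
  rw [Real.dist_eq]
  have key : x ^ (-β - 1) * I - c / (β + 1) = x ^ (-β - 1) * (I - c * (x ^ (β + 1) / (β + 1))) := by
    rw [mul_sub]
    congr 1
    rw [show x ^ (-β - 1) * (c * (x ^ (β + 1) / (β + 1)))
        = (x ^ (-β - 1) * x ^ (β + 1)) * (c / (β + 1)) by ring, hxinv, one_mul]
  rw [key, abs_mul, abs_of_pos (Real.rpow_pos_of_pos hx0 _)]
  calc x ^ (-β - 1) * |I - c * (x ^ (β + 1) / (β + 1))|
      ≤ x ^ (-β - 1) * (ε' * (x ^ (β + 1) / (β + 1))) :=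
        mul_le_mul_of_nonneg_left hdiff (Real.rpow_pos_of_pos hx0 _).le
    _ = (x ^ (-β - 1) * x ^ (β + 1)) * (ε' / (β + 1)) := by ring
    _ = ε' / (β + 1) := by rw [hxinv, one_mul]
    _ < ε := by rw [hε'def]; rw [div_lt_iff₀ hβ1]; nlinarith

lemma aux_tail (γ c : ℝ) (hγ : γ < -1) (f : ℝ → ℝ)
    (hint : ∀ a : ℝ, 0 < a → IntegrableOn f (Ioc a 1))
    (hf : Tendsto (fun u : ℝ => u ^ (-γ) * f u) (nhdsWithin 0 (Ioi 0)) (nhds c)) :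
    Tendsto (fun y : ℝ => y ^ (-γ - 1) * ∫ u in Ioc y 1, f u)
      (nhdsWithin 0 (Ioi 0)) (nhds (c / (-γ - 1))) := by
  set m : ℝ := -γ - 1 with hmdef
  have hm : 0 < m := by simp only [hmdef]; linarith
  rw [Metric.tendsto_nhdsWithin_nhds] at hf ⊢
  intro ε hε
  set ε' : ℝ := ε * m / 4 with hε'def
  have hε' : 0 < ε' := by positivity
  obtain ⟨δ₀, hδ₀, hbound⟩ := hf _ hε'
  set δ : ℝ := min (δ₀ / 2) 1 with hδdef
  have hδ0 : 0 < δ := lt_min (by linarith) one_pos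
  have hδ1 : δ ≤ 1 := min_le_right _ _
  have hδδ₀ : δ < δ₀ := lt_of_le_of_lt (min_le_left _ _) (by linarith)
  set K : ℝ := ∫ u in Ioc δ 1, f u with hKdef
  set C : ℝ := |K - c * δ ^ (γ + 1) / m| + 1 with hCdef
  have hC : 0 < C := by positivity
  have hpow : (0:ℝ) < (ε / (2 * C)) ^ (1 / m) := Real.rpow_pos_of_pos (by positivity) _
  refine ⟨min δ ((ε / (2 * C)) ^ (1 / m)), lt_min hδ0 hpow, fun y hy hyd => ?_⟩
  have hy0 : (0:ℝ) < y := hy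
  rw [Real.dist_eq, sub_zero, abs_of_pos hy0] at hyd
  have hyδ : y < δ := lt_of_lt_of_le hyd (min_le_left _ _)
  have hym : y ^ m < ε / (2 * C) := by
    have h1 : y ^ m < ((ε / (2 * C)) ^ (1 / m)) ^ m :=
      Real.rpow_lt_rpow hy0.le (lt_of_lt_of_le hyd (min_le_right _ _)) hm
    rwa [← Real.rpow_mul (by positivity), one_div_mul_cancel hm.ne', Real.rpow_one] at h1
  have hyδ₀ : y < δ₀ := hyδ.trans hδδ₀
  -- pointwise bound on Ioc y δ
  have hpt : ∀ u ∈ Ioc y δ, |f u - c * u ^ γ| ≤ ε' * u ^ γ := by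
    intro u hu
    have hu0 : (0:ℝ) < u := hy0.trans hu.1
    have hud : dist u 0 < δ₀ := by
      rw [Real.dist_eq, sub_zero, abs_of_pos hu0]; exact lt_of_le_of_lt hu.2 hδδ₀
    have := hbound hu0 hud
    rw [Real.dist_eq] at this
    have hid : f u - c * u ^ γ = u ^ γ * (u ^ (-γ) * f u - c) := by
      rw [mul_sub, ← mul_assoc, ← Real.rpow_add hu0]
      ring_nf
      rw [Real.rpow_zero]
      ring
    rw [hid, abs_mul, abs_of_pos (Real.rpow_pos_of_pos hu0 γ), mul_comm]
    exact mul_le_mul_of_nonneg_right this.le (Real.rpow_pos_of_pos hu0 γ).le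
  -- integrability
  have hiy : IntegrableOn f (Ioc y 1) := hint y hy0
  have hiyδ : IntegrableOn f (Ioc y δ) := hiy.mono_set (Ioc_subset_Ioc_right hδ1)
  have hiδ1 : IntegrableOn f (Ioc δ 1) := hiy.mono_set (Ioc_subset_Ioc_left hyδ.le)
  have hrp : IntegrableOn (fun u : ℝ => u ^ γ) (Ioc y δ) := by
    have h0 : (0:ℝ) ∉ Set.uIcc y δ := by
      rw [Set.uIcc_of_le hyδ.le, Set.mem_Icc]
      push_neg
      intro h; linarith
    have := intervalIntegral.intervalIntegrable_rpow (μ := volume) (r := γ)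
      (a := y) (b := δ) (Or.inr h0)
    rwa [intervalIntegrable_iff, uIoc_of_le hyδ.le] at this
  -- split the integral
  have hsplit : (∫ u in Ioc y 1, f u) = (∫ u in Ioc y δ, f u) + K := by
    rw [hKdef, ← setIntegral_union (Set.Ioc_disjoint_Ioc_of_le le_rfl)
      measurableSet_Ioc hiyδ hiδ1, Set.Ioc_union_Ioc_eq_Ioc hyδ.le hδ1]
  set E : ℝ := (y ^ (γ + 1) - δ ^ (γ + 1)) / m with hEdef
  have hJ : ∫ u in Ioc y δ, u ^ γ = E := by
    have h0 : (0:ℝ) ∉ Set.uIcc y δ := by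
      rw [Set.uIcc_of_le hyδ.le, Set.mem_Icc]
      push_neg
      intro h; linarith
    rw [← intervalIntegral.integral_of_le hyδ.le, integral_rpow (Or.inr ⟨hγ.ne, h0⟩), hEdef, hmdef]
    have hne : γ + 1 ≠ 0 := by linarith
    rw [div_eq_div_iff hne (by linarith)]
    ring
  have hE0 : 0 ≤ E := by
    rw [hEdef]
    apply div_nonneg _ hm.le
    have := Real.rpow_le_rpow_of_nonpos hy0 hyδ.le (by linarith : γ + 1 ≤ 0)
    linarith
  set A : ℝ := ∫ u in Ioc y δ, f u with hAdef
  have hdiff : |A - c * E| ≤ ε' * E := by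
    have h1 : A - c * E = ∫ u in Ioc y δ, (f u - c * u ^ γ) := by
      rw [integral_sub hiyδ (hrp.const_mul c), integral_const_mul, hJ]
    rw [h1]
    calc |∫ u in Ioc y δ, (f u - c * u ^ γ)|
        ≤ ∫ u in Ioc y δ, |f u - c * u ^ γ| := by
          simpa [Real.norm_eq_abs] using
            norm_integral_le_integral_norm (μ := volume.restrict (Ioc y δ))
              (fun u => f u - c * u ^ γ)
      _ ≤ ∫ u in Ioc y δ, ε' * u ^ γ :=
          setIntegral_mono_on ((hiyδ.sub (hrp.const_mul c)).abs) (hrp.const_mul ε')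
            measurableSet_Ioc hpt
      _ = ε' * E := by rw [integral_const_mul, hJ]
  have hyminv : y ^ m * y ^ (γ + 1) = 1 := by
    rw [← Real.rpow_add hy0, hmdef, show -γ - 1 + (γ + 1) = 0 by ring, Real.rpow_zero]
  have h2 : y ^ m * E = (1 - y ^ m * δ ^ (γ + 1)) / m := by
    have : y ^ m * E = (y ^ m * y ^ (γ + 1) - y ^ m * δ ^ (γ + 1)) / m := by
      rw [hEdef]; ring
    rw [this, hyminv]
  have hyE : y ^ m * E ≤ 1 / m := by
    rw [h2]
    have ha : 0 ≤ y ^ m * δ ^ (γ + 1) :=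
      mul_nonneg (Real.rpow_nonneg hy0.le m) (Real.rpow_nonneg hδ0.le _)
    apply div_le_div_of_nonneg_right ?_ hm.le
    linarith
  have hdecomp : y ^ m * ((∫ u in Ioc y 1, f u)) - c / m
      = y ^ m * (A - c * E) + y ^ m * (K - c * δ ^ (γ + 1) / m) := by
    rw [hsplit]
    linear_combination c * h2
  rw [Real.dist_eq, hdecomp]
  have hym0 : (0:ℝ) ≤ y ^ m := Real.rpow_nonneg hy0.le m
  have habs2 : |y ^ m * (K - c * δ ^ (γ + 1) / m)| < ε / 2 := by
    rw [abs_mul, abs_of_nonneg hym0]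
    calc y ^ m * |K - c * δ ^ (γ + 1) / m| ≤ y ^ m * C := by
          rw [hCdef]; exact mul_le_mul_of_nonneg_left (by linarith [abs_nonneg (K - c * δ ^ (γ + 1) / m)]) hym0
      _ < (ε / (2 * C)) * C := by
          exact mul_lt_mul_of_pos_right hym hC
      _ = ε / 2 := by field_simp
  have habs1 : |y ^ m * (A - c * E)| ≤ ε / 4 := by
    rw [abs_mul, abs_of_nonneg hym0]
    calc y ^ m * |A - c * E| ≤ y ^ m * (ε' * E) := mul_le_mul_of_nonneg_left hdiff hym0
      _ = ε' * (y ^ m * E) := by ring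
      _ ≤ ε' * (1 / m) := mul_le_mul_of_nonneg_left hyE hε'.le
      _ = ε / 4 := by rw [hε'def]; field_simp
  calc |y ^ m * (A - c * E) + y ^ m * (K - c * δ ^ (γ + 1) / m)|
      ≤ |y ^ m * (A - c * E)| + |y ^ m * (K - c * δ ^ (γ + 1) / m)| := abs_add_le _ _
    _ < ε := by linarith

theorem lamperti_stable_no_upward_creeping
    (α ρ : ℝ) (hα : α ∈ Set.Ioo (1:ℝ) 2) (hρ : ρ < α + 1)
    (N H : ℝ → ℝ)
    (hN : ∀ u : ℝ, N u = ∫ r in Set.Ioi u, Real.exp (ρ * r) * (Real.exp r - 1) ^ (-(α + 1)))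
    (hH : ∀ x : ℝ, H x = ∫ y in Set.Ioc (0:ℝ) x, ∫ u in Set.Ioc y 1, N u) :
    Filter.Tendsto (fun x : ℝ => x ^ (α - 2) * H x) (nhdsWithin 0 (Set.Ioi 0))
        (nhds (1 / ((2 - α) * (α - 1) * α))) ∧
    ∫⁻ x in Set.Ioc (0:ℝ) 1, ENNReal.ofReal (x * N x / H x) = ⊤ := by
  obtain ⟨hα1, hα2⟩ := hα
  set ℓ : ℝ → ℝ := fun r => Real.exp (ρ * r) * (Real.exp r - 1) ^ (-(α + 1)) with hℓdef
  -- integrability of ℓ on Ioi a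
  have hℓint : ∀ a : ℝ, 0 < a → IntegrableOn ℓ (Ioi a) := by
    intro a ha
    have hb : 0 < α + 1 - ρ := by linarith
    have hea : Real.exp (-a) < 1 := by
      rw [← Real.exp_zero]; exact Real.exp_lt_exp.mpr (by linarith)
    have h1 : 0 < 1 - Real.exp (-a) := by linarith
    set C : ℝ := (1 - Real.exp (-a)) ^ (-(α + 1)) with hCdef
    have hmeas : AEStronglyMeasurable ℓ (volume.restrict (Ioi a)) := by
      have hcont : ContinuousOn ℓ (Ioi a) := by
        apply ContinuousOn.mul
        · exact (Real.continuous_exp.comp (continuous_const.mul continuous_id)).continuousOn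
        · apply ContinuousOn.rpow_const
          · exact (Real.continuous_exp.sub continuous_const).continuousOn
          · intro r hr
            left
            have : (0:ℝ) < r := ha.trans hr
            nlinarith [Real.add_one_le_exp r]
      exact hcont.aestronglyMeasurable measurableSet_Ioi
    apply Integrable.mono' (((exp_neg_integrableOn_Ioi a hb)).const_mul C) hmeas
    filter_upwards [ae_restrict_mem measurableSet_Ioi] with r hr
    have hr0 : 0 < r := ha.trans hr
    have he : 0 < Real.exp r - 1 := by nlinarith [Real.add_one_le_exp r]
    have h2 : (1 - Real.exp (-a)) * Real.exp r ≤ Real.exp r - 1 := by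
      have h3 : (1:ℝ) ≤ Real.exp (r - a) := Real.one_le_exp (by linarith [le_of_lt (show a < r from hr)])
      have h4 : Real.exp (-a) * Real.exp r = Real.exp (r - a) := by
        rw [← Real.exp_add]; ring_nf
      nlinarith
    have h5 : (Real.exp r - 1) ^ (-(α + 1)) ≤ ((1 - Real.exp (-a)) * Real.exp r) ^ (-(α + 1)) :=
      Real.rpow_le_rpow_of_nonpos (by positivity) h2 (by linarith)
    have h6 : ((1 - Real.exp (-a)) * Real.exp r) ^ (-(α + 1))
        = C * Real.exp (-(α + 1) * r) := by
      rw [Real.mul_rpow h1.le (Real.exp_pos r).le, hCdef, ← Real.exp_mul, mul_comm r]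
    have hℓr : ℓ r = Real.exp (ρ * r) * (Real.exp r - 1) ^ (-(α + 1)) := rfl
    rw [Real.norm_eq_abs, hℓr, abs_of_nonneg (by positivity)]
    calc Real.exp (ρ * r) * (Real.exp r - 1) ^ (-(α + 1))
        ≤ Real.exp (ρ * r) * (C * Real.exp (-(α + 1) * r)) := by
          rw [← h6]; exact mul_le_mul_of_nonneg_left h5 (Real.exp_pos _).le
      _ = C * Real.exp (-(α + 1 - ρ) * r) := by
          rw [mul_comm (Real.exp (ρ * r)), mul_assoc, ← Real.exp_add,
            show -(α + 1) * r + ρ * r = -(α + 1 - ρ) * r by ring]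
  have hℓnonneg : ∀ r : ℝ, 0 < r → 0 ≤ ℓ r := by
    intro r hr
    apply mul_nonneg (Real.exp_pos _).le
    apply Real.rpow_nonneg
    nlinarith [Real.add_one_le_exp r]
  have hNnonneg : ∀ u : ℝ, 0 < u → 0 ≤ N u := by
    intro u hu
    rw [hN]
    exact setIntegral_nonneg measurableSet_Ioi fun r hr => hℓnonneg r (hu.trans hr)
  have hNanti : ∀ u v : ℝ, 0 < u → u ≤ v → N v ≤ N u := by
    intro u v hu huv
    rw [hN u, hN v]
    apply setIntegral_mono_set (hℓint u hu) ?_ (HasSubset.Subset.eventuallyLE (Ioi_subset_Ioi huv))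
    filter_upwards [ae_restrict_mem measurableSet_Ioi] with r hr using hℓnonneg r (hu.trans hr)
  -- asymptotics of ℓ near 0
  have hℓasym : Tendsto (fun r : ℝ => r ^ (α + 1) * ℓ r) (nhdsWithin 0 (Ioi 0)) (nhds 1) := by
    have h1 : Tendsto (fun r : ℝ => (Real.exp r - 1) / r) (nhdsWithin 0 (Ioi 0)) (nhds 1) := by
      have hd := Real.hasDerivAt_exp 0
      rw [hasDerivAt_iff_tendsto_slope] at hd
      have h := hd.mono_left (nhdsWithin_mono 0 (fun x (hx : x ∈ Ioi (0:ℝ)) => ne_of_gt hx))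
      rw [Real.exp_zero] at h
      apply h.congr
      intro r
      rw [slope_def_field, Real.exp_zero, sub_zero]
    have h2 : Tendsto (fun r : ℝ => r / (Real.exp r - 1)) (nhdsWithin 0 (Ioi 0)) (nhds 1) := by
      have := h1.inv₀ one_ne_zero
      rw [inv_one] at this
      apply this.congr
      intro r
      rw [inv_div]
    have h3 : Tendsto (fun r : ℝ => (r / (Real.exp r - 1)) ^ (α + 1))
        (nhdsWithin 0 (Ioi 0)) (nhds 1) := by
      have hc : ContinuousAt (fun t : ℝ => t ^ (α + 1)) 1 :=
        Real.continuousAt_rpow_const 1 (α + 1) (Or.inl one_ne_zero)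
      have := hc.tendsto.comp h2
      simpa [Real.one_rpow, Function.comp_def] using this
    have h4 : Tendsto (fun r : ℝ => Real.exp (ρ * r)) (nhdsWithin 0 (Ioi 0)) (nhds 1) := by
      have hc : Continuous fun r : ℝ => Real.exp (ρ * r) :=
        Real.continuous_exp.comp (continuous_const.mul continuous_id)
      have := (hc.tendsto 0).mono_left (nhdsWithin_le_nhds (s := Ioi (0:ℝ)))
      simpa using this
    have hmul := h4.mul h3
    rw [one_mul] at hmul
    apply hmul.congr'
    filter_upwards [self_mem_nhdsWithin] with r hr
    have hr0 : (0:ℝ) < r := hr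
    have he : 0 < Real.exp r - 1 := by nlinarith [Real.add_one_le_exp r]
    have hℓr : ℓ r = Real.exp (ρ * r) * (Real.exp r - 1) ^ (-(α + 1)) := rfl
    rw [Real.div_rpow hr0.le he.le, hℓr, Real.rpow_neg he.le]
    ring
  -- u^α tends to 0
  have hpow0 : Tendsto (fun u : ℝ => u ^ α) (nhdsWithin 0 (Ioi 0)) (nhds 0) := by
    have hc : ContinuousAt (fun t : ℝ => t ^ α) 0 :=
      Real.continuousAt_rpow_const 0 α (Or.inr (by linarith))
    have := hc.tendsto.mono_left (nhdsWithin_le_nhds (s := Ioi (0:ℝ)))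
    simpa [Real.zero_rpow (by linarith : α ≠ 0)] using this
  -- asymptotics of N
  have hNasym : Tendsto (fun u : ℝ => u ^ α * N u) (nhdsWithin 0 (Ioi 0)) (nhds (1 / α)) := by
    have hγ : -(α + 1) < -1 := by linarith
    have hbase : Tendsto (fun u : ℝ => u ^ (-(-(α + 1))) * ℓ u) (nhdsWithin 0 (Ioi 0)) (nhds 1) := by
      rw [show -(-(α + 1)) = α + 1 by ring]; exact hℓasym
    have ht := aux_tail (-(α + 1)) 1 hγ ℓ
      (fun a ha => (hℓint a ha).mono_set Ioc_subset_Ioi_self) hbase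
    rw [show -(-(α + 1)) - 1 = α by ring] at ht
    have hsplit : ∀ u : ℝ, 0 < u → u ≤ 1 → N u = (∫ r in Ioc u 1, ℓ r) + N 1 := by
      intro u hu hu1
      have hdisj : Disjoint (Ioc u 1) (Ioi (1:ℝ)) := by
        rw [Set.disjoint_left]
        rintro x ⟨_, hx1⟩ hx1'
        exact absurd hx1' (not_lt.mpr hx1)
      rw [hN u, hN 1, ← setIntegral_union hdisj measurableSet_Ioi
        ((hℓint u hu).mono_set Ioc_subset_Ioi_self) (hℓint 1 one_pos),
        Set.Ioc_union_Ioi_eq_Ioi hu1]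
    have hsum := ht.add (hpow0.mul_const (N 1))
    rw [zero_mul, add_zero] at hsum
    apply hsum.congr'
    have h01 : Ioo (0:ℝ) 1 ∈ nhdsWithin (0:ℝ) (Ioi 0) :=
      Ioo_mem_nhdsGT_of_mem ⟨le_refl 0, one_pos⟩
    filter_upwards [h01] with u hu
    rw [hsplit u hu.1 hu.2.le]
    ring
  -- integrability of N on Ioc a 1
  have hNint : ∀ a : ℝ, 0 < a → IntegrableOn N (Ioc a 1) := by
    intro a ha
    have hmeas : AEMeasurable N (volume.restrict (Ioc a 1)) := by
      apply aemeasurable_restrict_of_antitoneOn measurableSet_Ioc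
      intro u hu v hv huv
      exact hNanti u v (ha.trans_le hu.1.le) huv
    apply Integrable.mono' (integrableOn_const (C := N a) measure_Ioc_lt_top.ne)
      hmeas.aestronglyMeasurable
    filter_upwards [ae_restrict_mem measurableSet_Ioc] with u hu
    rw [Real.norm_eq_abs, abs_of_nonneg (hNnonneg u (ha.trans hu.1))]
    exact hNanti a u ha hu.1.le
  -- asymptotics of G
  set G : ℝ → ℝ := fun y => ∫ u in Ioc y 1, N u with hGdef
  have hGasym : Tendsto (fun y : ℝ => y ^ (α - 1) * G y) (nhdsWithin 0 (Ioi 0))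
      (nhds (1 / α / (α - 1))) := by
    have hγ : -α < -1 := by linarith
    have hbase : Tendsto (fun u : ℝ => u ^ (-(-α)) * N u) (nhdsWithin 0 (Ioi 0)) (nhds (1 / α)) := by
      rw [show -(-α) = α by ring]; exact hNasym
    have := aux_tail (-α) (1 / α) hγ N hNint hbase
    rwa [show -(-α) - 1 = α - 1 by ring] at this
  -- G properties
  have hGnonneg : ∀ y : ℝ, 0 < y → 0 ≤ G y := fun y hy =>
    setIntegral_nonneg measurableSet_Ioc fun u hu => hNnonneg u (hy.trans hu.1)
  have hGanti : ∀ y z : ℝ, 0 < y → y ≤ z → G z ≤ G y := by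
    intro y z hy hyz
    apply setIntegral_mono_set (hNint y hy) ?_
      (HasSubset.Subset.eventuallyLE (Ioc_subset_Ioc_left hyz))
    filter_upwards [ae_restrict_mem measurableSet_Ioc] with u hu using hNnonneg u (hy.trans hu.1)
  -- integrability of G on Ioc 0 1
  have hGint : IntegrableOn G (Ioc (0:ℝ) 1) := by
    set c₁ : ℝ := 1 / α / (α - 1) with hc₁def
    have hev : ∀ᶠ y in nhdsWithin (0:ℝ) (Ioi 0), y ^ (α - 1) * G y < c₁ + 1 :=
      hGasym.eventually_lt_const (by linarith)
    rw [eventually_nhdsWithin_iff, Metric.eventually_nhds_iff] at hev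
    obtain ⟨δ, hδ0, hδ⟩ := hev
    set b : ℝ := min (δ / 2) 1 with hbdef
    have hb0 : 0 < b := lt_min (by linarith) one_pos
    have hb1 : b ≤ 1 := min_le_right _ _
    have hpart1 : IntegrableOn G (Ioc 0 b) := by
      have hrint : IntegrableOn (fun y : ℝ => (c₁ + 1) * y ^ (1 - α)) (Ioc 0 b) := by
        have := intervalIntegral.intervalIntegrable_rpow' (a := 0) (b := b)
          (by linarith : (-1:ℝ) < 1 - α)
        rw [intervalIntegrable_iff, uIoc_of_le hb0.le] at this
        exact this.const_mul _
      have hmeas : AEMeasurable G (volume.restrict (Ioc 0 b)) := by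
        apply aemeasurable_restrict_of_antitoneOn measurableSet_Ioc
        intro u hu v hv huv
        exact hGanti u v hu.1 huv
      apply Integrable.mono' hrint hmeas.aestronglyMeasurable
      filter_upwards [ae_restrict_mem measurableSet_Ioc] with y hy
      have hy0 : 0 < y := hy.1
      have hyδ : dist y 0 < δ := by
        rw [Real.dist_eq, sub_zero, abs_of_pos hy0]
        calc y ≤ b := hy.2
          _ ≤ δ / 2 := min_le_left _ _
          _ < δ := by linarith
      have hbnd := hδ hyδ hy0
      rw [Real.norm_eq_abs, abs_of_nonneg (hGnonneg y hy0)]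
      have hinv : y ^ (1 - α) * y ^ (α - 1) = 1 := by
        rw [← Real.rpow_add hy0, show (1 - α) + (α - 1) = 0 by ring, Real.rpow_zero]
      calc G y = (y ^ (1 - α) * y ^ (α - 1)) * G y := by rw [hinv, one_mul]
        _ = y ^ (1 - α) * (y ^ (α - 1) * G y) := by ring
        _ ≤ y ^ (1 - α) * (c₁ + 1) := by
            exact mul_le_mul_of_nonneg_left hbnd.le (Real.rpow_nonneg hy0.le _)
        _ = (c₁ + 1) * y ^ (1 - α) := by ring
    have hpart2 : IntegrableOn G (Ioc b 1) := by
      have hmeas : AEMeasurable G (volume.restrict (Ioc b 1)) := by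
        apply aemeasurable_restrict_of_antitoneOn measurableSet_Ioc
        intro u hu v hv huv
        exact hGanti u v (hb0.trans hu.1) huv
      apply Integrable.mono' (integrableOn_const (C := G b) measure_Ioc_lt_top.ne)
        hmeas.aestronglyMeasurable
      filter_upwards [ae_restrict_mem measurableSet_Ioc] with u hu
      rw [Real.norm_eq_abs, abs_of_nonneg (hGnonneg u (hb0.trans hu.1))]
      exact hGanti b u hb0 hu.1.le
    have := hpart1.union hpart2
    rwa [Set.Ioc_union_Ioc_eq_Ioc hb0.le hb1] at this
  -- the limit for H
  have hHlim : Tendsto (fun x : ℝ => x ^ (α - 2) * H x) (nhdsWithin 0 (Ioi 0))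
      (nhds (1 / ((2 - α) * (α - 1) * α))) := by
    have hβ : (-1:ℝ) < 1 - α := by linarith
    have hbase : Tendsto (fun y : ℝ => y ^ (-(1 - α)) * G y) (nhdsWithin 0 (Ioi 0))
        (nhds (1 / α / (α - 1))) := by
      rw [show -(1 - α) = α - 1 by ring]; exact hGasym
    have := aux_head (1 - α) (1 / α / (α - 1)) hβ G hGint hbase
    rw [show -(1 - α) - 1 = α - 2 by ring] at this
    have hval : 1 / α / (α - 1) / ((1 - α) + 1) = 1 / ((2 - α) * (α - 1) * α) := by
      rw [show (1 - α) + 1 = 2 - α by ring]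
      have h1 : α ≠ 0 := by linarith
      have h2 : α - 1 ≠ 0 := by linarith
      have h3 : (2:ℝ) - α ≠ 0 := by linarith
      field_simp
    rw [hval] at this
    apply this.congr
    intro x
    rw [hH x]
  refine ⟨hHlim, ?_⟩
  set L : ℝ := 1 / ((2 - α) * (α - 1) * α) with hLdef
  have hLpos : 0 < L := by
    rw [hLdef]
    exact div_pos one_pos (mul_pos (mul_pos (by linarith) (by linarith)) (by linarith))
  have hev1 : ∀ᶠ x in nhdsWithin (0:ℝ) (Ioi 0), x ^ (α - 2) * H x < 3 * L / 2 :=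
    hHlim.eventually_lt_const (by linarith)
  have hev2 : ∀ᶠ x in nhdsWithin (0:ℝ) (Ioi 0), L / 2 < x ^ (α - 2) * H x :=
    hHlim.eventually_const_lt (by linarith)
  have hev3 : ∀ᶠ x in nhdsWithin (0:ℝ) (Ioi 0), 1 / (2 * α) < x ^ α * N x := by
    apply hNasym.eventually_const_lt
    rw [div_lt_div_iff₀ (by linarith) (by linarith)]
    nlinarith
  have hev := (hev1.and hev2).and hev3
  rw [eventually_nhdsWithin_iff, Metric.eventually_nhds_iff] at hev
  obtain ⟨δ, hδ0, hδ⟩ := hev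
  set d : ℝ := min (δ / 2) 1 with hddef
  have hd0 : 0 < d := lt_min (by linarith) one_pos
  have hd1 : d ≤ 1 := min_le_right _ _
  set c₂ : ℝ := 1 / (3 * α * L) with hc₂def
  have hc₂ : 0 < c₂ := by
    rw [hc₂def]
    exact div_pos one_pos (mul_pos (mul_pos three_pos (by linarith)) hLpos)
  have hkey : ∀ x ∈ Ioo (0:ℝ) d, ENNReal.ofReal (c₂ * x⁻¹) ≤ ENNReal.ofReal (x * N x / H x) := by
    intro x hx
    apply ENNReal.ofReal_le_ofReal
    have hx0 : 0 < x := hx.1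
    have hxδ : dist x 0 < δ := by
      rw [Real.dist_eq, sub_zero, abs_of_pos hx0]
      calc x < d := hx.2
        _ ≤ δ / 2 := min_le_left _ _
        _ < δ := by linarith
    obtain ⟨⟨hH1, hH2⟩, hN1⟩ := hδ hxδ hx0
    have hxpow2 : (0:ℝ) < x ^ (2 - α) := Real.rpow_pos_of_pos hx0 _
    have hxinv2 : x ^ (2 - α) * x ^ (α - 2) = 1 := by
      rw [← Real.rpow_add hx0, show (2 - α) + (α - 2) = 0 by ring, Real.rpow_zero]
    have hrw : x ^ (2 - α) * (x ^ (α - 2) * H x) = H x := by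
      rw [← mul_assoc, hxinv2, one_mul]
    have hHub : H x ≤ 3 * L / 2 * x ^ (2 - α) := by
      have h := mul_le_mul_of_nonneg_left hH1.le hxpow2.le
      rw [hrw] at h
      linarith [h]
    have hHpos : 0 < H x := by
      have h := mul_lt_mul_of_pos_left hH2 hxpow2
      rw [hrw] at h
      nlinarith
    have hxpowa : (0:ℝ) < x ^ (-α) := Real.rpow_pos_of_pos hx0 _
    have hNlb : 1 / (2 * α) * x ^ (-α) ≤ N x := by
      have hxinva : x ^ (-α) * x ^ α = 1 := by
        rw [← Real.rpow_add hx0, show -α + α = 0 by ring, Real.rpow_zero]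
      have h := mul_le_mul_of_nonneg_left hN1.le hxpowa.le
      rw [show x ^ (-α) * (x ^ α * N x) = (x ^ (-α) * x ^ α) * N x by ring, hxinva, one_mul] at h
      linarith [h]
    have hx1a : x * x ^ (-α) = x ^ (1 - α) := by
      nth_rewrite 1 [← Real.rpow_one x]
      rw [← Real.rpow_add hx0, show (1:ℝ) + -α = 1 - α by ring]
    have hnum : 1 / (2 * α) * x ^ (1 - α) ≤ x * N x := by
      calc 1 / (2 * α) * x ^ (1 - α) = x * (1 / (2 * α) * x ^ (-α)) := by
            rw [← hx1a]; ring
        _ ≤ x * N x := mul_le_mul_of_nonneg_left hNlb hx0.le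
    have hxr : x ^ (1 - α) / x ^ (2 - α) = x⁻¹ := by
      rw [← Real.rpow_sub hx0, show (1 - α) - (2 - α) = -1 by ring, Real.rpow_neg_one]
    have heq : c₂ * x⁻¹ = (1 / (2 * α) * x ^ (1 - α)) / (3 * L / 2 * x ^ (2 - α)) := by
      have hsplit2 : (1 / (2 * α) * x ^ (1 - α)) / (3 * L / 2 * x ^ (2 - α))
          = (1 / (2 * α) / (3 * L / 2)) * (x ^ (1 - α) / x ^ (2 - α)) := by
        ring
      rw [hsplit2, hxr, hc₂def]
      congr 1
      have h1 : α ≠ 0 := by linarith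
      have h2 : L ≠ 0 := hLpos.ne'
      field_simp
    rw [heq]
    exact div_le_div₀ (mul_nonneg hx0.le (hNnonneg x hx0)) hnum hHpos hHub
  have hIoo : Ioo (0:ℝ) d ⊆ Ioc (0:ℝ) 1 := fun x hx => ⟨hx.1, hx.2.le.trans hd1⟩
  have hbot : ∫⁻ x in Ioo (0:ℝ) d, ENNReal.ofReal (c₂ * x⁻¹) = ⊤ := by
    by_contra hne
    have hmeas : Measurable fun x : ℝ => c₂ * x⁻¹ := measurable_const.mul measurable_inv
    have hfin : HasFiniteIntegral (fun x : ℝ => c₂ * x⁻¹) (volume.restrict (Ioo 0 d)) := by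
      rw [hasFiniteIntegral_iff_ofReal]
      · exact lt_top_iff_ne_top.mpr hne
      · filter_upwards [ae_restrict_mem measurableSet_Ioo] with x hx
        exact mul_nonneg hc₂.le (inv_nonneg.mpr hx.1.le)
    have hint2 : IntegrableOn (fun x : ℝ => c₂ * x⁻¹) (Ioo 0 d) :=
      ⟨hmeas.aestronglyMeasurable, hfin⟩
    have hint3 : IntegrableOn (fun x : ℝ => x⁻¹) (Ioo (0:ℝ) d) := by
      have h := hint2.const_mul (c₂⁻¹)
      apply Integrable.congr h (ae_of_all _ fun x => ?_)
      have : c₂ ≠ 0 := hc₂.ne'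
      field_simp
    have hii : IntervalIntegrable (fun x : ℝ => x⁻¹) volume 0 d := by
      rwa [intervalIntegrable_iff_integrableOn_Ioo_of_le hd0.le]
    rw [intervalIntegrable_inv_iff] at hii
    rcases hii with h | h
    · exact hd0.ne' h.symm
    · exact h left_mem_uIcc
  rw [eq_top_iff, ← hbot]
  calc ∫⁻ x in Ioo (0:ℝ) d, ENNReal.ofReal (c₂ * x⁻¹)
      ≤ ∫⁻ x in Ioo (0:ℝ) d, ENNReal.ofReal (x * N x / H x) :=
        setLIntegral_mono' measurableSet_Ioo hkey
    _ ≤ ∫⁻ x in Ioc (0:ℝ) 1, ENNReal.ofReal (x * N x / H x) := lintegral_mono_set hIoo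
end

section
/- Let α ∈ (0,1) and β, ρ < α + 1. Define N(u) = ∫_u^∞ e^{ρ r}(e^r − 1)^{−(α+1)} dr for u > 0 and H̃(x) = ∫_0^x N(y) dy for x > 0. Then lim_{x → 0^+} x^{α−1} H̃(x) = 1/(α(1−α)), lim_{x → 0^+} x² e^{β x}(e^x − 1)^{−(α+1)} / H̃(x) = α(1−α), and ∫_0^1 x · e^{β x}(e^x − 1)^{−(α+1)} / H̃(x) dx = +∞. (By Kyprianou–Loeffen's criterion this shows that for a Lamperti stable process of index α ∈ (0,1) with zero drift, the point 0 is regular for (0,∞).) -/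
open MeasureTheory Set Filter

section LampertiAux
open Real
variable {α ρ : ℝ}


-- squeeze helper
lemma lamperti_squeeze {l : Filter ℝ} {g : ℝ → ℝ} {c : ℝ}
    (h : ∀ ε > (0:ℝ), ∃ (Lf Uf : ℝ → ℝ) (lv uv : ℝ),
      (∀ᶠ u in l, Lf u ≤ g u ∧ g u ≤ Uf u) ∧ Tendsto Lf l (nhds lv) ∧
      Tendsto Uf l (nhds uv) ∧ c - ε < lv ∧ uv < c + ε) :
    Tendsto g l (nhds c) := by
  rw [Metric.tendsto_nhds]
  intro ε hε
  obtain ⟨Lf, Uf, lv, uv, hb, hL, hU, hlv, huv⟩ := h ε hε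
  have h1 : ∀ᶠ u in l, c - ε < Lf u := hL.eventually (eventually_gt_nhds hlv)
  have h2 : ∀ᶠ u in l, Uf u < c + ε := hU.eventually (eventually_lt_nhds huv)
  filter_upwards [hb, h1, h2] with u hu h1u h2u
  rw [Real.dist_eq, abs_sub_lt_iff]
  constructor <;> linarith [hu.1, hu.2]




lemma lamperti_em1_pos {r : ℝ} (hr : 0 < r) : 0 < Real.exp r - 1 := by
  linarith [Real.add_one_le_exp r]

lemma lamperti_fpos {r : ℝ} (hr : 0 < r) :
    0 < Real.exp (ρ * r) * (Real.exp r - 1) ^ (-(α + 1)) :=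
  mul_pos (Real.exp_pos _) (Real.rpow_pos_of_pos (lamperti_em1_pos hr) _)

lemma lamperti_fcont :
    ContinuousOn (fun r : ℝ => Real.exp (ρ * r) * (Real.exp r - 1) ^ (-(α + 1))) (Ioi (0:ℝ)) := by
  intro r hr
  apply ContinuousAt.continuousWithinAt
  have c1 : ContinuousAt (fun r : ℝ => Real.exp (ρ * r)) r := by fun_prop
  have c2 : ContinuousAt (fun r : ℝ => (Real.exp r - 1) ^ (-(α + 1))) r :=
    ((Real.continuous_exp.continuousAt).sub continuousAt_const).rpow_const
      (Or.inl (lamperti_em1_pos (mem_Ioi.mp hr)).ne')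
  exact c1.mul c2

-- upper bound: e^r - 1 ≥ r
lemma lamperti_fupper (hα : 0 < α) {r : ℝ} (hr : 0 < r) :
    Real.exp (ρ * r) * (Real.exp r - 1) ^ (-(α + 1))
      ≤ Real.exp (ρ * r) * r ^ (-(α + 1)) := by
  have h2 : r ≤ Real.exp r - 1 := by linarith [Real.add_one_le_exp r]
  exact mul_le_mul_of_nonneg_left
    (Real.rpow_le_rpow_of_nonpos hr h2 (by linarith)) (Real.exp_pos _).le

-- lower bound: e^r - 1 ≤ r e^r
lemma lamperti_flower (hα : 0 < α) {r : ℝ} (hr : 0 < r) :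
    Real.exp ((ρ - (α+1)) * r) * r ^ (-(α + 1))
      ≤ Real.exp (ρ * r) * (Real.exp r - 1) ^ (-(α + 1)) := by
  have h1 := lamperti_em1_pos hr
  have h2 : Real.exp r - 1 ≤ r * Real.exp r := by
    have h3 : 1 - r ≤ Real.exp (-r) := by linarith [Real.add_one_le_exp (-r)]
    have h4 := Real.exp_pos r
    nlinarith [Real.exp_neg r, mul_inv_cancel₀ h4.ne']
  have key : (r * Real.exp r) ^ (-(α+1)) ≤ (Real.exp r - 1) ^ (-(α + 1)) :=
    Real.rpow_le_rpow_of_nonpos h1 h2 (by linarith)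
  calc Real.exp ((ρ - (α+1)) * r) * r ^ (-(α + 1))
      = Real.exp (ρ * r) * ((Real.exp r) ^ (-(α+1)) * r ^ (-(α+1))) := by
        rw [← Real.exp_mul, ← mul_assoc, ← Real.exp_add]; ring_nf
    _ = Real.exp (ρ * r) * (r * Real.exp r) ^ (-(α+1)) := by
        rw [Real.mul_rpow hr.le (Real.exp_pos r).le]; ring
    _ ≤ _ := mul_le_mul_of_nonneg_left key (Real.exp_pos _).le






lemma lamperti_fint (hα : 0 < α) (hρ : ρ < α + 1) {u : ℝ} (hu : 0 < u) :
    IntegrableOn (fun r : ℝ => Real.exp (ρ * r) * (Real.exp r - 1) ^ (-(α + 1))) (Ioi u) := by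
  set C : ℝ := (1 - Real.exp (-u)) ^ (-(α + 1)) with hC
  have hcu : 0 < 1 - Real.exp (-u) := by
    have : Real.exp (-u) < 1 := Real.exp_lt_one_iff.mpr (by linarith)
    linarith
  have hb : 0 < α + 1 - ρ := by linarith
  have hint : IntegrableOn (fun r : ℝ => C * Real.exp (-(α + 1 - ρ) * r)) (Ioi u) :=
    (exp_neg_integrableOn_Ioi u hb).const_mul C
  apply Integrable.mono' hint
  · refine (ContinuousOn.aestronglyMeasurable ?_ measurableSet_Ioi)
    intro r hr
    have hr0 : (0:ℝ) < r := lt_trans hu (mem_Ioi.mp hr)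
    have c1 : ContinuousAt (fun r : ℝ => Real.exp (ρ * r)) r := by fun_prop
    have c2 : ContinuousAt (fun r : ℝ => (Real.exp r - 1) ^ (-(α + 1))) r :=
      ((Real.continuous_exp.continuousAt).sub continuousAt_const).rpow_const
        (Or.inl (lamperti_em1_pos hr0).ne')
    exact (c1.mul c2).continuousWithinAt
  · rw [ae_restrict_iff' measurableSet_Ioi]
    refine ae_of_all _ fun r hr => ?_
    have hur : u < r := mem_Ioi.mp hr
    have hr0 : (0:ℝ) < r := lt_trans hu hur
    have h1 : (0:ℝ) < Real.exp r - 1 := lamperti_em1_pos hr0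
    have key : Real.exp r * (1 - Real.exp (-u)) ≤ Real.exp r - 1 := by
      have h2 : Real.exp (-r) ≤ Real.exp (-u) := Real.exp_le_exp.mpr (by linarith)
      have h3 : Real.exp r * Real.exp (-r) = 1 := by
        rw [← Real.exp_add]; simp
      nlinarith [Real.exp_pos r]
    have hpos : (0:ℝ) < Real.exp r * (1 - Real.exp (-u)) := by positivity
    have hb1 : (Real.exp r - 1) ^ (-(α + 1))
        ≤ (Real.exp r * (1 - Real.exp (-u))) ^ (-(α + 1)) :=
      Real.rpow_le_rpow_of_nonpos hpos key (by linarith)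
    have heq : (Real.exp r * (1 - Real.exp (-u))) ^ (-(α + 1))
        = Real.exp (-(α+1) * r) * C := by
      rw [Real.mul_rpow (Real.exp_pos r).le hcu.le, ← Real.exp_mul, mul_comm r]
    rw [Real.norm_eq_abs, abs_of_pos (mul_pos (Real.exp_pos _) (Real.rpow_pos_of_pos h1 _))]
    calc Real.exp (ρ * r) * (Real.exp r - 1) ^ (-(α + 1))
        ≤ Real.exp (ρ * r) * (Real.exp (-(α+1) * r) * C) := by
          rw [← heq]; exact mul_le_mul_of_nonneg_left hb1 (Real.exp_pos _).le
      _ = C * Real.exp (-(α + 1 - ρ) * r) := by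
          rw [← mul_assoc, ← Real.exp_add]; ring_nf
  
lemma lamperti_fint_Ioc (hα : 0 < α) (hρ : ρ < α + 1) {u v : ℝ} (hu : 0 < u) :
    IntegrableOn (fun r : ℝ => Real.exp (ρ * r) * (Real.exp r - 1) ^ (-(α + 1))) (Ioc u v) :=
  (lamperti_fint hα hρ hu).mono_set Ioc_subset_Ioi_self

lemma lamperti_Nsplit (hα : 0 < α) (hρ : ρ < α + 1) {u v : ℝ} (hu : 0 < u) (huv : u ≤ v) :
    ∫ r in Ioi u, Real.exp (ρ * r) * (Real.exp r - 1) ^ (-(α + 1))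
      = (∫ r in Ioc u v, Real.exp (ρ * r) * (Real.exp r - 1) ^ (-(α + 1)))
        + ∫ r in Ioi v, Real.exp (ρ * r) * (Real.exp r - 1) ^ (-(α + 1)) := by
  rw [← Ioc_union_Ioi_eq_Ioi huv]
  exact setIntegral_union (Ioc_disjoint_Ioi le_rfl) measurableSet_Ioi
    (lamperti_fint_Ioc hα hρ hu) (lamperti_fint hα hρ (lt_of_lt_of_le hu huv))

open intervalIntegral in
lemma lamperti_rint (hα : 0 < α) {u v : ℝ} (hu : 0 < u) (huv : u ≤ v) :
    ∫ r in Ioc u v, r ^ (-(α+1)) = (u ^ (-α) - v ^ (-α)) / α := by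
  rw [← intervalIntegral.integral_of_le huv,
    integral_rpow (Or.inr ⟨by intro h; exact absurd (neg_eq_iff_eq_neg.mp h) (by intro h2; linarith), by
      rw [Set.uIcc_of_le huv]; exact fun h => absurd h.1 (by linarith)⟩)]
  have h1 : -(α+1)+1 = -α := by ring
  rw [h1]
  rw [show v ^ (-α) - u ^ (-α) = -(u ^ (-α) - v ^ (-α)) by ring, neg_div, div_neg, neg_neg]

lemma lamperti_rint_Ioc_integrable (hα : 0 < α) {u v : ℝ} (hu : 0 < u) (huv : u ≤ v) :
    IntegrableOn (fun r : ℝ => r ^ (-(α+1))) (Ioc u v) := by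
  have := intervalIntegral.intervalIntegrable_rpow (μ := volume) (r := -(α+1)) (a := u) (b := v)
    (Or.inr (by rw [Set.uIcc_of_le huv]; exact fun h => absurd h.1 (by linarith)))
  rwa [intervalIntegrable_iff, uIoc_of_le huv] at this






lemma lamperti_Nupper (hα : 0 < α) (hρ : ρ < α + 1) {u δ : ℝ} (hu : 0 < u) (huδ : u ≤ δ) :
    ∫ r in Ioi u, Real.exp (ρ * r) * (Real.exp r - 1) ^ (-(α + 1))
      ≤ Real.exp (max ρ 0 * δ) * ((u ^ (-α) - δ ^ (-α)) / α)
        + ∫ r in Ioi δ, Real.exp (ρ * r) * (Real.exp r - 1) ^ (-(α + 1)) := by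
  rw [lamperti_Nsplit hα hρ hu huδ]
  have key : (∫ r in Ioc u δ, Real.exp (ρ * r) * (Real.exp r - 1) ^ (-(α + 1)))
      ≤ ∫ r in Ioc u δ, Real.exp (max ρ 0 * δ) * r ^ (-(α+1)) := by
    apply setIntegral_mono_on (lamperti_fint_Ioc hα hρ hu)
      ((lamperti_rint_Ioc_integrable hα hu huδ).const_mul _) measurableSet_Ioc
    intro r hr
    calc Real.exp (ρ * r) * (Real.exp r - 1) ^ (-(α + 1))
        ≤ Real.exp (ρ * r) * r ^ (-(α + 1)) := lamperti_fupper hα (hu.trans hr.1)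
      _ ≤ Real.exp (max ρ 0 * δ) * r ^ (-(α+1)) := by
          apply mul_le_mul_of_nonneg_right _ (Real.rpow_nonneg (hu.trans hr.1).le _)
          apply Real.exp_le_exp.mpr
          calc ρ * r ≤ max ρ 0 * r := mul_le_mul_of_nonneg_right (le_max_left _ _) (hu.trans hr.1).le
            _ ≤ max ρ 0 * δ := mul_le_mul_of_nonneg_left hr.2 (le_max_right _ _)
    
  rw [integral_const_mul, lamperti_rint hα hu huδ] at key
  linarith

lemma lamperti_Nlower (hα : 0 < α) (hρ : ρ < α + 1) {u δ : ℝ} (hu : 0 < u) (huδ : u ≤ δ) :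
    Real.exp ((ρ - (α+1)) * δ) * ((u ^ (-α) - δ ^ (-α)) / α)
      ≤ ∫ r in Ioi u, Real.exp (ρ * r) * (Real.exp r - 1) ^ (-(α + 1)) := by
  rw [lamperti_Nsplit hα hρ hu huδ]
  have tail : 0 ≤ ∫ r in Ioi δ, Real.exp (ρ * r) * (Real.exp r - 1) ^ (-(α + 1)) := by
    apply setIntegral_nonneg measurableSet_Ioi
    intro r hr
    exact (lamperti_fpos (lt_trans (lt_of_lt_of_le hu huδ) (mem_Ioi.mp hr))).le
  have key : ∫ r in Ioc u δ, Real.exp ((ρ - (α+1)) * δ) * r ^ (-(α+1))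
      ≤ ∫ r in Ioc u δ, Real.exp (ρ * r) * (Real.exp r - 1) ^ (-(α + 1)) := by
    apply setIntegral_mono_on ((lamperti_rint_Ioc_integrable hα hu huδ).const_mul _)
      (lamperti_fint_Ioc hα hρ hu) measurableSet_Ioc
    intro r hr
    calc Real.exp ((ρ - (α+1)) * δ) * r ^ (-(α+1))
        ≤ Real.exp ((ρ - (α+1)) * r) * r ^ (-(α+1)) := by
          apply mul_le_mul_of_nonneg_right _ (Real.rpow_nonneg (hu.trans hr.1).le _)
          exact Real.exp_le_exp.mpr (by nlinarith [hr.2])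
      _ ≤ _ := lamperti_flower hα (hu.trans hr.1)
  rw [integral_const_mul, lamperti_rint hα hu huδ] at key
  linarith





lemma lamperti_rpow_tendsto_zero (hα : 0 < α) :
    Tendsto (fun u : ℝ => u ^ α) (nhdsWithin 0 (Ioi 0)) (nhds 0) := by
  have h := (Real.continuousAt_rpow_const 0 α (Or.inr hα.le)).tendsto
  rw [Real.zero_rpow hα.ne'] at h
  exact h.mono_left nhdsWithin_le_nhds

lemma lamperti_exp_near_one {c ε : ℝ} (hε : 0 < ε) :
    ∀ᶠ δ in nhdsWithin (0:ℝ) (Ioi 0), 1 - ε < Real.exp (c * δ) ∧ Real.exp (c * δ) < 1 + ε := by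
  have h : Tendsto (fun δ : ℝ => Real.exp (c * δ)) (nhdsWithin 0 (Ioi 0)) (nhds 1) := by
    have : ContinuousAt (fun δ : ℝ => Real.exp (c * δ)) 0 := by fun_prop
    have h2 := this.tendsto
    simp only [mul_zero, Real.exp_zero] at h2
    exact h2.mono_left nhdsWithin_le_nhds
  filter_upwards [h.eventually (eventually_gt_nhds (by linarith : 1 - ε < 1)),
    h.eventually (eventually_lt_nhds (by linarith : (1:ℝ) < 1 + ε))] with δ h1 h2
  exact ⟨h1, h2⟩

lemma lamperti_tendsto_N (hα : 0 < α) (hα1 : α < 1) (hρ : ρ < α + 1) :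
    Tendsto (fun u : ℝ => u ^ α * ∫ r in Ioi u, Real.exp (ρ * r) * (Real.exp r - 1) ^ (-(α + 1)))
      (nhdsWithin 0 (Ioi 0)) (nhds (1/α)) := by
  apply lamperti_squeeze
  intro ε hε
  have hαε : 0 < α * ε := mul_pos hα hε
  -- choose δ
  obtain ⟨δ, ⟨⟨hδ1, _⟩, ⟨_, hδ2⟩, hδpos⟩⟩ :=
    ((lamperti_exp_near_one (c := ρ - (α+1)) hαε).and
      ((lamperti_exp_near_one (c := max ρ 0) hαε).and self_mem_nhdsWithin)).exists
  set Nδ : ℝ := ∫ r in Ioi δ, Real.exp (ρ * r) * (Real.exp r - 1) ^ (-(α + 1)) with hNδ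
  refine ⟨fun u => u ^ α * (Real.exp ((ρ - (α+1)) * δ) * ((u ^ (-α) - δ ^ (-α)) / α)),
    fun u => u ^ α * (Real.exp (max ρ 0 * δ) * ((u ^ (-α) - δ ^ (-α)) / α) + Nδ),
    Real.exp ((ρ - (α+1)) * δ) / α, Real.exp (max ρ 0 * δ) / α, ?_, ?_, ?_, ?_, ?_⟩
  · filter_upwards [Ioo_mem_nhdsGT_of_mem (Set.mem_Ico.mpr ⟨le_refl 0, hδpos⟩)] with u hu
    have hu0 : 0 < u := hu.1
    have huδ : u ≤ δ := hu.2.le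
    constructor
    · exact mul_le_mul_of_nonneg_left (lamperti_Nlower hα hρ hu0 huδ)
        (Real.rpow_nonneg hu0.le _)
    · exact mul_le_mul_of_nonneg_left (lamperti_Nupper hα hρ hu0 huδ)
        (Real.rpow_nonneg hu0.le _)
  · -- Lf tendsto
    have heq : ∀ᶠ u in nhdsWithin (0:ℝ) (Ioi 0),
        Real.exp ((ρ - (α+1)) * δ) * ((1 - u ^ α * δ ^ (-α)) / α)
          = u ^ α * (Real.exp ((ρ - (α+1)) * δ) * ((u ^ (-α) - δ ^ (-α)) / α)) := by
      filter_upwards [self_mem_nhdsWithin] with u hu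
      have hu0 : (0:ℝ) < u := hu
      have h1 : u ^ α * u ^ (-α) = 1 := by
        rw [← Real.rpow_add hu0]; simp
      calc Real.exp ((ρ - (α+1)) * δ) * ((1 - u ^ α * δ ^ (-α)) / α)
          = Real.exp ((ρ - (α+1)) * δ) * ((u ^ α * u ^ (-α) - u ^ α * δ ^ (-α)) / α) := by
            rw [h1]
        _ = u ^ α * (Real.exp ((ρ - (α+1)) * δ) * ((u ^ (-α) - δ ^ (-α)) / α)) := by ring
    apply Tendsto.congr' heq
    have : Tendsto (fun u : ℝ => Real.exp ((ρ - (α+1)) * δ) * ((1 - u ^ α * δ ^ (-α)) / α))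
        (nhdsWithin 0 (Ioi 0))
        (nhds (Real.exp ((ρ - (α+1)) * δ) * ((1 - 0 * δ ^ (-α)) / α))) := by
      apply Tendsto.const_mul
      apply Tendsto.div_const
      exact (tendsto_const_nhds.sub ((lamperti_rpow_tendsto_zero hα).mul_const _))
    simpa [div_eq_mul_inv] using this
  · -- Uf tendsto
    have heq : ∀ᶠ u in nhdsWithin (0:ℝ) (Ioi 0),
        Real.exp (max ρ 0 * δ) * ((1 - u ^ α * δ ^ (-α)) / α) + u ^ α * Nδ
          = u ^ α * (Real.exp (max ρ 0 * δ) * ((u ^ (-α) - δ ^ (-α)) / α) + Nδ) := by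
      filter_upwards [self_mem_nhdsWithin] with u hu
      have hu0 : (0:ℝ) < u := hu
      have h1 : u ^ α * u ^ (-α) = 1 := by
        rw [← Real.rpow_add hu0]; simp
      calc Real.exp (max ρ 0 * δ) * ((1 - u ^ α * δ ^ (-α)) / α) + u ^ α * Nδ
          = Real.exp (max ρ 0 * δ) * ((u ^ α * u ^ (-α) - u ^ α * δ ^ (-α)) / α) + u ^ α * Nδ := by
            rw [h1]
        _ = u ^ α * (Real.exp (max ρ 0 * δ) * ((u ^ (-α) - δ ^ (-α)) / α) + Nδ) := by ring
    apply Tendsto.congr' heq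
    have : Tendsto (fun u : ℝ => Real.exp (max ρ 0 * δ) * ((1 - u ^ α * δ ^ (-α)) / α) + u ^ α * Nδ)
        (nhdsWithin 0 (Ioi 0))
        (nhds (Real.exp (max ρ 0 * δ) * ((1 - 0 * δ ^ (-α)) / α) + 0 * Nδ)) := by
      apply Tendsto.add
      · apply Tendsto.const_mul
        apply Tendsto.div_const
        exact (tendsto_const_nhds.sub ((lamperti_rpow_tendsto_zero hα).mul_const _))
      · exact (lamperti_rpow_tendsto_zero hα).mul_const _
    simpa [div_eq_mul_inv] using this
  · -- lower value
    have h3 : (1 - α*ε)/α < Real.exp ((ρ - (α+1)) * δ)/α := by gcongr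
    have h4 : (1 - α*ε)/α = 1/α - ε := by field_simp
    linarith
  · have h3 : Real.exp (max ρ 0 * δ)/α < (1 + α*ε)/α := by gcongr
    have h4 : (1 + α*ε)/α = 1/α + ε := by field_simp
    linarith





lemma lamperti_Nnonneg {u : ℝ} (hu : 0 < u) :
    0 ≤ ∫ r in Ioi u, Real.exp (ρ * r) * (Real.exp r - 1) ^ (-(α + 1)) := by
  apply setIntegral_nonneg measurableSet_Ioi
  exact fun r hr => (lamperti_fpos (hu.trans (mem_Ioi.mp hr))).le
  
lemma lamperti_Nanti (hα : 0 < α) (hρ : ρ < α + 1) :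
    AntitoneOn (fun u : ℝ => ∫ r in Ioi u, Real.exp (ρ * r) * (Real.exp r - 1) ^ (-(α + 1)))
      (Ioi (0:ℝ)) := by
  intro u hu v hv huv
  dsimp only
  rw [lamperti_Nsplit hα hρ (mem_Ioi.mp hu) huv]
  have : 0 ≤ ∫ r in Ioc u v, Real.exp (ρ * r) * (Real.exp r - 1) ^ (-(α + 1)) := by
    apply setIntegral_nonneg measurableSet_Ioc
    exact fun r hr => (lamperti_fpos (lt_trans (mem_Ioi.mp hu) hr.1)).le
  linarith

open intervalIntegral in
lemma lamperti_rpow_int_Ioc0 (hα : 0 < α) (hα1 : α < 1) {x : ℝ} (hx : 0 < x) :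
    ∫ y in Ioc (0:ℝ) x, y ^ (-α) = x ^ (1 - α) / (1 - α) := by
  rw [← intervalIntegral.integral_of_le hx.le]
  rw [integral_rpow (Or.inl (by linarith : (-1:ℝ) < -α))]
  rw [Real.zero_rpow (by intro h; linarith)]
  norm_num
  rw [show -α + 1 = 1 - α by ring]

lemma lamperti_rpow_int_Ioc0_integrable (hα : 0 < α) (hα1 : α < 1) {x : ℝ} (hx : 0 < x) :
    IntegrableOn (fun y : ℝ => y ^ (-α)) (Ioc (0:ℝ) x) := by
  have := intervalIntegral.intervalIntegrable_rpow' (a := 0) (b := x)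
    (by linarith : (-1:ℝ) < -α)
  rwa [intervalIntegrable_iff, uIoc_of_le hx.le] at this

lemma lamperti_Nmeas (hα : 0 < α) (hρ : ρ < α + 1) {x : ℝ} (hx : 0 < x) :
    AEMeasurable (fun u : ℝ => ∫ r in Ioi u, Real.exp (ρ * r) * (Real.exp r - 1) ^ (-(α + 1)))
      (volume.restrict (Ioc (0:ℝ) x)) :=
  aemeasurable_restrict_of_antitoneOn measurableSet_Ioc
    ((lamperti_Nanti hα hρ).mono (fun y hy => hy.1))

lemma lamperti_Nint (hα : 0 < α) (hα1 : α < 1) (hρ : ρ < α + 1) {x : ℝ} (hx : 0 < x) :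
    IntegrableOn (fun u : ℝ => ∫ r in Ioi u, Real.exp (ρ * r) * (Real.exp r - 1) ^ (-(α + 1)))
      (Ioc (0:ℝ) x) := by
  set C : ℝ := Real.exp (max ρ 0 * x) / α with hC
  set D : ℝ := ∫ r in Ioi x, Real.exp (ρ * r) * (Real.exp r - 1) ^ (-(α + 1)) with hD
  have hint : IntegrableOn (fun u : ℝ => C * u ^ (-α) + D) (Ioc (0:ℝ) x) :=
    ((lamperti_rpow_int_Ioc0_integrable hα hα1 hx).const_mul C).add (integrableOn_const
      measure_Ioc_lt_top.ne)
  apply Integrable.mono' hint ((lamperti_Nmeas hα hρ hx).aestronglyMeasurable)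
  rw [ae_restrict_iff' measurableSet_Ioc]
  refine ae_of_all _ fun u hu => ?_
  have hu0 : 0 < u := hu.1
  rw [Real.norm_eq_abs, abs_of_nonneg (lamperti_Nnonneg hu0)]
  calc ∫ r in Ioi u, Real.exp (ρ * r) * (Real.exp r - 1) ^ (-(α + 1))
      ≤ Real.exp (max ρ 0 * x) * ((u ^ (-α) - x ^ (-α)) / α) + D :=
        lamperti_Nupper hα hρ hu0 hu.2
    _ ≤ C * u ^ (-α) + D := by
        have h1 : 0 < x ^ (-α) := Real.rpow_pos_of_pos hx _
        have h2 : (0:ℝ) < Real.exp (max ρ 0 * x) := Real.exp_pos _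
        rw [hC]
        have : Real.exp (max ρ 0 * x) * ((u ^ (-α) - x ^ (-α)) / α)
            ≤ Real.exp (max ρ 0 * x) * (u ^ (-α) / α) := by
          apply mul_le_mul_of_nonneg_left _ h2.le
          gcongr
          linarith
        calc Real.exp (max ρ 0 * x) * ((u ^ (-α) - x ^ (-α)) / α) + D
            ≤ Real.exp (max ρ 0 * x) * (u ^ (-α) / α) + D := by linarith
          _ = Real.exp (max ρ 0 * x) / α * u ^ (-α) + D := by ring





lemma lamperti_tendsto_H (hα : 0 < α) (hα1 : α < 1) (hρ : ρ < α + 1) :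
    Tendsto (fun x : ℝ => x ^ (α - 1) *
        ∫ y in Ioc (0:ℝ) x, ∫ r in Ioi y, Real.exp (ρ * r) * (Real.exp r - 1) ^ (-(α + 1)))
      (nhdsWithin 0 (Ioi 0)) (nhds (1/(α * (1 - α)))) := by
  have h1α : (0:ℝ) < 1 - α := by linarith
  rw [Metric.tendsto_nhds]
  intro ε hε
  set ε' : ℝ := ε * (1 - α) / 2 with hε'
  have hε'pos : 0 < ε' := by positivity
  have hN := lamperti_tendsto_N hα hα1 hρ
  rw [Metric.tendsto_nhds] at hN
  have hev := hN ε' hε'pos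
  rw [(nhdsGT_basis (0:ℝ)).eventually_iff] at hev
  obtain ⟨δ, hδpos, hδ⟩ := hev
  rw [(nhdsGT_basis (0:ℝ)).eventually_iff]
  refine ⟨δ, hδpos, fun x hx => ?_⟩
  have hx0 : 0 < x := hx.1
  set H : ℝ := ∫ y in Ioc (0:ℝ) x, ∫ r in Ioi y, Real.exp (ρ * r) * (Real.exp r - 1) ^ (-(α + 1))
    with hH
  -- pointwise bounds on N over Ioc 0 x
  have hbound : ∀ y ∈ Ioc (0:ℝ) x,
      (1/α - ε') * y ^ (-α) ≤ (∫ r in Ioi y, Real.exp (ρ * r) * (Real.exp r - 1) ^ (-(α + 1))) ∧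
      (∫ r in Ioi y, Real.exp (ρ * r) * (Real.exp r - 1) ^ (-(α + 1))) ≤ (1/α + ε') * y ^ (-α) := by
    intro y hy
    have hy0 : 0 < y := hy.1
    have hyδ : y ∈ Ioo (0:ℝ) δ := ⟨hy0, lt_of_le_of_lt hy.2 hx.2⟩
    have := hδ hyδ
    rw [Real.dist_eq, abs_sub_lt_iff] at this
    set Ny : ℝ := ∫ r in Ioi y, Real.exp (ρ * r) * (Real.exp r - 1) ^ (-(α + 1)) with hNy
    have hid : y ^ (-α) * (y ^ α * Ny) = Ny := by
      rw [← mul_assoc, ← Real.rpow_add hy0]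
      simp
    have hyp : (0:ℝ) < y ^ (-α) := Real.rpow_pos_of_pos hy0 _
    constructor
    · calc (1/α - ε') * y ^ (-α) = y ^ (-α) * (1/α - ε') := by ring
        _ ≤ y ^ (-α) * (y ^ α * Ny) := by
            apply mul_le_mul_of_nonneg_left _ hyp.le
            linarith [this.2]
        _ = Ny := hid
    · calc Ny = y ^ (-α) * (y ^ α * Ny) := hid.symm
        _ ≤ y ^ (-α) * (1/α + ε') := by
            apply mul_le_mul_of_nonneg_left _ hyp.le
            linarith [this.1]
        _ = (1/α + ε') * y ^ (-α) := by ring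
  have hlow : (1/α - ε') * (x ^ (1-α) / (1-α)) ≤ H := by
    have := setIntegral_mono_on ((lamperti_rpow_int_Ioc0_integrable hα hα1 hx0).const_mul _)
      (lamperti_Nint hα hα1 hρ hx0) measurableSet_Ioc (fun y hy => (hbound y hy).1)
    rwa [integral_const_mul, lamperti_rpow_int_Ioc0 hα hα1 hx0] at this
  have hup : H ≤ (1/α + ε') * (x ^ (1-α) / (1-α)) := by
    have := setIntegral_mono_on (lamperti_Nint hα hα1 hρ hx0)
      ((lamperti_rpow_int_Ioc0_integrable hα hα1 hx0).const_mul _)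
      measurableSet_Ioc (fun y hy => (hbound y hy).2)
    rwa [integral_const_mul, lamperti_rpow_int_Ioc0 hα hα1 hx0] at this
  have hxp : (0:ℝ) < x ^ (α - 1) := Real.rpow_pos_of_pos hx0 _
  have hid2 : x ^ (α - 1) * x ^ (1 - α) = 1 := by
    rw [← Real.rpow_add hx0]; norm_num
  have hfin1 : x ^ (α - 1) * ((1/α - ε') * (x ^ (1-α) / (1-α))) = (1/α - ε') / (1-α) := by
    calc x ^ (α - 1) * ((1/α - ε') * (x ^ (1-α) / (1-α)))
        = (x ^ (α - 1) * x ^ (1 - α)) * ((1/α - ε') / (1-α)) := by ring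
      _ = (1/α - ε') / (1-α) := by rw [hid2]; ring
  have hfin2 : x ^ (α - 1) * ((1/α + ε') * (x ^ (1-α) / (1-α))) = (1/α + ε') / (1-α) := by
    calc x ^ (α - 1) * ((1/α + ε') * (x ^ (1-α) / (1-α)))
        = (x ^ (α - 1) * x ^ (1 - α)) * ((1/α + ε') / (1-α)) := by ring
      _ = (1/α + ε') / (1-α) := by rw [hid2]; ring
  have hl2 : (1/α - ε') / (1-α) ≤ x ^ (α - 1) * H := by
    rw [← hfin1]; exact mul_le_mul_of_nonneg_left hlow hxp.le
  have hu2 : x ^ (α - 1) * H ≤ (1/α + ε') / (1-α) := by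
    rw [← hfin2]; exact mul_le_mul_of_nonneg_left hup hxp.le
  rw [Real.dist_eq, abs_sub_lt_iff]
  have key1 : (1/α + ε') / (1-α) = 1/(α * (1-α)) + ε' / (1-α) := by
    field_simp
  have key2 : (1/α - ε') / (1-α) = 1/(α * (1-α)) - ε' / (1-α) := by
    field_simp
  have key3 : ε' / (1-α) = ε / 2 := by
    rw [hε']; field_simp
  constructor <;> [skip; skip] <;>
    (first
      | (rw [key1] at hu2; rw [key3] at hu2; linarith)
      | (rw [key2] at hl2; rw [key3] at hl2; linarith))





lemma lamperti_ratio_one (hα : 0 < α) (β : ℝ) :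
    Tendsto (fun x : ℝ => x ^ (α + 1) * (Real.exp (β * x) * (Real.exp x - 1) ^ (-(α + 1))))
      (nhdsWithin 0 (Ioi 0)) (nhds 1) := by
  have hd : HasDerivAt Real.exp 1 0 := by simpa using Real.hasDerivAt_exp 0
  rw [hasDerivAt_iff_tendsto_slope] at hd
  have hd' : Tendsto (fun x : ℝ => (Real.exp x - 1) / x) (nhdsWithin 0 (Ioi 0)) (nhds 1) := by
    have h2 := hd.mono_left (nhdsWithin_mono (0:ℝ) (fun x hx => ne_of_gt hx))
    apply h2.congr
    intro x
    rw [slope_def_field, Real.exp_zero]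
    ring_nf
  have h2 : Tendsto (fun x : ℝ => x / (Real.exp x - 1)) (nhdsWithin 0 (Ioi 0)) (nhds 1) := by
    have := hd'.inv₀ one_ne_zero
    rw [inv_one] at this
    apply this.congr
    intro x
    rw [← one_div, one_div_div]
  have h3 : Tendsto (fun x : ℝ => (x / (Real.exp x - 1)) ^ (α + 1))
      (nhdsWithin 0 (Ioi 0)) (nhds 1) := by
    have := h2.rpow_const (p := α + 1) (Or.inl one_ne_zero)
    rwa [Real.one_rpow] at this
  have h4 : Tendsto (fun x : ℝ => Real.exp (β * x)) (nhdsWithin 0 (Ioi 0)) (nhds 1) := by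
    have : ContinuousAt (fun x : ℝ => Real.exp (β * x)) 0 := by fun_prop
    have h5 := this.tendsto
    simp only [mul_zero, Real.exp_zero] at h5
    exact h5.mono_left nhdsWithin_le_nhds
  have h6 := h4.mul h3
  rw [mul_one] at h6
  apply h6.congr'
  filter_upwards [self_mem_nhdsWithin] with x hx
  have hx0 : (0:ℝ) < x := hx
  have he : (0:ℝ) < Real.exp x - 1 := by linarith [Real.add_one_le_exp x]
  rw [Real.div_rpow hx0.le he.le, Real.rpow_neg he.le, div_eq_mul_inv]
  ring




lemma lamperti_tendsto_ratio (hα : 0 < α) (hα1 : α < 1) (hρ : ρ < α + 1) (β : ℝ)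
    (Htil : ℝ → ℝ)
    (hHtil : ∀ x : ℝ, Htil x
      = ∫ y in Ioc (0:ℝ) x, ∫ r in Ioi y, Real.exp (ρ * r) * (Real.exp r - 1) ^ (-(α + 1))) :
    Tendsto (fun x : ℝ => x ^ 2 * Real.exp (β * x) * (Real.exp x - 1) ^ (-(α + 1)) / Htil x)
      (nhdsWithin 0 (Ioi 0)) (nhds (α * (1 - α))) := by
  have hH := lamperti_tendsto_H hα hα1 hρ
  have hA := lamperti_ratio_one hα β
  have hne : (1:ℝ)/(α * (1-α)) ≠ 0 := by
    have : (0:ℝ) < α * (1-α) := by nlinarith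
    positivity
  have h6 := hA.div hH hne
  have heq : (1:ℝ) / (1/(α * (1-α))) = α * (1-α) := by
    rw [one_div_one_div]
  rw [heq] at h6
  apply h6.congr'
  filter_upwards [self_mem_nhdsWithin] with x hx
  have hx0 : (0:ℝ) < x := hx
  have hxne : x ^ (α - 1) ≠ 0 := (Real.rpow_pos_of_pos hx0 _).ne'
  simp only [Pi.div_apply]
  rw [← hHtil]
  have hsplit : x ^ (α + 1) = x ^ (α - 1) * x ^ 2 := by
    rw [← Real.rpow_two, ← Real.rpow_add hx0]
    congr 1
    ring
  rw [hsplit]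
  set E : ℝ := Real.exp (β * x) * (Real.exp x - 1) ^ (-(α + 1)) with hE
  rw [show x ^ (α - 1) * x ^ 2 * E = x ^ (α - 1) * (x ^ 2 * E) by ring]
  rw [mul_div_mul_left _ _ hxne]
  rw [show x ^ 2 * E / Htil x = x ^ 2 * Real.exp (β * x) * (Real.exp x - 1) ^ (-(α + 1)) / Htil x
    by rw [hE]; ring_nf]





open intervalIntegral in
lemma lamperti_lintegral_top (hα : 0 < α) (hα1 : α < 1) (hρ : ρ < α + 1) (β : ℝ)
    (Htil : ℝ → ℝ)
    (hHtil : ∀ x : ℝ, Htil x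
      = ∫ y in Ioc (0:ℝ) x, ∫ r in Ioi y, Real.exp (ρ * r) * (Real.exp r - 1) ^ (-(α + 1))) :
    ∫⁻ x in Ioc (0:ℝ) 1,
        ENNReal.ofReal (x * Real.exp (β * x) * (Real.exp x - 1) ^ (-(α + 1)) / Htil x) = ⊤ := by
  have T2 := lamperti_tendsto_ratio hα hα1 hρ β Htil hHtil
  set c : ℝ := α * (1 - α) / 2 with hc
  have hcpos : 0 < c := by nlinarith
  have hev : ∀ᶠ x in nhdsWithin (0:ℝ) (Ioi 0),
      c < x ^ 2 * Real.exp (β * x) * (Real.exp x - 1) ^ (-(α + 1)) / Htil x :=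
    T2.eventually (eventually_gt_nhds (by nlinarith : c < α * (1 - α)))
  rw [(nhdsGT_basis (0:ℝ)).eventually_iff] at hev
  obtain ⟨δ, hδpos, hδ⟩ := hev
  set m : ℝ := min (δ/2) 1 with hm
  have hm0 : 0 < m := lt_min (by linarith) one_pos
  have hm1 : m ≤ 1 := min_le_right _ _
  have hmδ : m < δ := lt_of_le_of_lt (min_le_left _ _) (by linarith)
  have hle : ∀ x ∈ Ioc (0:ℝ) m, ENNReal.ofReal (c * x⁻¹)
      ≤ ENNReal.ofReal (x * Real.exp (β * x) * (Real.exp x - 1) ^ (-(α + 1)) / Htil x) := by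
    intro x hx
    have hx0 : 0 < x := hx.1
    have hxδ : x ∈ Ioo (0:ℝ) δ := ⟨hx0, lt_of_le_of_lt hx.2 hmδ⟩
    have h7 := hδ hxδ
    apply ENNReal.ofReal_le_ofReal
    have h8 : c / x < (x ^ 2 * Real.exp (β * x) * (Real.exp x - 1) ^ (-(α + 1)) / Htil x) / x :=
      (div_lt_div_iff_of_pos_right hx0).mpr h7
    have h9 : (x ^ 2 * Real.exp (β * x) * (Real.exp x - 1) ^ (-(α + 1)) / Htil x) / x
        = x * Real.exp (β * x) * (Real.exp x - 1) ^ (-(α + 1)) / Htil x := by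
      rw [div_right_comm]
      congr 1
      rw [pow_two, show x * x * Real.exp (β * x) * (Real.exp x - 1) ^ (-(α + 1))
        = (x * Real.exp (β * x) * (Real.exp x - 1) ^ (-(α + 1))) * x by ring,
        mul_div_cancel_right₀ _ hx0.ne']
    rw [h9] at h8
    rw [mul_comm c x⁻¹, ← div_eq_inv_mul]
    exact h8.le
  have hbig : (∫⁻ x in Ioc (0:ℝ) m, ENNReal.ofReal (c * x⁻¹)) = ⊤ := by
    by_contra h
    have hmeas : AEStronglyMeasurable (fun x : ℝ => c * x⁻¹) (volume.restrict (Ioc (0:ℝ) m)) :=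
      (measurable_const.mul measurable_inv).aestronglyMeasurable
    have hnn : 0 ≤ᵐ[volume.restrict (Ioc (0:ℝ) m)] fun x : ℝ => c * x⁻¹ := by
      filter_upwards [ae_restrict_mem measurableSet_Ioc] with x hx
      simp only [Pi.zero_apply]
      exact mul_nonneg hcpos.le (inv_nonneg.mpr hx.1.le)
    have hint := (lintegral_ofReal_ne_top_iff_integrable hmeas hnn).mp h
    have hinv : IntegrableOn (fun x : ℝ => x⁻¹) (Ioc (0:ℝ) m) := by
      have h2 := hint.const_mul c⁻¹
      have h3 : (fun x : ℝ => c⁻¹ * (c * x⁻¹)) = fun x : ℝ => x⁻¹ := by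
        funext x; rw [← mul_assoc, inv_mul_cancel₀ hcpos.ne', one_mul]
      rwa [h3] at h2
    have hioo : IntegrableOn (fun x : ℝ => x ^ (-1 : ℝ)) (Ioo (0:ℝ) m) := by
      have h4 : (fun x : ℝ => x ^ (-1:ℝ)) = fun x : ℝ => x⁻¹ := by
        funext x
        rw [show (-1:ℝ) = ((-1:ℤ):ℝ) by norm_num, Real.rpow_intCast, zpow_neg_one]
      rw [h4]
      exact hinv.mono_set Ioo_subset_Ioc_self
    have := (integrableOn_Ioo_rpow_iff hm0).mp hioo
    linarith
  rw [eq_top_iff, ← hbig]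
  calc ∫⁻ x in Ioc (0:ℝ) m, ENNReal.ofReal (c * x⁻¹)
      ≤ ∫⁻ x in Ioc (0:ℝ) m,
          ENNReal.ofReal (x * Real.exp (β * x) * (Real.exp x - 1) ^ (-(α + 1)) / Htil x) := by
        apply lintegral_mono_ae
        rw [ae_restrict_iff' measurableSet_Ioc]
        exact ae_of_all _ hle
    _ ≤ _ := lintegral_mono_set (Ioc_subset_Ioc_right hm1)


end LampertiAux

open Real in
theorem lamperti_stable_regularity_of_zero
    (α β ρ : ℝ) (hα : α ∈ Set.Ioo (0:ℝ) 1) (hβ : β < α + 1) (hρ : ρ < α + 1)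
    (N Htil : ℝ → ℝ)
    (hN : ∀ u : ℝ, N u = ∫ r in Set.Ioi u, Real.exp (ρ * r) * (Real.exp r - 1) ^ (-(α + 1)))
    (hHtil : ∀ x : ℝ, Htil x = ∫ y in Set.Ioc (0:ℝ) x, N y) :
    Filter.Tendsto (fun x : ℝ => x ^ (α - 1) * Htil x) (nhdsWithin 0 (Set.Ioi 0))
        (nhds (1 / (α * (1 - α)))) ∧
    Filter.Tendsto
        (fun x : ℝ => x ^ 2 * Real.exp (β * x) * (Real.exp x - 1) ^ (-(α + 1)) / Htil x)
        (nhdsWithin 0 (Set.Ioi 0)) (nhds (α * (1 - α))) ∧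
    ∫⁻ x in Set.Ioc (0:ℝ) 1,
        ENNReal.ofReal (x * Real.exp (β * x) * (Real.exp x - 1) ^ (-(α + 1)) / Htil x) = ⊤ := by
  obtain ⟨hα0, hα1⟩ := hα
  have hNfun : N = fun u : ℝ =>
      ∫ r in Ioi u, Real.exp (ρ * r) * (Real.exp r - 1) ^ (-(α + 1)) := funext hN
  have hHtil' : ∀ x : ℝ, Htil x
      = ∫ y in Ioc (0:ℝ) x, ∫ r in Ioi y, Real.exp (ρ * r) * (Real.exp r - 1) ^ (-(α + 1)) := by
    intro x
    rw [hHtil x, hNfun]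
  refine ⟨?_, lamperti_tendsto_ratio hα0 hα1 hρ β Htil hHtil',
    lamperti_lintegral_top hα0 hα1 hρ β Htil hHtil'⟩
  exact (lamperti_tendsto_H hα0 hα1 hρ).congr (fun x => by rw [hHtil' x])
end

section
/- Let α ∈ (0,1), β < α + 1, and λ ∈ ℝ. Then ∫_0^∞ (e^{iλx} − 1) · e^{β x}(e^x − 1)^{−(α+1)} dx = Γ(−α) · ( Γ(−iλ + α + 1 − β)/Γ(−iλ + 1 − β) − Γ(α + 1 − β)/Γ(1 − β) ), where Γ is the complex Gamma function (with the convention 1/Γ = 0 at the poles of Γ, i.e. Γ vanishes at nonpositive integers). In particular the characteristic exponent of a Lamperti stable process of index α ∈ (0,1) is explicit in terms of Pochhammer ratios (z)_α = Γ(z+α)/Γ(z). -/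
open MeasureTheory Set

lemma img_phi : (fun x : ℝ => 1 - Real.exp (-x)) '' Ioi 0 = Ioo 0 1 := by
  ext u
  simp only [mem_image, mem_Ioi, mem_Ioo]
  constructor
  · rintro ⟨x, hx, rfl⟩
    have h1 : Real.exp (-x) < 1 := by
      rw [Real.exp_lt_one_iff]; linarith
    have h2 : 0 < Real.exp (-x) := Real.exp_pos _
    constructor <;> linarith
  · rintro ⟨h0, h1⟩
    refine ⟨-Real.log (1-u), ?_, ?_⟩
    · have := Real.log_neg (by linarith : (0:ℝ) < 1-u) (by linarith)
      linarith
    · rw [neg_neg, Real.exp_log (by linarith)]; ring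

lemma beta_aux {a : ℝ} (ha0 : 0 < a) (ha1 : a < 1) {z : ℂ} (hz : z.re < a) :
    IntegrableOn (fun x : ℝ => Complex.exp (z*x) * (((Real.exp x - 1) ^ (-a) : ℝ) : ℂ)) (Ioi 0) ∧
    ∫ x in Ioi (0:ℝ), Complex.exp (z*x) * (((Real.exp x - 1) ^ (-a) : ℝ) : ℂ)
      = Complex.Gamma (1-(a:ℂ)) * Complex.Gamma ((a:ℂ) - z) / Complex.Gamma (1 - z) := by
  set φ : ℝ → ℝ := fun x => 1 - Real.exp (-x) with hφ
  have hderiv : ∀ x ∈ Ioi (0:ℝ), HasDerivWithinAt φ (Real.exp (-x)) (Ioi 0) x := by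
    intro x _
    have h1 : HasDerivAt (fun y:ℝ => Real.exp (-y)) (Real.exp (-x) * (-1)) x :=
      (Real.hasDerivAt_exp (-x)).comp x (hasDerivAt_neg x)
    have h2 := h1.const_sub 1
    simpa using h2.hasDerivWithinAt
  have hinj : InjOn φ (Ioi 0) := by
    intro x _ y _ h
    have : Real.exp (-x) = Real.exp (-y) := by
      simp only [hφ] at h; linarith
    simpa using Real.exp_injective this
  set g : ℝ → ℂ := fun u => (u:ℂ) ^ ((1-(a:ℂ)) - 1) * (1 - (u:ℂ)) ^ (((a:ℂ) - z) - 1) with hg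
  have key : ∀ x ∈ Ioi (0:ℝ), |Real.exp (-x)| • g (φ x)
      = Complex.exp (z*x) * (((Real.exp x - 1) ^ (-a) : ℝ) : ℂ) := by
    intro x hx
    have hx : 0 < x := hx
    have hu1 : Real.exp (-x) < 1 := by rw [Real.exp_lt_one_iff]; linarith
    have hu0 : 0 < φ x := by simp only [hφ]; linarith
    have e1 : ((φ x : ℝ):ℂ) ^ ((1-(a:ℂ)) - 1) = (((φ x) ^ (-a) : ℝ) : ℂ) := by
      rw [Complex.ofReal_cpow hu0.le]
      norm_num
    have e2 : (1 - ((φ x : ℝ):ℂ)) = Complex.exp (-(x:ℂ)) := by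
      simp only [hφ]
      push_cast [Complex.ofReal_exp]
      ring
    have e3 : Complex.exp (-(x:ℂ)) ^ (((a:ℂ) - z) - 1)
        = Complex.exp ((-(x:ℂ)) * ((a:ℂ) - z - 1)) := by
      rw [Complex.cpow_def_of_ne_zero (Complex.exp_ne_zero _),
        Complex.log_exp (by simp [Real.pi_pos]) (by simp [Real.pi_pos.le])]
    have e4 : Real.exp x - 1 = Real.exp x * φ x := by
      simp only [hφ]
      rw [mul_sub, ← Real.exp_add]
      simp
    have e5 : (Real.exp x - 1) ^ (-a) = Real.exp (x * (-a)) * (φ x) ^ (-a) := by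
      rw [e4, Real.mul_rpow (Real.exp_pos x).le hu0.le, Real.rpow_def_of_pos (Real.exp_pos x),
        Real.log_exp]
    rw [abs_of_pos (Real.exp_pos _), Complex.real_smul, hg]
    simp only []
    rw [e1, e2, e3, e5]
    push_cast [Complex.ofReal_exp]
    rw [show -(x:ℂ) * ((a:ℂ) - z - 1) = (z*(x:ℂ) + (x:ℂ)*(-(a:ℂ))) - (-(x:ℂ)) by ring,
      Complex.exp_sub, Complex.exp_add]
    field_simp [Complex.exp_ne_zero]
  have hremain : 0 < (1-(a:ℂ)).re := by simp; linarith
  have hremain2 : 0 < ((a:ℂ) - z).re := by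
    simp only [Complex.sub_re, Complex.ofReal_re]; linarith
  have hbeta_int : IntegrableOn g (Ioo 0 1) :=
    ((Complex.betaIntegral_convergent hremain hremain2).1).mono_set Ioo_subset_Ioc_self
  have hiff := integrableOn_image_iff_integrableOn_abs_deriv_smul measurableSet_Ioi hderiv hinj g
  rw [img_phi] at hiff
  have hInt : IntegrableOn (fun x : ℝ =>
      Complex.exp (z*x) * (((Real.exp x - 1) ^ (-a) : ℝ) : ℂ)) (Ioi 0) :=
    (hiff.mp hbeta_int).congr_fun key measurableSet_Ioi
  refine ⟨hInt, ?_⟩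
  have e1 := integral_image_eq_integral_abs_deriv_smul measurableSet_Ioi hderiv hinj g
  rw [img_phi, setIntegral_congr_fun measurableSet_Ioi key] at e1
  have e2 : ∫ u in Ioo (0:ℝ) 1, g u = Complex.betaIntegral (1-(a:ℂ)) ((a:ℂ) - z) := by
    rw [Complex.betaIntegral, intervalIntegral.integral_of_le zero_le_one,
      MeasureTheory.integral_Ioc_eq_integral_Ioo]
  have e3 := Complex.Gamma_mul_Gamma_eq_betaIntegral hremain hremain2
  have hsum : (1-(a:ℂ)) + ((a:ℂ) - z) = 1 - z := by ring
  rw [hsum] at e3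
  have hΓ : Complex.Gamma (1 - z) ≠ 0 := by
    apply Complex.Gamma_ne_zero_of_re_pos
    simp only [Complex.sub_re, Complex.one_re]; linarith
  rw [← e1, e2, eq_div_iff hΓ, mul_comm, ← e3]



lemma p_bound (l x : ℝ) (hx : 0 ≤ x) :
    ‖Complex.exp (Complex.I*l*x) - 1‖ ≤ 2*(1+|l|)*x := by
  have habs : ‖Complex.I*(l:ℂ)*(x:ℂ)‖ = |l| * x := by
    simp [abs_of_nonneg hx]
  by_cases hc : ‖Complex.I*(l:ℂ)*(x:ℂ)‖ ≤ 1
  · have h1 := Complex.norm_exp_sub_one_le hc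
    rw [habs] at h1
    have : ‖Complex.exp (Complex.I*l*x) - 1‖ ≤ 2 * (|l| * x) := h1
    nlinarith [abs_nonneg l, hx]
  · push_neg at hc
    rw [habs] at hc
    have h1 : ‖Complex.exp (Complex.I*(l:ℂ)*(x:ℂ))‖ = 1 := by
      rw [Complex.norm_exp]
      simp [Complex.mul_re, Complex.I_re, Complex.I_im]
    have h2 : ‖Complex.exp (Complex.I*l*x) - 1‖ ≤ 2 := by
      calc ‖Complex.exp (Complex.I*l*x) - 1‖ ≤ ‖Complex.exp (Complex.I*(l:ℂ)*(x:ℂ))‖ + ‖(1:ℂ)‖ :=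
        norm_sub_le _ _
      _ = 2 := by rw [h1]; norm_num
    nlinarith [abs_nonneg l, hx]

lemma one_lt_exp {x : ℝ} (hx : 0 < x) : 1 < Real.exp x := by
  rw [← Real.exp_zero]; exact Real.exp_lt_exp.mpr hx

lemma exp_sub_one_pos_s11 {x : ℝ} (hx : 0 < x) : 0 < Real.exp x - 1 := by
  linarith [one_lt_exp hx]

set_option maxHeartbeats 1000000 in
lemma M_integrable (α β l : ℝ) (hα0 : 0 < α) (hα1 : α < 1) (hβ : β < α + 1) :
    IntegrableOn (fun x : ℝ => (Complex.exp (Complex.I * l * x) - 1) *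
      ((Real.exp (β * x) * (Real.exp x - 1) ^ (-(α + 1)) : ℝ) : ℂ)) (Ioi 0) := by
  have hmeas : AEStronglyMeasurable (fun x : ℝ => (Complex.exp (Complex.I * l * x) - 1) *
      ((Real.exp (β * x) * (Real.exp x - 1) ^ (-(α + 1)) : ℝ) : ℂ)) (volume.restrict (Ioi 0)) := by
    apply ContinuousOn.aestronglyMeasurable _ measurableSet_Ioi
    apply ContinuousOn.mul
    · fun_prop
    · apply Complex.continuous_ofReal.comp_continuousOn
      apply ContinuousOn.mul (by fun_prop)
      apply ContinuousOn.rpow_const (by fun_prop)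
      intro x hx
      exact Or.inl (ne_of_gt (exp_sub_one_pos_s11 hx))
  rw [show Ioi (0:ℝ) = Ioc 0 1 ∪ Ioi 1 from (Ioc_union_Ioi_eq_Ioi zero_le_one).symm]
  apply MeasureTheory.IntegrableOn.union
  · apply MeasureTheory.Integrable.mono'
      (g := fun x => (2*(1+|l|)*Real.exp |β|) * x ^ (-α))
    · exact ((intervalIntegral.intervalIntegrable_rpow' (by linarith : (-1:ℝ) < -α)).1).const_mul _
    · exact hmeas.mono_measure (Measure.restrict_mono Ioc_subset_Ioi_self le_rfl)
    · rw [ae_restrict_iff' measurableSet_Ioc]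
      refine Filter.Eventually.of_forall fun x hx => ?_
      obtain ⟨hx0, hx1⟩ := hx
      have he := exp_sub_one_pos_s11 hx0
      have hr : (0:ℝ) ≤ Real.exp (β*x) * (Real.exp x - 1) ^ (-(α+1)) :=
        mul_nonneg (Real.exp_pos _).le (Real.rpow_nonneg he.le _)
      rw [norm_mul, Complex.norm_real, Real.norm_eq_abs, abs_of_nonneg hr]
      have h1 : ‖Complex.exp (Complex.I*l*x) - 1‖ ≤ 2*(1+|l|)*x := p_bound l x hx0.le
      have h2 : Real.exp (β*x) ≤ Real.exp |β| := by
        apply Real.exp_le_exp.mpr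
        calc β * x ≤ |β| * x := by nlinarith [le_abs_self β]
        _ ≤ |β| := by nlinarith [abs_nonneg β]
      have h3 : (Real.exp x - 1) ^ (-(α+1)) ≤ x ^ (-(α+1)) :=
        Real.rpow_le_rpow_of_nonpos hx0 (by linarith [Real.add_one_le_exp x]) (by linarith)
      calc ‖Complex.exp (Complex.I*l*x) - 1‖ * (Real.exp (β*x) * (Real.exp x - 1) ^ (-(α+1)))
          ≤ (2*(1+|l|)*x) * (Real.exp |β| * x ^ (-(α+1))) := by
            apply mul_le_mul h1 (mul_le_mul h2 h3 (Real.rpow_nonneg he.le _) (Real.exp_pos _).le)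
              (mul_nonneg (Real.exp_pos _).le (Real.rpow_nonneg he.le _)) (by positivity)
      _ = (2*(1+|l|)*Real.exp |β|) * x ^ (-α) := by
            rw [show -α = 1 + (-(α+1)) by ring, Real.rpow_add hx0, Real.rpow_one]; ring
  · apply MeasureTheory.Integrable.mono'
      (g := fun x => (2 * (2:ℝ)^(α+1)) * Real.exp ((-(α+1-β)*x)))
    · exact (exp_neg_integrableOn_Ioi 1 (by linarith)).const_mul _
    · exact hmeas.mono_measure (Measure.restrict_mono (Ioi_subset_Ioi zero_le_one) le_rfl)
    · rw [ae_restrict_iff' measurableSet_Ioi]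
      refine Filter.Eventually.of_forall fun x hx => ?_
      have hx1 : (1:ℝ) < x := hx
      have hx0 : (0:ℝ) < x := by linarith
      have he := exp_sub_one_pos_s11 hx0
      have hr : (0:ℝ) ≤ Real.exp (β*x) * (Real.exp x - 1) ^ (-(α+1)) :=
        mul_nonneg (Real.exp_pos _).le (Real.rpow_nonneg he.le _)
      rw [norm_mul, Complex.norm_real, Real.norm_eq_abs, abs_of_nonneg hr]
      have h1 : ‖Complex.exp (Complex.I*l*x) - 1‖ ≤ 2 := by
        have hnorm : ‖Complex.exp (Complex.I*(l:ℂ)*(x:ℂ))‖ = 1 := by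
          rw [Complex.norm_exp]
          simp [Complex.mul_re, Complex.I_re, Complex.I_im]
        calc ‖Complex.exp (Complex.I*l*x) - 1‖
            ≤ ‖Complex.exp (Complex.I*(l:ℂ)*(x:ℂ))‖ + ‖(1:ℂ)‖ := norm_sub_le _ _
        _ = 2 := by rw [hnorm]; norm_num
      have h2exp : (2:ℝ) ≤ Real.exp x := by
        calc (2:ℝ) ≤ Real.exp 1 := by
              have := Real.exp_one_gt_d9; nlinarith
        _ ≤ Real.exp x := Real.exp_le_exp.mpr hx1.le
      have h3 : (Real.exp x - 1)^(-(α+1)) ≤ (Real.exp x / 2)^(-(α+1)) :=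
        Real.rpow_le_rpow_of_nonpos (by linarith) (by linarith) (by linarith)
      have h4 : (Real.exp x / 2)^(-(α+1)) = (2:ℝ)^(α+1) * Real.exp (-(α+1)*x) := by
        rw [Real.div_rpow (Real.exp_pos x).le (by norm_num : (0:ℝ) ≤ 2),
          Real.rpow_def_of_pos (Real.exp_pos x), Real.log_exp,
          Real.rpow_neg (by norm_num : (0:ℝ) ≤ 2)]
        rw [div_eq_mul_inv, inv_inv, mul_comm, mul_comm x (-(α+1))]
      have h5 : Real.exp (β*x) * Real.exp (-(α+1)*x) = Real.exp ((-(α+1-β)*x)) := by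
        rw [← Real.exp_add]; ring_nf
      calc ‖Complex.exp (Complex.I*l*x) - 1‖ * (Real.exp (β*x) * (Real.exp x - 1) ^ (-(α+1)))
          ≤ 2 * (Real.exp (β*x) * ((2:ℝ)^(α+1) * Real.exp (-(α+1)*x))) := by
            rw [← h4]
            apply mul_le_mul h1 (mul_le_mul_of_nonneg_left h3 (Real.exp_pos _).le)
              (mul_nonneg (Real.exp_pos _).le (Real.rpow_nonneg he.le _)) (by norm_num)
      _ = (2 * (2:ℝ)^(α+1)) * Real.exp ((-(α+1-β)*x)) := by rw [← h5]; ring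

lemma f_hasDeriv (α β l : ℝ) (hα : (α:ℂ) ≠ 0) (x : ℝ) (hx : 0 < x) :
    HasDerivAt (fun y : ℝ => -(α⁻¹:ℂ) * ((Complex.exp (Complex.I*l*y) - 1) *
        ((Real.exp ((β-1)*y) * (Real.exp y - 1) ^ (-α) : ℝ) : ℂ)))
      ((Complex.exp (Complex.I * l * x) - 1) *
          ((Real.exp (β * x) * (Real.exp x - 1) ^ (-(α + 1)) : ℝ) : ℂ)
        - (α⁻¹:ℂ) * ((Complex.I*l + (β:ℂ) - 1) *
            (Complex.exp ((Complex.I*l + (β:ℂ) - 1)*x) * (((Real.exp x - 1) ^ (-α) : ℝ) : ℂ))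
          - ((β:ℂ) - 1) *
            (Complex.exp (((β:ℂ) - 1)*x) * (((Real.exp x - 1) ^ (-α) : ℝ) : ℂ)))) x := by
  have he := exp_sub_one_pos_s11 hx
  have hw1 : HasDerivAt (fun y : ℝ => Real.exp ((β-1)*y)) (Real.exp ((β-1)*x) * ((β-1)*1)) x :=
    (Real.hasDerivAt_exp _).comp x ((hasDerivAt_id x).const_mul (β-1))
  have hw2 : HasDerivAt (fun y : ℝ => (Real.exp y - 1)^(-α))
      (Real.exp x * (-α) * (Real.exp x - 1)^(-α - 1)) x :=
    ((Real.hasDerivAt_exp x).sub_const 1).rpow_const (Or.inl he.ne')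
  have hw := (hw1.mul hw2).ofReal_comp
  have hlin : HasDerivAt (fun y:ℝ => Complex.I*(l:ℂ)*(y:ℂ)) (Complex.I*(l:ℂ)) x := by
    simpa using (Complex.ofRealCLM.hasDerivAt (x := x)).const_mul (Complex.I*(l:ℂ))
  have hpd : HasDerivAt (fun y:ℝ => Complex.exp (Complex.I*l*y) - 1)
      (Complex.exp (Complex.I*l*x) * (Complex.I*(l:ℂ))) x := hlin.cexp.sub_const 1
  have total := (hpd.mul hw).const_mul (-(α⁻¹:ℂ))
  refine HasDerivAt.congr_deriv total ?_
  simp only [Pi.mul_apply]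
  have hR5 : ((Real.exp x - 1) ^ (-α) : ℝ) = (Real.exp x - 1) * (Real.exp x - 1) ^ (-α-1) := by
    nth_rewrite 1 [show -α = 1 + (-α-1) by ring]
    rw [Real.rpow_add he, Real.rpow_one]
  have hR1 : Real.exp (β*x) = Real.exp ((β-1)*x) * Real.exp x := by
    rw [← Real.exp_add]; ring_nf
  have hR3 : Complex.exp ((Complex.I*(l:ℂ) + (β:ℂ) - 1)*x)
      = Complex.exp (Complex.I*(l:ℂ)*(x:ℂ)) * ((Real.exp ((β-1)*x) : ℝ) : ℂ) := by
    rw [Complex.ofReal_exp, ← Complex.exp_add]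
    congr 1
    push_cast
    ring
  have hR4 : Complex.exp (((β:ℂ) - 1)*x) = ((Real.exp ((β-1)*x) : ℝ) : ℂ) := by
    rw [Complex.ofReal_exp]
    congr 1
    push_cast
    ring
  rw [show -(α+1) = -α-1 by ring, hR1, hR5, hR3, hR4]
  push_cast
  field_simp
  ring

lemma f_cont_zero (α β l : ℝ) (hα0 : 0 < α) (hα1 : α < 1) :
    ContinuousWithinAt (fun y : ℝ => -(α⁻¹:ℂ) * ((Complex.exp (Complex.I*l*y) - 1) *
        ((Real.exp ((β-1)*y) * (Real.exp y - 1) ^ (-α) : ℝ) : ℂ))) (Ici 0) 0 := by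
  suffices key : Filter.Tendsto (fun y : ℝ => -(α⁻¹:ℂ) * ((Complex.exp (Complex.I*l*y) - 1) *
      ((Real.exp ((β-1)*y) * (Real.exp y - 1) ^ (-α) : ℝ) : ℂ)))
      (nhdsWithin (0:ℝ) (Ici 0)) (nhds 0) by
    unfold ContinuousWithinAt
    convert key using 2
    simp
  apply squeeze_zero_norm' (a := fun x => (α⁻¹ * (2*(1+|l|)) * Real.exp |β-1|) * x ^ (1-α))
  · have hIcc : Icc (0:ℝ) 1 ∈ nhdsWithin (0:ℝ) (Ici 0) :=
      Icc_mem_nhdsGE_of_mem ⟨le_refl 0, zero_lt_one⟩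
    filter_upwards [hIcc] with x hx
    obtain ⟨hx0, hx1⟩ := hx
    rcases eq_or_lt_of_le hx0 with rfl | hx0
    · simp [Real.zero_rpow (by linarith : (1:ℝ)-α ≠ 0)]
    · have he := exp_sub_one_pos_s11 hx0
      rw [norm_mul, norm_mul, norm_neg, norm_inv, Complex.norm_real, Complex.norm_real]
      have hwpos : (0:ℝ) ≤ Real.exp ((β-1)*x) * (Real.exp x - 1) ^ (-α) :=
        mul_nonneg (Real.exp_pos _).le (Real.rpow_nonneg he.le _)
      rw [Real.norm_eq_abs, Real.norm_eq_abs, abs_of_nonneg hwpos, abs_of_pos hα0]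
      have h1 : ‖Complex.exp (Complex.I*l*x) - 1‖ ≤ 2*(1+|l|)*x := p_bound l x hx0.le
      have h2 : Real.exp ((β-1)*x) ≤ Real.exp |β-1| := by
        apply Real.exp_le_exp.mpr
        calc (β-1) * x ≤ |β-1| * x := by nlinarith [le_abs_self (β-1)]
        _ ≤ |β-1| := by nlinarith [abs_nonneg (β-1)]
      have h3 : (Real.exp x - 1) ^ (-α) ≤ x ^ (-α) :=
        Real.rpow_le_rpow_of_nonpos hx0 (by linarith [Real.add_one_le_exp x]) (by linarith)
      calc α⁻¹ * (‖Complex.exp (Complex.I*l*x) - 1‖ * (Real.exp ((β-1)*x) * (Real.exp x - 1) ^ (-α)))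
          ≤ α⁻¹ * ((2*(1+|l|)*x) * (Real.exp |β-1| * x ^ (-α))) := by
            apply mul_le_mul_of_nonneg_left _ (by positivity)
            apply mul_le_mul h1 (mul_le_mul h2 h3 (Real.rpow_nonneg he.le _) (Real.exp_pos _).le)
              (mul_nonneg (Real.exp_pos _).le (Real.rpow_nonneg he.le _)) (by positivity)
      _ = (α⁻¹ * (2*(1+|l|)) * Real.exp |β-1|) * x ^ (1-α) := by
            rw [show (1:ℝ)-α = 1 + (-α) by ring, Real.rpow_add hx0, Real.rpow_one]; ring
  · have hc : ContinuousWithinAt (fun x : ℝ => x ^ (1-α)) (Ici 0) 0 :=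
      (Real.continuousAt_rpow_const 0 (1-α) (Or.inr (by linarith))).continuousWithinAt
    unfold ContinuousWithinAt at hc
    simp only [Real.zero_rpow (by linarith : (1:ℝ)-α ≠ 0)] at hc
    simpa using hc.const_mul (α⁻¹ * (2*(1+|l|)) * Real.exp |β-1|)

lemma f_tendsto_top (α β l : ℝ) (hα0 : 0 < α) (hβ : β < α + 1) :
    Filter.Tendsto (fun y : ℝ => -(α⁻¹:ℂ) * ((Complex.exp (Complex.I*l*y) - 1) *
        ((Real.exp ((β-1)*y) * (Real.exp y - 1) ^ (-α) : ℝ) : ℂ))) Filter.atTop (nhds 0) := by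
  apply squeeze_zero_norm' (a := fun x => (α⁻¹ * 2 * (2:ℝ)^α) * Real.exp (-(α+1-β)*x))
  · filter_upwards [Filter.eventually_ge_atTop (1:ℝ)] with x hx1
    have hx0 : (0:ℝ) < x := by linarith
    have he := exp_sub_one_pos_s11 hx0
    rw [norm_mul, norm_mul, norm_neg, norm_inv, Complex.norm_real, Complex.norm_real]
    have hwpos : (0:ℝ) ≤ Real.exp ((β-1)*x) * (Real.exp x - 1) ^ (-α) :=
      mul_nonneg (Real.exp_pos _).le (Real.rpow_nonneg he.le _)
    rw [Real.norm_eq_abs, Real.norm_eq_abs, abs_of_nonneg hwpos, abs_of_pos hα0]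
    have h1 : ‖Complex.exp (Complex.I*l*x) - 1‖ ≤ 2 := by
      have hnorm : ‖Complex.exp (Complex.I*(l:ℂ)*(x:ℂ))‖ = 1 := by
        rw [Complex.norm_exp]
        simp [Complex.mul_re, Complex.I_re, Complex.I_im]
      calc ‖Complex.exp (Complex.I*l*x) - 1‖
          ≤ ‖Complex.exp (Complex.I*(l:ℂ)*(x:ℂ))‖ + ‖(1:ℂ)‖ := norm_sub_le _ _
      _ = 2 := by rw [hnorm]; norm_num
    have h2exp : (2:ℝ) ≤ Real.exp x := by
      calc (2:ℝ) ≤ Real.exp 1 := by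
            have := Real.exp_one_gt_d9; nlinarith
      _ ≤ Real.exp x := Real.exp_le_exp.mpr hx1
    have h3 : (Real.exp x - 1)^(-α) ≤ (Real.exp x / 2)^(-α) :=
      Real.rpow_le_rpow_of_nonpos (by linarith) (by linarith) (by linarith)
    have h4 : (Real.exp x / 2)^(-α) = (2:ℝ)^α * Real.exp (-α*x) := by
      rw [Real.div_rpow (Real.exp_pos x).le (by norm_num : (0:ℝ) ≤ 2),
        Real.rpow_def_of_pos (Real.exp_pos x), Real.log_exp,
        Real.rpow_neg (by norm_num : (0:ℝ) ≤ 2)]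
      rw [div_eq_mul_inv, inv_inv, mul_comm, mul_comm x (-α)]
    have h5 : Real.exp ((β-1)*x) * Real.exp (-α*x) = Real.exp (-(α+1-β)*x) := by
      rw [← Real.exp_add]; ring_nf
    calc α⁻¹ * (‖Complex.exp (Complex.I*l*x) - 1‖ * (Real.exp ((β-1)*x) * (Real.exp x - 1) ^ (-α)))
        ≤ α⁻¹ * (2 * (Real.exp ((β-1)*x) * ((2:ℝ)^α * Real.exp (-α*x)))) := by
          apply mul_le_mul_of_nonneg_left _ (by positivity)
          rw [← h4]
          apply mul_le_mul h1 (mul_le_mul_of_nonneg_left h3 (Real.exp_pos _).le)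
            (mul_nonneg (Real.exp_pos _).le (Real.rpow_nonneg he.le _)) (by norm_num)
    _ = (α⁻¹ * 2 * (2:ℝ)^α) * Real.exp (-(α+1-β)*x) := by rw [← h5]; ring
  · have hc : Filter.Tendsto (fun x : ℝ => (α+1-β)*x) Filter.atTop Filter.atTop :=
      Filter.Tendsto.const_mul_atTop (by linarith) Filter.tendsto_id
    have h2 := Real.tendsto_exp_neg_atTop_nhds_zero.comp hc
    have h3 : Filter.Tendsto (fun x : ℝ => Real.exp (-(α+1-β)*x)) Filter.atTop (nhds 0) := by
      refine h2.congr fun x => ?_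
      show Real.exp (-((α+1-β)*x)) = Real.exp (-(α+1-β)*x)
      congr 1
      ring
    simpa using h3.const_mul (α⁻¹ * 2 * (2:ℝ)^α)

theorem lamperti_stable_characteristic_exponent_small_index
    (α β l : ℝ) (hα : α ∈ Set.Ioo (0:ℝ) 1) (hβ : β < α + 1) :
    ∫ x in Set.Ioi (0:ℝ),
        (Complex.exp (Complex.I * l * x) - 1) *
          ((Real.exp (β * x) * (Real.exp x - 1) ^ (-(α + 1)) : ℝ) : ℂ)
      = Complex.Gamma (-α) *
          (Complex.Gamma (-(Complex.I * l) + α + 1 - β) /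
              Complex.Gamma (-(Complex.I * l) + 1 - β)
            - Complex.Gamma (α + 1 - β) / Complex.Gamma (1 - β)) := by
  obtain ⟨hα0, hα1⟩ := hα
  rcases eq_or_ne l 0 with rfl | hl
  · simp
  have hαC : (α:ℂ) ≠ 0 := by exact_mod_cast (ne_of_gt hα0)
  -- notation
  set M : ℝ → ℂ := fun x => (Complex.exp (Complex.I * l * x) - 1) *
      ((Real.exp (β * x) * (Real.exp x - 1) ^ (-(α + 1)) : ℝ) : ℂ) with hM
  set z1 : ℂ := Complex.I * l + β - 1 with hz1
  set z2 : ℂ := (β:ℂ) - 1 with hz2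
  set G1 : ℝ → ℂ := fun x => Complex.exp (z1*x) * (((Real.exp x - 1) ^ (-α) : ℝ) : ℂ) with hG1d
  set G2 : ℝ → ℂ := fun x => Complex.exp (z2*x) * (((Real.exp x - 1) ^ (-α) : ℝ) : ℂ) with hG2d
  set w : ℝ → ℝ := fun x => Real.exp ((β-1)*x) * (Real.exp x - 1) ^ (-α) with hw
  set p : ℝ → ℂ := fun x => Complex.exp (Complex.I*l*x) - 1 with hp
  set f : ℝ → ℂ := fun x => -(α⁻¹:ℂ) * (p x * ((w x : ℝ) : ℂ)) with hf
  set h : ℝ → ℂ := fun x => (Complex.I*l + (β:ℂ) - 1) * G1 x - ((β:ℂ) - 1) * G2 x with hh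
  have hz1re : z1.re < α := by
    simp [hz1, Complex.add_re, Complex.sub_re, Complex.mul_re]; linarith
  have hz2re : z2.re < α := by
    simp [hz2, Complex.sub_re]; linarith
  have hG1 := beta_aux hα0 hα1 hz1re
  have hG2 := beta_aux hα0 hα1 hz2re
  have hh_int : IntegrableOn h (Ioi 0) :=
    ((hG1.1.const_mul _).sub (hG2.1.const_mul _))
  have hM_int : IntegrableOn M (Ioi 0) := M_integrable α β l hα0 hα1 hβ
  have hderiv : ∀ x ∈ Ioi (0:ℝ), HasDerivAt f (M x - (α⁻¹:ℂ) * h x) x :=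
    fun x hx => f_hasDeriv α β l hαC x hx
  have hcont : ContinuousWithinAt f (Ici 0) 0 := f_cont_zero α β l hα0 hα1
  have htop : Filter.Tendsto f Filter.atTop (nhds 0) := f_tendsto_top α β l hα0 hβ
  have hf0 : f 0 = 0 := by simp [hf, hp]
  have hf'_int : IntegrableOn (fun x => M x - (α⁻¹:ℂ) * h x) (Ioi 0) :=
    hM_int.sub (hh_int.const_mul _)
  have key := MeasureTheory.integral_Ioi_of_hasDerivAt_of_tendsto hcont hderiv hf'_int htop
  rw [hf0, sub_zero] at key
  have hsplit : ∫ x in Ioi (0:ℝ), M x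
      = (∫ x in Ioi (0:ℝ), (M x - (α⁻¹:ℂ) * h x)) + (α⁻¹:ℂ) * ∫ x in Ioi (0:ℝ), h x := by
    rw [MeasureTheory.integral_sub hM_int (hh_int.const_mul _),
      MeasureTheory.integral_const_mul]
    ring
  have hhint : ∫ x in Ioi (0:ℝ), h x
      = (Complex.I*l + (β:ℂ) - 1) * (Complex.Gamma (1-(α:ℂ)) * Complex.Gamma ((α:ℂ) - z1) / Complex.Gamma (1 - z1))
        - ((β:ℂ) - 1) * (Complex.Gamma (1-(α:ℂ)) * Complex.Gamma ((α:ℂ) - z2) / Complex.Gamma (1 - z2)) := by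
    rw [hh]
    rw [MeasureTheory.integral_sub (hG1.1.const_mul _) (hG2.1.const_mul _),
      MeasureTheory.integral_const_mul, MeasureTheory.integral_const_mul, hG1.2, hG2.2]
  show ∫ x in Ioi (0:ℝ), M x = _
  rw [hsplit, key, hhint, zero_add]
  -- final Gamma algebra
  have hs : (-(Complex.I*(l:ℂ)) + 1 - (β:ℂ)) ≠ 0 := by
    intro hcon
    have := congrArg Complex.im hcon
    simp at this
    exact hl this
  have hΓs : Complex.Gamma (-(Complex.I*(l:ℂ)) + 1 - (β:ℂ)) ≠ 0 := by
    apply Complex.Gamma_ne_zero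
    intro m hcon
    have := congrArg Complex.im hcon
    simp at this
    exact hl this
  have E1 : (α:ℂ) - z1 = -(Complex.I*(l:ℂ)) + (α:ℂ) + 1 - (β:ℂ) := by rw [hz1]; ring
  have E2 : Complex.Gamma (1 - z1)
      = (-(Complex.I*(l:ℂ)) + 1 - (β:ℂ)) * Complex.Gamma (-(Complex.I*(l:ℂ)) + 1 - (β:ℂ)) := by
    rw [show (1:ℂ) - z1 = (-(Complex.I*(l:ℂ)) + 1 - (β:ℂ)) + 1 by rw [hz1]; ring,
      Complex.Gamma_add_one _ hs]
  have E3 : (α:ℂ) - z2 = (α:ℂ) + 1 - (β:ℂ) := by rw [hz2]; ring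
  have E5 : Complex.Gamma (1-(α:ℂ)) = -(α:ℂ) * Complex.Gamma (-(α:ℂ)) := by
    rw [show (1:ℂ) - (α:ℂ) = (-(α:ℂ)) + 1 by ring, Complex.Gamma_add_one _ (neg_ne_zero.mpr hαC)]
  rw [E1, E2, E3, E5]
  rcases eq_or_ne β 1 with rfl | hb
  · have hlC : (l:ℂ) ≠ 0 := by exact_mod_cast hl
    norm_num [hz2, Complex.Gamma_zero] at hΓs ⊢
    field_simp [hlC, hαC, Complex.I_ne_zero, hΓs]
  · have hb' : (1:ℂ) - (β:ℂ) ≠ 0 := by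
      intro hcon
      apply hb
      have := congrArg Complex.re hcon
      simp at this
      linarith
    have hT : Complex.Gamma (1 - (β:ℂ)) ≠ 0 := by
      apply Complex.Gamma_ne_zero
      intro m hcon
      have := congrArg Complex.re hcon
      simp at this
      have hm0 : (m:ℝ) = β - 1 := by linarith
      have hmlt : m < 1 := by exact_mod_cast (by linarith : (m:ℝ) < 1)
      have hmz : m = 0 := Nat.lt_one_iff.mp hmlt
      subst hmz
      simp at hm0
      exact hb (by linarith)
    have E4 : Complex.Gamma (1 - z2) = ((1:ℂ)-(β:ℂ)) * Complex.Gamma (1 - (β:ℂ)) := by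
      rw [show (1:ℂ) - z2 = ((1:ℂ)-(β:ℂ)) + 1 by rw [hz2]; ring, Complex.Gamma_add_one _ hb']
    rw [E4]
    field_simp [hαC, hs, hb', hΓs, hT]
    ring
end

section
/- Let α ∈ (0,1), β < α + 1, and λ ≥ 0. Then ∫_0^∞ (1 − e^{−λ x}) · e^{β x}(e^x − 1)^{−(α+1)} dx = −Γ(−α)·( Γ(λ + 1 − β + α)/Γ(λ + 1 − β) − Γ(1 − β + α)/Γ(1 − β) ), where Γ is the real Gamma function (taking the value 0 at nonpositive integers, so that ratios at poles are interpreted as 0). That is, the Laplace exponent of a driftless Lamperti stable subordinator is Φ_L(λ) = −c₊Γ(−α)((λ+1−β)_α − (1−β)_α) with (z)_α = Γ(z+α)/Γ(z). -/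
open MeasureTheory Set

namespace LampertiAux

open Real Filter Topology

/-- Beta-type kernel is integrable on `Ioo 0 1` for exponents `> -1`. -/
lemma integrableOn_beta {p q : ℝ} (hp : -1 < p) (hq : -1 < q) :
    IntegrableOn (fun t : ℝ => t ^ p * (1 - t) ^ q) (Ioo (0:ℝ) 1) := by
  have hu : (0:ℝ) < (((p:ℂ) + 1).re) := by simp; linarith
  have hv : (0:ℝ) < (((q:ℂ) + 1).re) := by simp; linarith
  have h := Complex.betaIntegral_convergent hu hv
  rw [intervalIntegrable_iff_integrableOn_Ioc_of_le zero_le_one] at h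
  have h' := (h.mono_set Ioo_subset_Ioc_self).re
  refine IntegrableOn.congr_fun h' ?_ measurableSet_Ioo
  intro t ht
  have h1 : (0:ℝ) ≤ t := ht.1.le
  have h2 : (0:ℝ) ≤ 1 - t := by linarith [ht.2]
  have he : ((t:ℂ) ^ ((p:ℂ) + 1 - 1) * ((1:ℂ) - (t:ℂ)) ^ ((q:ℂ) + 1 - 1))
      = (((t ^ p * (1 - t) ^ q : ℝ)) : ℂ) := by
    rw [Complex.ofReal_mul, Complex.ofReal_cpow h1, Complex.ofReal_cpow h2]
    push_cast
    ring_nf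
  simp only [he, RCLike.re_to_complex, Complex.ofReal_re]

/-- Euler Beta integral, real version on `Ioo 0 1`. -/
lemma beta_eval {p q : ℝ} (hp : 0 < p) (hq : 0 < q) :
    ∫ t in Ioo (0:ℝ) 1, t ^ (p - 1) * (1 - t) ^ (q - 1)
      = Real.Gamma p * Real.Gamma q / Real.Gamma (p + q) := by
  have hu : (0:ℝ) < ((p:ℂ)).re := by simpa using hp
  have hv : (0:ℝ) < ((q:ℂ)).re := by simpa using hq
  have hB : Complex.betaIntegral p q
      = Complex.Gamma p * Complex.Gamma q / Complex.Gamma (p + q) := by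
    have hne : Complex.Gamma ((p:ℂ) + q) ≠ 0 := by
      apply Complex.Gamma_ne_zero
      intro m hcon
      have h1 : (p + q : ℝ) = -(m:ℝ) := by exact_mod_cast hcon
      have hm : (0:ℝ) ≤ (m:ℝ) := Nat.cast_nonneg m
      linarith
    rw [eq_div_iff hne, mul_comm, ← Complex.Gamma_mul_Gamma_eq_betaIntegral hu hv]
  have hI : Complex.betaIntegral p q
      = ((∫ t in Ioo (0:ℝ) 1, t ^ (p - 1) * (1 - t) ^ (q - 1) : ℝ) : ℂ) := by
    rw [Complex.betaIntegral, intervalIntegral.integral_of_le zero_le_one,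
      integral_Ioc_eq_integral_Ioo]
    have : ∀ t ∈ Ioo (0:ℝ) 1, ((t:ℂ)) ^ ((p:ℂ) - 1) * ((1:ℂ) - t) ^ ((q:ℂ) - 1)
        = (((t ^ (p - 1) * (1 - t) ^ (q - 1) : ℝ)) : ℂ) := by
      intro t ht
      have h1 : (0:ℝ) ≤ t := ht.1.le
      have h2 : (0:ℝ) ≤ 1 - t := by linarith [ht.2]
      rw [Complex.ofReal_mul, Complex.ofReal_cpow h1, Complex.ofReal_cpow h2]
      push_cast
      ring_nf
    rw [setIntegral_congr_fun measurableSet_Ioo this]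
    exact integral_ofReal
  have h := hI.symm.trans hB
  rw [← Complex.ofReal_add, Complex.Gamma_ofReal, Complex.Gamma_ofReal,
    Complex.Gamma_ofReal] at h
  exact_mod_cast h


lemma exp_rpow' (u p : ℝ) : Real.exp u ^ p = Real.exp (u * p) := by
  rw [Real.rpow_def_of_pos (Real.exp_pos u), Real.log_exp]

lemma bound {l : ℝ} (hl : 0 ≤ l) {t : ℝ} (ht : 0 < t) (ht1 : t ≤ 1) :
    1 - t ^ l ≤ max l 1 * (1 - t) := by
  rcases le_total l 1 with h | h
  · have h2 : t ^ (1:ℝ) ≤ t ^ l := Real.rpow_le_rpow_of_exponent_ge ht ht1 h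
    rw [Real.rpow_one] at h2
    have hm : (1:ℝ) ≤ max l 1 := le_max_right _ _
    nlinarith
  · have hb := one_add_mul_self_le_rpow_one_add (s := t - 1) (by linarith) h
    rw [show (1:ℝ) + (t - 1) = t by ring] at hb
    have hm : l ≤ max l 1 := le_max_left _ _
    nlinarith

lemma contOn_aux {a l s : ℝ} :
    ContinuousOn (fun t : ℝ => t ^ s * (1 - t ^ l) * (1 - t) ^ (-a - 1)) (Ioo (0:ℝ) 1) := by
  intro t ht
  have h1 : ContinuousAt (fun t : ℝ => t ^ s) t :=
    Real.continuousAt_rpow_const t s (Or.inl ht.1.ne')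
  have h2 : ContinuousAt (fun t : ℝ => t ^ l) t :=
    Real.continuousAt_rpow_const t l (Or.inl ht.1.ne')
  have h3 : ContinuousAt (fun t : ℝ => (1 - t) ^ (-a - 1)) t := by
    refine ContinuousAt.rpow_const ?_ (Or.inl ?_)
    · exact (continuous_const.sub continuous_id).continuousAt
    · exact sub_ne_zero.mpr (ne_of_gt ht.2)
  exact ((h1.mul (continuous_const.continuousAt.sub h2)).mul h3).continuousWithinAt

lemma integrableOn_J {a l s : ℝ} (ha : 0 < a) (ha1 : a < 1) (hl : 0 ≤ l) (hs : 0 < s) :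
    IntegrableOn (fun t : ℝ => t ^ s * (1 - t ^ l) * (1 - t) ^ (-a - 1)) (Ioo (0:ℝ) 1) := by
  have hM : IntegrableOn (fun t : ℝ => max l 1 * (t ^ s * (1 - t) ^ (-a))) (Ioo (0:ℝ) 1) :=
    (integrableOn_beta (by linarith) (by linarith)).const_mul _
  refine Integrable.mono' hM ?_ ?_
  · exact (contOn_aux.aestronglyMeasurable measurableSet_Ioo)
  · filter_upwards [ae_restrict_mem measurableSet_Ioo] with t ht
    have ht0 : (0:ℝ) < t := ht.1
    have ht1 : t < 1 := ht.2
    have h1t : (0:ℝ) < 1 - t := by linarith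
    have hts : (0:ℝ) ≤ t ^ s := Real.rpow_nonneg ht0.le _
    have htl : t ^ l ≤ 1 := Real.rpow_le_one ht0.le ht1.le hl
    have hpow : (0:ℝ) ≤ (1 - t) ^ (-a - 1) := Real.rpow_nonneg h1t.le _
    have hb : 1 - t ^ l ≤ max l 1 * (1 - t) := bound hl ht0 ht1.le
    have heq : (1 - t) ^ (-a) = (1 - t) * (1 - t) ^ (-a - 1) := by
      have h := Real.rpow_add h1t 1 (-a - 1)
      rw [Real.rpow_one, show (1:ℝ) + (-a - 1) = -a by ring] at h
      exact h
    rw [Real.norm_eq_abs,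
      abs_of_nonneg (mul_nonneg (mul_nonneg hts (by linarith)) hpow)]
    calc t ^ s * (1 - t ^ l) * (1 - t) ^ (-a - 1)
        = (1 - t ^ l) * (t ^ s * (1 - t) ^ (-a - 1)) := by ring
      _ ≤ max l 1 * (1 - t) * (t ^ s * (1 - t) ^ (-a - 1)) :=
          mul_le_mul_of_nonneg_right hb (mul_nonneg hts hpow)
      _ = max l 1 * (t ^ s * ((1 - t) * (1 - t) ^ (-a - 1))) := by ring
      _ = max l 1 * (t ^ s * (1 - t) ^ (-a)) := by rw [← heq]

lemma A_eval {a s : ℝ} (ha1 : a < 1) (hs : 0 < s) :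
    ∫ t in Ioo (0:ℝ) 1, t ^ (s - 1) * (1 - t) ^ (-a)
      = Real.Gamma s * Real.Gamma (1 - a) / Real.Gamma (s + 1 - a) := by
  have h := beta_eval hs (q := 1 - a) (by linarith)
  rw [show (1 - a) - 1 = -a by ring, show s + (1 - a) = s + 1 - a by ring] at h
  exact h


lemma key {a l c : ℝ} (ha : 0 < a) (ha1 : a < 1) (hl : 0 ≤ l) (hc : 0 < c) :
    a * ∫ t in Ioo (0:ℝ) 1, t ^ c * (1 - t ^ l) * (1 - t) ^ (-a - 1)
      = (c + l) * (Real.Gamma (c + l) * Real.Gamma (1 - a) / Real.Gamma (c + l + 1 - a))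
        - c * (Real.Gamma c * Real.Gamma (1 - a) / Real.Gamma (c + 1 - a)) := by
  set P1 : ℝ → ℝ := fun t => (c * t ^ (c - 1) - (c + l) * t ^ (c + l - 1)) * (1 - t) ^ (-a)
    with hP1
  set P2 : ℝ → ℝ := fun t => (t ^ c - t ^ (c + l)) * (a * (1 - t) ^ (-a - 1)) with hP2
  set G : ℝ → ℝ := fun t => (t ^ c - t ^ (c + l)) * (1 - t) ^ (-a) with hG
  -- derivative
  have hderiv : ∀ t ∈ Ioo (0:ℝ) 1, HasDerivAt G (P1 t + P2 t) t := by
    intro t ht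
    have hne : t ≠ 0 := ht.1.ne'
    have h1 : HasDerivAt (fun t : ℝ => t ^ c - t ^ (c + l))
        (c * t ^ (c - 1) - (c + l) * t ^ (c + l - 1)) t := by
      have := (Real.hasDerivAt_rpow_const (x := t) (p := c) (Or.inl hne)).sub
        (Real.hasDerivAt_rpow_const (x := t) (p := c + l) (Or.inl hne))
      exact this
    have h2 : HasDerivAt (fun t : ℝ => (1 - t) ^ (-a)) (a * (1 - t) ^ (-a - 1)) t := by
      have hb : HasDerivAt (fun t : ℝ => 1 - t) (-1) t := by
        simpa using (hasDerivAt_id t).const_sub 1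
      have h := hb.rpow_const (p := -a) (Or.inl (sub_ne_zero.mpr (ne_of_gt ht.2)))
      have : (-1 : ℝ) * -a * (1 - t) ^ (-a - 1) = a * (1 - t) ^ (-a - 1) := by ring
      rw [this] at h
      exact h
    exact h1.mul h2
  -- integrability of P1 + P2 on Ioo 0 1
  have hint1 : IntegrableOn P1 (Ioo (0:ℝ) 1) := by
    have h := (((integrableOn_beta (p := c - 1) (q := -a) (by linarith) (by linarith)).const_mul
      c).sub ((integrableOn_beta (p := c + l - 1) (q := -a) (by linarith) (by linarith)).const_mul
      (c + l)))
    refine IntegrableOn.congr_fun h ?_ measurableSet_Ioo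
    intro t ht
    simp only [hP1, Pi.sub_apply]
    ring
  have hint2 : IntegrableOn P2 (Ioo (0:ℝ) 1) := by
    have h := (integrableOn_J ha ha1 hl hc).const_mul a
    refine IntegrableOn.congr_fun h ?_ measurableSet_Ioo
    intro t ht
    simp only [hP2]
    rw [Real.rpow_add ht.1 c l]
    ring
  have hint : IntervalIntegrable (fun t => P1 t + P2 t) volume 0 1 := by
    rw [intervalIntegrable_iff_integrableOn_Ioc_of_le zero_le_one,
      integrableOn_Ioc_iff_integrableOn_Ioo]
    exact hint1.add hint2
  -- limit at 0
  have h0 : Tendsto G (𝓝[>] (0:ℝ)) (𝓝 0) := by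
    have hc' : ContinuousAt G 0 := by
      have h1 : ContinuousAt (fun t : ℝ => t ^ c) 0 :=
        Real.continuousAt_rpow_const 0 c (Or.inr hc.le)
      have h2 : ContinuousAt (fun t : ℝ => t ^ (c + l)) 0 :=
        Real.continuousAt_rpow_const 0 (c + l) (Or.inr (by linarith))
      have h3 : ContinuousAt (fun t : ℝ => (1 - t) ^ (-a)) 0 :=
        ContinuousAt.rpow_const ((continuous_const.sub continuous_id).continuousAt)
          (Or.inl (by norm_num))
      exact (h1.sub h2).mul h3
    have : Tendsto G (𝓝[>] (0:ℝ)) (𝓝 (G 0)) := hc'.tendsto.mono_left nhdsWithin_le_nhds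
    simpa [hG, Real.zero_rpow hc.ne', Real.zero_rpow (by linarith : c + l ≠ 0)] using this
  -- limit at 1
  have h1lim : Tendsto G (𝓝[<] (1:ℝ)) (𝓝 0) := by
    have hmaj : Tendsto (fun t : ℝ => max l 1 * (1 - t) ^ (1 - a)) (𝓝[<] (1:ℝ)) (𝓝 0) := by
      have hcont : ContinuousAt (fun t : ℝ => (1 - t) ^ (1 - a)) 1 :=
        ContinuousAt.rpow_const ((continuous_const.sub continuous_id).continuousAt)
          (Or.inr (by norm_num; linarith))
      have : Tendsto (fun t : ℝ => (1 - t) ^ (1 - a)) (𝓝[<] (1:ℝ)) (𝓝 ((1 - (1:ℝ)) ^ (1 - a))) := hcont.tendsto.mono_left nhdsWithin_le_nhds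
      have := this.const_mul (max l 1)
      simpa [Real.zero_rpow (by linarith : 1 - a ≠ 0)] using this
    refine squeeze_zero' ?_ ?_ hmaj
    · filter_upwards [Ioo_mem_nhdsLT_of_mem (by norm_num : (1:ℝ) ∈ Ioc (0:ℝ) 1)] with t ht
      have : t ^ (c + l) ≤ t ^ c :=
        Real.rpow_le_rpow_of_exponent_ge ht.1 ht.2.le (by linarith)
      have := Real.rpow_nonneg (by linarith [ht.2] : (0:ℝ) ≤ 1 - t) (-a)
      simp only [hG]
      nlinarith
    · filter_upwards [Ioo_mem_nhdsLT_of_mem (by norm_num : (1:ℝ) ∈ Ioc (0:ℝ) 1)] with t ht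
      have ht0 : (0:ℝ) < t := ht.1
      have ht1 : t < 1 := ht.2
      have h1t : (0:ℝ) < 1 - t := by linarith
      have hsplit : t ^ (c + l) = t ^ c * t ^ l := Real.rpow_add ht0 c l
      have htc : t ^ c ≤ 1 := Real.rpow_le_one ht0.le ht1.le hc.le
      have htl : t ^ l ≤ 1 := Real.rpow_le_one ht0.le ht1.le hl
      have hb : 1 - t ^ l ≤ max l 1 * (1 - t) := bound hl ht0 ht1.le
      have hpow : (0:ℝ) ≤ (1 - t) ^ (-a) := Real.rpow_nonneg h1t.le _
      have heq : (1 - t) ^ (1 - a) = (1 - t) * (1 - t) ^ (-a) := by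
        have h := Real.rpow_add h1t 1 (-a)
        rw [Real.rpow_one, show (1:ℝ) + -a = 1 - a by ring] at h
        exact h
      simp only [hG]
      rw [heq, hsplit]
      have hts : (0:ℝ) ≤ t ^ c := Real.rpow_nonneg ht0.le _
      have key1 : t ^ c - t ^ c * t ^ l = t ^ c * (1 - t ^ l) := by ring
      rw [key1]
      have : t ^ c * (1 - t ^ l) ≤ max l 1 * (1 - t) := by
        calc t ^ c * (1 - t ^ l) ≤ 1 * (1 - t ^ l) :=
              mul_le_mul_of_nonneg_right htc (by linarith)
          _ = 1 - t ^ l := one_mul _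
          _ ≤ max l 1 * (1 - t) := hb
      calc t ^ c * (1 - t ^ l) * (1 - t) ^ (-a)
          ≤ max l 1 * (1 - t) * (1 - t) ^ (-a) := mul_le_mul_of_nonneg_right this hpow
        _ = max l 1 * ((1 - t) * (1 - t) ^ (-a)) := by ring
  -- FTC
  have hftc := intervalIntegral.integral_eq_sub_of_hasDerivAt_of_tendsto zero_lt_one
    hderiv hint h0 h1lim
  rw [sub_zero] at hftc
  rw [intervalIntegral.integral_of_le zero_le_one, integral_Ioc_eq_integral_Ioo] at hftc
  rw [integral_add hint1 hint2] at hftc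
  -- evaluate ∫ P1
  have hI1 : ∫ t in Ioo (0:ℝ) 1, P1 t
      = c * (Real.Gamma c * Real.Gamma (1 - a) / Real.Gamma (c + 1 - a))
        - (c + l) * (Real.Gamma (c + l) * Real.Gamma (1 - a) / Real.Gamma (c + l + 1 - a)) := by
    have hsep : ∫ t in Ioo (0:ℝ) 1, P1 t
        = ∫ t in Ioo (0:ℝ) 1,
            (c * (t ^ (c - 1) * (1 - t) ^ (-a)) - (c + l) * (t ^ (c + l - 1) * (1 - t) ^ (-a))) := by
      refine setIntegral_congr_fun measurableSet_Ioo ?_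
      intro t ht
      simp only [hP1]
      ring
    rw [hsep, integral_sub ((integrableOn_beta (by linarith) (by linarith)).const_mul c)
      ((integrableOn_beta (by linarith) (by linarith)).const_mul (c + l)),
      integral_const_mul, integral_const_mul, A_eval ha1 hc, A_eval ha1 (by linarith : 0 < c + l)]
  -- evaluate ∫ P2
  have hI2 : ∫ t in Ioo (0:ℝ) 1, P2 t
      = a * ∫ t in Ioo (0:ℝ) 1, t ^ c * (1 - t ^ l) * (1 - t) ^ (-a - 1) := by
    have hsep : ∫ t in Ioo (0:ℝ) 1, P2 t
        = ∫ t in Ioo (0:ℝ) 1, a * (t ^ c * (1 - t ^ l) * (1 - t) ^ (-a - 1)) := by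
      refine setIntegral_congr_fun measurableSet_Ioo ?_
      intro t ht
      simp only [hP2]
      rw [Real.rpow_add ht.1 c l]
      ring
    rw [hsep, integral_const_mul]
  rw [hI1, hI2] at hftc
  linarith


lemma gamma_step {x : ℝ} (hx : -1 < x) (C : ℝ) :
    x * (C / Real.Gamma (x + 1)) = C / Real.Gamma x := by
  rcases eq_or_ne x 0 with h | h
  · rw [h, Real.Gamma_zero, div_zero, zero_mul]
  · have h1 : Real.Gamma (x + 1) = x * Real.Gamma x := Real.Gamma_add_one h
    have h2 : Real.Gamma x ≠ 0 := by
      apply Real.Gamma_ne_zero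
      intro m
      rcases Nat.eq_zero_or_pos m with hm | hm
      · rw [hm]; simpa using h
      · have : (1:ℝ) ≤ (m:ℝ) := by exact_mod_cast hm
        intro hcon
        rw [hcon] at hx
        linarith
    rw [h1]
    field_simp

/-- The main identity in `t`-coordinates. -/
lemma main_t {a l c : ℝ} (ha : 0 < a) (ha1 : a < 1) (hl : 0 ≤ l) (hc : 0 < c) :
    ∫ t in Ioo (0:ℝ) 1, t ^ (c - 1) * (1 - t ^ l) * (1 - t) ^ (-a - 1)
      = -Real.Gamma (-a) *
          (Real.Gamma (c + l) / Real.Gamma (c + l - a) - Real.Gamma c / Real.Gamma (c - a)) := by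
  -- split the integrand
  have hsplit : ∫ t in Ioo (0:ℝ) 1, t ^ (c - 1) * (1 - t ^ l) * (1 - t) ^ (-a - 1)
      = (∫ t in Ioo (0:ℝ) 1, t ^ c * (1 - t ^ l) * (1 - t) ^ (-a - 1))
        + ((∫ t in Ioo (0:ℝ) 1, t ^ (c - 1) * (1 - t) ^ (-a))
            - ∫ t in Ioo (0:ℝ) 1, t ^ (c + l - 1) * (1 - t) ^ (-a)) := by
    have heq : ∀ t ∈ Ioo (0:ℝ) 1,
        t ^ (c - 1) * (1 - t ^ l) * (1 - t) ^ (-a - 1)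
          = t ^ c * (1 - t ^ l) * (1 - t) ^ (-a - 1)
            + (t ^ (c - 1) * (1 - t) ^ (-a) - t ^ (c + l - 1) * (1 - t) ^ (-a)) := by
      intro t ht
      have ht0 : (0:ℝ) < t := ht.1
      have h1t : (0:ℝ) < 1 - t := by linarith [ht.2]
      have e1 : t ^ c = t ^ (c - 1) * t := by
        rw [← Real.rpow_add_one ht0.ne' (c - 1), show c - 1 + 1 = c by ring]
      have e2 : t ^ (c + l - 1) = t ^ (c - 1) * t ^ l := by
        rw [← Real.rpow_add ht0, show c - 1 + l = c + l - 1 by ring]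
      have e3 : (1 - t) ^ (-a) = (1 - t) * (1 - t) ^ (-a - 1) := by
        have h := Real.rpow_add h1t 1 (-a - 1)
        rw [Real.rpow_one, show (1:ℝ) + (-a - 1) = -a by ring] at h
        exact h
      rw [e1, e2, e3]
      ring
    have hdiff : IntegrableOn
        (fun t : ℝ => t ^ (c - 1) * (1 - t) ^ (-a) - t ^ (c + l - 1) * (1 - t) ^ (-a))
        (Ioo (0:ℝ) 1) :=
      (integrableOn_beta (by linarith) (by linarith)).sub
        (integrableOn_beta (by linarith) (by linarith))
    rw [setIntegral_congr_fun measurableSet_Ioo heq,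
      integral_add (integrableOn_J ha ha1 hl hc) hdiff,
      integral_sub (integrableOn_beta (by linarith) (by linarith))
        (integrableOn_beta (by linarith) (by linarith))]
  have hkey := key ha ha1 hl hc
  have hA1 := A_eval (a := a) ha1 hc
  have hA2 := A_eval (a := a) ha1 (by linarith : (0:ℝ) < c + l)
  have g1 : (c - a) * (Real.Gamma c * Real.Gamma (1 - a) / Real.Gamma (c + 1 - a))
      = Real.Gamma c * Real.Gamma (1 - a) / Real.Gamma (c - a) := by
    have h := gamma_step (x := c - a) (by linarith) (Real.Gamma c * Real.Gamma (1 - a))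
    rw [show c - a + 1 = c + 1 - a by ring] at h
    exact h
  have g2 : (c + l - a) * (Real.Gamma (c + l) * Real.Gamma (1 - a) / Real.Gamma (c + l + 1 - a))
      = Real.Gamma (c + l) * Real.Gamma (1 - a) / Real.Gamma (c + l - a) := by
    have h := gamma_step (x := c + l - a) (by linarith) (Real.Gamma (c + l) * Real.Gamma (1 - a))
    rw [show c + l - a + 1 = c + l + 1 - a by ring] at h
    exact h
  have hGneg' : a * -Real.Gamma (-a) = Real.Gamma (1 - a) := by
    have h1 : Real.Gamma (-a + 1) = -a * Real.Gamma (-a) := Real.Gamma_add_one (by linarith)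
    rw [show (1:ℝ) - a = -a + 1 by ring, h1]
    ring
  rw [hsplit, hA1, hA2]
  refine mul_left_cancel₀ ha.ne' ?_
  linear_combination hkey + g2 - g1
    - (Real.Gamma (c + l) / Real.Gamma (c + l - a)
        - Real.Gamma c / Real.Gamma (c - a)) * hGneg'


lemma subst (a b l : ℝ) :
    ∫ x in Ioi (0:ℝ),
        (1 - Real.exp (-l * x)) * Real.exp (b * x) * (Real.exp x - 1) ^ (-(a + 1))
      = ∫ t in Ioo (0:ℝ) 1, t ^ (a - b) * (1 - t ^ l) * (1 - t) ^ (-a - 1) := by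
  have hderiv : ∀ x ∈ Ioi (0:ℝ),
      HasDerivWithinAt (fun x : ℝ => Real.exp (-x)) (-Real.exp (-x)) (Ioi 0) x := by
    intro x _
    have h : HasDerivAt (fun x : ℝ => Real.exp (-x)) (Real.exp (-x) * -1) x :=
      (Real.hasDerivAt_exp (-x)).comp x (hasDerivAt_neg x)
    simpa using h.hasDerivWithinAt
  have hinj : InjOn (fun x : ℝ => Real.exp (-x)) (Ioi 0) :=
    (Real.exp_injective.comp neg_injective).injOn
  have himg : (fun x : ℝ => Real.exp (-x)) '' (Ioi 0) = Ioo 0 1 := by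
    ext y
    simp only [mem_image, mem_Ioi, mem_Ioo]
    constructor
    · rintro ⟨x, hx, rfl⟩
      exact ⟨Real.exp_pos _, by rw [Real.exp_lt_one_iff]; linarith⟩
    · rintro ⟨hy0, hy1⟩
      exact ⟨-Real.log y, by simpa using Real.log_neg hy0 hy1,
        by rw [neg_neg, Real.exp_log hy0]⟩
  have h := integral_image_eq_integral_abs_deriv_smul measurableSet_Ioi hderiv hinj
    (fun t : ℝ => t ^ (a - b) * (1 - t ^ l) * (1 - t) ^ (-a - 1))
  rw [himg] at h
  rw [h]
  refine setIntegral_congr_fun measurableSet_Ioi ?_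
  intro x hx
  have hx0 : (0:ℝ) < x := hx
  have hex : (0:ℝ) < Real.exp (-x) := Real.exp_pos _
  have hex1 : (1:ℝ) < Real.exp x := by
    rw [← Real.exp_zero]
    exact Real.exp_lt_exp.mpr hx0
  simp only [smul_eq_mul, abs_neg, abs_of_pos hex]
  rw [exp_rpow', exp_rpow']
  have h1 : (1:ℝ) - Real.exp (-x) = Real.exp (-x) * (Real.exp x - 1) := by
    rw [mul_sub, ← Real.exp_add]
    simp
  rw [h1, Real.mul_rpow hex.le (by linarith), exp_rpow']
  rw [show -(a + 1) = -a - 1 by ring, show -x * l = -l * x by ring]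
  have hcomb : Real.exp (-x) * Real.exp (-x * (a - b)) * Real.exp (-x * (-a - 1))
      = Real.exp (b * x) := by
    rw [← Real.exp_add, ← Real.exp_add]
    congr 1
    ring
  linear_combination (-(1 - Real.exp (-l * x)) * (Real.exp x - 1) ^ (-a - 1)) * hcomb

end LampertiAux

theorem lamperti_stable_subordinator_laplace_exponent
    (α β l : ℝ) (hα : α ∈ Set.Ioo (0:ℝ) 1) (hβ : β < α + 1) (hl : 0 ≤ l) :
    ∫ x in Set.Ioi (0:ℝ),
        (1 - Real.exp (-l * x)) * Real.exp (β * x) * (Real.exp x - 1) ^ (-(α + 1))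
      = -Real.Gamma (-α) *
          (Real.Gamma (l + 1 - β + α) / Real.Gamma (l + 1 - β)
            - Real.Gamma (1 - β + α) / Real.Gamma (1 - β)) := by
  obtain ⟨ha, ha1⟩ := hα
  have hc : (0:ℝ) < α - β + 1 := by linarith
  have hmain := LampertiAux.main_t (a := α) (l := l) (c := α - β + 1) ha ha1 hl hc
  rw [show α - β + 1 - 1 = α - β by ring, show α - β + 1 + l = l + 1 - β + α by ring,
    show l + 1 - β + α - α = l + 1 - β by ring, show α - β + 1 = 1 - β + α by ring,
    show 1 - β + α - α = 1 - β by ring] at hmain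
  rw [LampertiAux.subst α β l]
  exact hmain
end

section
/- Let d ≥ 1, α ∈ (0,2), let σ be a finite nonzero Borel measure on the unit sphere S^{d−1} ⊂ ℝ^d, and let f : S^{d−1} → ℝ be Borel measurable with sup_{ξ} f(ξ) < α + 1 and ∫_{S^{d−1}} f(ξ)² σ(dξ) < ∞. Then ∫_{S^{d−1}} σ(dξ) ∫_0^∞ [ ( e^{r f(ξ)} r^{α+1} / (e^r − 1)^{α+1} )^{1/2} − 1 ]² · r^{−(α+1)} dr < ∞. (By Sato's criterion for equivalence of Lévy process laws, this Hellinger-type integrability implies that the law of a Lamperti stable process and the law of its short-time limiting α-stable process are mutually absolutely continuous on every finite time horizon, for a suitable choice of linear terms.) -/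
open MeasureTheory Set

/-- `(e^t - 1)^2 ≤ e^3 t^2` for `t ≤ 3/2`. -/
lemma aux_exp_sq (t : ℝ) (ht : t ≤ 3/2) : (Real.exp t - 1)^2 ≤ Real.exp 3 * t^2 := by
  rcases le_or_gt t 0 with h | h
  · have h1 : t + 1 ≤ Real.exp t := Real.add_one_le_exp t
    have h2 : Real.exp t ≤ 1 := by
      calc Real.exp t ≤ Real.exp 0 := Real.exp_le_exp.mpr h
      _ = 1 := Real.exp_zero
    have h3 : (1:ℝ) ≤ Real.exp 3 := by
      calc (1:ℝ) = Real.exp 0 := Real.exp_zero.symm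
      _ ≤ Real.exp 3 := Real.exp_le_exp.mpr (by norm_num)
    nlinarith [sq_nonneg t,
      mul_nonneg (show (0:ℝ) ≤ Real.exp t - 1 - t by linarith)
        (show (0:ℝ) ≤ 1 - Real.exp t - t by linarith)]
  · have h1 : -t + 1 ≤ (Real.exp t)⁻¹ := by
      have := Real.add_one_le_exp (-t); rwa [Real.exp_neg] at this
    have hpos : 0 < Real.exp t := Real.exp_pos t
    have h2 : Real.exp t - 1 ≤ t * Real.exp t := by
      have := mul_le_mul_of_nonneg_right h1 hpos.le
      rw [inv_mul_cancel₀ hpos.ne'] at this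
      nlinarith
    have h3 : Real.exp t ≤ Real.exp (3/2) := Real.exp_le_exp.mpr ht
    have h4 : Real.exp (3/2) * Real.exp (3/2) = Real.exp 3 := by
      rw [← Real.exp_add]; norm_num
    have h5 : 0 ≤ Real.exp t - 1 := by
      have h0 : Real.exp 0 ≤ Real.exp t := Real.exp_le_exp.mpr h.le
      rw [Real.exp_zero] at h0; linarith
    have h6 : (Real.exp t - 1)^2 ≤ (t * Real.exp t)^2 := by
      apply sq_le_sq' (by nlinarith) h2
    calc (Real.exp t - 1)^2 ≤ (t * Real.exp t)^2 := h6
    _ = t^2 * (Real.exp t * Real.exp t) := by ring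
    _ ≤ t^2 * (Real.exp (3/2) * Real.exp (3/2)) := by
        apply mul_le_mul_of_nonneg_left _ (sq_nonneg t)
        nlinarith [Real.exp_pos (3/2)]
    _ = Real.exp 3 * t^2 := by rw [h4]; ring

/-- Pointwise bound on `(0,1]`. -/
lemma aux_small (α c r : ℝ) (hα1 : 0 ≤ α) (hα2 : α ≤ 2) (hc : c ≤ 3)
    (hr : 0 < r) (hr1 : r ≤ 1) :
    ((Real.exp (r * c) * r ^ (α + 1) / (Real.exp r - 1) ^ (α + 1)) ^ ((1:ℝ)/2) - 1) ^ 2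
      * r ^ (-(α + 1))
    ≤ (9/2 + Real.exp 3 / 2 * c^2) * r ^ (1 - α) := by
  have hE : 0 < Real.exp r - 1 := by nlinarith [Real.add_one_le_exp r]
  have hEr : r ≤ Real.exp r - 1 := by nlinarith [Real.add_one_le_exp r]
  have hEle : Real.exp r - 1 ≤ r * Real.exp r := by
    have h1 := Real.add_one_le_exp (-r)
    rw [Real.exp_neg] at h1
    have hpos := Real.exp_pos r
    have h2 := mul_le_mul_of_nonneg_right h1 hpos.le
    rw [inv_mul_cancel₀ hpos.ne'] at h2
    nlinarith
  set E := Real.exp r - 1 with hEdef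
  have hq0 : 0 < r / E := div_pos hr hE
  have hq1 : r / E ≤ 1 := (div_le_one hE).mpr hEr
  set y : ℝ := (r / E) ^ ((α+1)/2) with hydef
  have hy0 : 0 < y := Real.rpow_pos_of_pos hq0 _
  have hy1 : y ≤ 1 := Real.rpow_le_one hq0.le hq1 (by linarith)
  -- rewrite the square root
  have hroot : (Real.exp (r * c) * r ^ (α + 1) / E ^ (α + 1)) ^ ((1:ℝ)/2)
      = Real.exp (r * c / 2) * y := by
    rw [show Real.exp (r * c) * r ^ (α + 1) / E ^ (α + 1)
        = Real.exp (r * c) * (r / E) ^ (α + 1) by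
      rw [Real.div_rpow hr.le hE.le, mul_div_assoc]]
    rw [Real.mul_rpow (Real.exp_nonneg _) (Real.rpow_nonneg hq0.le _),
      ← Real.exp_mul, ← Real.rpow_mul hq0.le,
      show r * c * ((1:ℝ)/2) = r * c / 2 by ring,
      show (α + 1) * ((1:ℝ)/2) = (α + 1)/2 by ring]
  -- bound on exp part
  have ht : r * c / 2 ≤ 3/2 := by
    rcases le_or_gt c 0 with h | h
    · nlinarith
    · nlinarith [mul_nonneg (sub_nonneg.mpr hr1) h.le]
  have e2 : (y * (Real.exp (r*c/2) - 1))^2 ≤ Real.exp 3 * (r*c/2)^2 := by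
    have hA := aux_exp_sq (r*c/2) ht
    have hy2 : y^2 ≤ 1 := by nlinarith
    calc (y * (Real.exp (r*c/2) - 1))^2 = y^2 * (Real.exp (r*c/2) - 1)^2 := by ring
    _ ≤ 1 * (Real.exp 3 * (r*c/2)^2) := by
        apply mul_le_mul hy2 hA (sq_nonneg _) zero_le_one
    _ = Real.exp 3 * (r*c/2)^2 := one_mul _
  -- bound on y part
  have hylb : 1 - y ≤ 3/2 * r := by
    have hL0 : Real.log r ≤ Real.log E := Real.log_le_log hr hEr
    have hL1 : Real.log E ≤ Real.log r + r := by
      calc Real.log E ≤ Real.log (r * Real.exp r) := Real.log_le_log hE hEle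
      _ = Real.log r + r := by rw [Real.log_mul hr.ne' (Real.exp_pos r).ne', Real.log_exp]
    have hyexp : y = Real.exp ((Real.log r - Real.log E) * ((α+1)/2)) := by
      rw [hydef, Real.rpow_def_of_pos hq0, Real.log_div hr.ne' hE.ne']
    have h1 : (Real.log r - Real.log E) * ((α+1)/2) + 1 ≤ y := by
      rw [hyexp]; exact Real.add_one_le_exp _
    have h2 : (Real.log E - Real.log r) * ((α+1)/2) ≤ 3/2 * r := by
      nlinarith [mul_nonneg (sub_nonneg.mpr hL0) (show (0:ℝ) ≤ (α+1)/2 by linarith)]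
    nlinarith
  have hy0' : 0 ≤ 1 - y := by linarith
  have e3 : (1 - y)^2 ≤ (3/2 * r)^2 := pow_le_pow_left₀ hy0' hylb 2
  -- combine
  have e1 : (Real.exp (r*c/2) * y - 1)^2
      ≤ 2 * (y * (Real.exp (r*c/2) - 1))^2 + 2 * (1 - y)^2 := by
    nlinarith [sq_nonneg (y * (Real.exp (r*c/2) - 1) - (y - 1))]
  have hmain : (Real.exp (r*c/2) * y - 1)^2 ≤ (9/2 + Real.exp 3 / 2 * c^2) * r^2 := by
    calc (Real.exp (r*c/2) * y - 1)^2
        ≤ 2 * (Real.exp 3 * (r*c/2)^2) + 2 * ((3/2 * r)^2) := by linarith [e1, e2, e3]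
    _ = (9/2 + Real.exp 3 / 2 * c^2) * r^2 := by ring
  have hrp : (0:ℝ) ≤ r ^ (-(α+1)) := Real.rpow_nonneg hr.le _
  have hpow : r^2 * r ^ (-(α+1)) = r ^ (1-α) := by
    rw [← Real.rpow_natCast r 2, ← Real.rpow_add hr]
    congr 1
    push_cast; ring
  calc ((Real.exp (r * c) * r ^ (α + 1) / E ^ (α + 1)) ^ ((1:ℝ)/2) - 1) ^ 2 * r ^ (-(α + 1))
      = (Real.exp (r*c/2) * y - 1)^2 * r ^ (-(α+1)) := by rw [hroot]
  _ ≤ ((9/2 + Real.exp 3 / 2 * c^2) * r^2) * r ^ (-(α+1)) :=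
      mul_le_mul_of_nonneg_right hmain hrp
  _ = (9/2 + Real.exp 3 / 2 * c^2) * (r^2 * r ^ (-(α+1))) := by ring
  _ = (9/2 + Real.exp 3 / 2 * c^2) * r ^ (1-α) := by rw [hpow]

/-- Pointwise bound on `[1,∞)`. -/
lemma aux_large (α c r : ℝ) (hα1 : 0 ≤ α) (hα2 : α ≤ 2) (hr : 1 ≤ r) :
    ((Real.exp (r * c) * r ^ (α + 1) / (Real.exp r - 1) ^ (α + 1)) ^ ((1:ℝ)/2) - 1) ^ 2
      * r ^ (-(α + 1))
    ≤ 8 * Real.exp (r * (c - (α + 1))) + r ^ (-(α + 1)) := by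
  have hr0 : (0:ℝ) < r := lt_of_lt_of_le one_pos hr
  have h2e : (2:ℝ) ≤ Real.exp r := by
    have ha := Real.add_one_le_exp 1
    have hb : Real.exp 1 ≤ Real.exp r := Real.exp_le_exp.mpr hr
    linarith
  have hE : 0 < Real.exp r - 1 := by linarith
  set x := Real.exp (r * c) * r ^ (α + 1) / (Real.exp r - 1) ^ (α + 1) with hx
  have hx0 : 0 ≤ x := by
    apply div_nonneg (mul_nonneg (Real.exp_nonneg _) (Real.rpow_nonneg hr0.le _))
      (Real.rpow_nonneg hE.le _)
  have hsq : (x ^ ((1:ℝ)/2))^2 = x := by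
    rw [← Real.rpow_natCast (x ^ ((1:ℝ)/2)) 2, ← Real.rpow_mul hx0]
    norm_num
  have hs0 : 0 ≤ x ^ ((1:ℝ)/2) := Real.rpow_nonneg hx0 _
  have h1 : (x ^ ((1:ℝ)/2) - 1)^2 ≤ x + 1 := by nlinarith [hsq, hs0]
  have hrpn : (0:ℝ) ≤ r ^ (-(α+1)) := Real.rpow_nonneg hr0.le _
  have hrr : r ^ (α+1) * r ^ (-(α+1)) = 1 := by
    rw [← Real.rpow_add hr0, show α + 1 + -(α+1) = 0 by ring, Real.rpow_zero]
  have h2 : x * r ^ (-(α+1)) = Real.exp (r*c) / (Real.exp r - 1) ^ (α+1) := by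
    calc x * r ^ (-(α+1))
        = Real.exp (r*c) / (Real.exp r - 1) ^ (α+1) * (r ^ (α+1) * r ^ (-(α+1))) := by
          rw [hx]; ring
    _ = Real.exp (r*c) / (Real.exp r - 1) ^ (α+1) := by rw [hrr, mul_one]
  have h3 : Real.exp (r*c) / (Real.exp r - 1) ^ (α+1) ≤ 8 * Real.exp (r * (c - (α+1))) := by
    have hEhalf : Real.exp r / 2 ≤ Real.exp r - 1 := by linarith
    have hb1 : (Real.exp r / 2) ^ (α+1) ≤ (Real.exp r - 1) ^ (α+1) :=
      Real.rpow_le_rpow (by positivity) hEhalf (by linarith)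
    have hb2 : (Real.exp r / 2) ^ (α+1) = Real.exp (r * (α+1)) / 2 ^ (α+1) := by
      rw [Real.div_rpow (Real.exp_nonneg _) (by norm_num : (0:ℝ) ≤ 2), ← Real.exp_mul]
    have hb3 : (2:ℝ) ^ (α+1) ≤ 8 := by
      calc (2:ℝ) ^ (α+1) ≤ 2 ^ (3:ℝ) :=
          Real.rpow_le_rpow_of_exponent_le one_le_two (by linarith)
      _ = 8 := by
          rw [show (3:ℝ) = ((3:ℕ):ℝ) by norm_num, Real.rpow_natCast]; norm_num
    have h2pos : (0:ℝ) < 2 ^ (α+1) := Real.rpow_pos_of_pos two_pos _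
    have hb4 : Real.exp (r * (α+1)) / 8 ≤ (Real.exp r - 1) ^ (α+1) := by
      have hdd : Real.exp (r * (α+1)) / 8 ≤ Real.exp (r * (α+1)) / 2 ^ (α+1) := by
        gcongr
      rw [hb2] at hb1
      linarith
    have hd : 0 < (Real.exp r - 1) ^ (α+1) := Real.rpow_pos_of_pos hE _
    rw [div_le_iff₀ hd]
    calc Real.exp (r*c)
        = 8 * Real.exp (r * (c - (α+1))) * (Real.exp (r * (α+1)) / 8) := by
          rw [show 8 * Real.exp (r * (c - (α+1))) * (Real.exp (r * (α+1)) / 8)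
              = Real.exp (r * (c - (α+1))) * Real.exp (r * (α+1)) by ring,
            ← Real.exp_add]
          ring_nf
    _ ≤ 8 * Real.exp (r * (c - (α+1))) * (Real.exp r - 1) ^ (α+1) := by
        apply mul_le_mul_of_nonneg_left hb4 (by positivity)
  calc (x ^ ((1:ℝ)/2) - 1)^2 * r ^ (-(α+1)) ≤ (x + 1) * r ^ (-(α+1)) :=
      mul_le_mul_of_nonneg_right h1 hrpn
  _ = x * r ^ (-(α+1)) + r ^ (-(α+1)) := by ring
  _ ≤ 8 * Real.exp (r * (c - (α+1))) + r ^ (-(α+1)) := by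
      rw [h2]; linarith

theorem lamperti_stable_hellinger_integrability
    (d : ℕ) (hd : 1 ≤ d) (α : ℝ) (hα : α ∈ Set.Ioo (0:ℝ) 2)
    (σ : Measure (Metric.sphere (0 : EuclideanSpace ℝ (Fin d)) 1))
    [IsFiniteMeasure σ] (hσ : σ ≠ 0)
    (f : Metric.sphere (0 : EuclideanSpace ℝ (Fin d)) 1 → ℝ)
    (hf : Measurable f) (hbdd : BddAbove (Set.range f))
    (hγ : (⨆ ξ, f ξ) < α + 1)
    (hf2 : ∫⁻ ξ, ENNReal.ofReal ((f ξ) ^ 2) ∂σ < ⊤) :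
    ∫⁻ ξ, (∫⁻ r in Set.Ioi (0:ℝ),
        ENNReal.ofReal
          (((Real.exp (r * f ξ) * r ^ (α + 1) / (Real.exp r - 1) ^ (α + 1)) ^ ((1:ℝ)/2) - 1) ^ 2
            * r ^ (-(α + 1)))) ∂σ
      < ⊤ := by
  obtain ⟨hα0, hα2⟩ := hα
  set γ := ⨆ ξ, f ξ with hγdef
  have hδ : 0 < (α + 1) - γ := by linarith
  have hcle : ∀ ξ, f ξ ≤ γ := fun ξ => le_ciSup hbdd ξ
  have hc3 : ∀ ξ, f ξ ≤ 3 := fun ξ => le_trans (hcle ξ) (by linarith)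
  set J1 : ENNReal := ∫⁻ r in Ioc (0:ℝ) 1, ENNReal.ofReal (r ^ (1 - α)) with hJ1
  set J2 : ENNReal := ∫⁻ r in Ioi (1:ℝ),
    ENNReal.ofReal (8 * Real.exp (-((α + 1) - γ) * r) + r ^ (-(α + 1))) with hJ2
  have mr1 : Measurable fun r : ℝ => r ^ (1 - α) := measurable_id.pow_const (1 - α)
  have mr2 : Measurable fun r : ℝ => r ^ (-(α + 1)) := measurable_id.pow_const (-(α + 1))
  have m1 : Measurable fun r : ℝ => ENNReal.ofReal (r ^ (1 - α)) := mr1.ennreal_ofReal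
  have m2 : Measurable fun r : ℝ =>
      ENNReal.ofReal (8 * Real.exp (-((α + 1) - γ) * r) + r ^ (-(α + 1))) :=
    (((Real.measurable_exp.comp (measurable_id.const_mul _)).const_mul 8).add mr2).ennreal_ofReal
  have hJ1top : J1 < ⊤ := by
    have hint : IntegrableOn (fun r : ℝ => r ^ (1 - α)) (Ioc 0 1) := by
      have h := intervalIntegral.intervalIntegrable_rpow'
        (a := 0) (b := 1) (r := 1 - α) (by linarith)
      rwa [intervalIntegrable_iff, uIoc_of_le zero_le_one] at h
    exact hint.lintegral_lt_top
  have hJ2top : J2 < ⊤ := by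
    have h1 : IntegrableOn (fun r : ℝ => 8 * Real.exp (-((α + 1) - γ) * r)) (Ioi 1) :=
      (exp_neg_integrableOn_Ioi 1 hδ).const_mul 8
    have h2 : IntegrableOn (fun r : ℝ => r ^ (-(α + 1))) (Ioi 1) :=
      integrableOn_Ioi_rpow_of_lt (by linarith) one_pos
    exact (h1.add h2).lintegral_lt_top
  have hinner : ∀ ξ, (∫⁻ r in Set.Ioi (0:ℝ),
      ENNReal.ofReal
        (((Real.exp (r * f ξ) * r ^ (α + 1) / (Real.exp r - 1) ^ (α + 1)) ^ ((1:ℝ)/2) - 1) ^ 2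
          * r ^ (-(α + 1))))
      ≤ ENNReal.ofReal (9/2 + Real.exp 3 / 2 * (f ξ)^2) * J1 + J2 := by
    intro ξ
    rw [← Ioc_union_Ioi_eq_Ioi (zero_le_one (α := ℝ)),
      lintegral_union measurableSet_Ioi (Ioc_disjoint_Ioi le_rfl)]
    apply add_le_add
    · calc ∫⁻ r in Ioc (0:ℝ) 1, ENNReal.ofReal
            (((Real.exp (r * f ξ) * r ^ (α + 1) / (Real.exp r - 1) ^ (α + 1)) ^ ((1:ℝ)/2) - 1) ^ 2
              * r ^ (-(α + 1)))
          ≤ ∫⁻ r in Ioc (0:ℝ) 1,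
              ENNReal.ofReal ((9/2 + Real.exp 3 / 2 * (f ξ)^2) * r ^ (1 - α)) := by
            apply setLIntegral_mono ((measurable_const.mul mr1).ennreal_ofReal)
            intro r hr
            exact ENNReal.ofReal_le_ofReal
              (aux_small α (f ξ) r hα0.le hα2.le (hc3 ξ) hr.1 hr.2)
      _ = ENNReal.ofReal (9/2 + Real.exp 3 / 2 * (f ξ)^2) * J1 := by
          simp_rw [ENNReal.ofReal_mul (show (0:ℝ) ≤ 9/2 + Real.exp 3 / 2 * (f ξ)^2 by positivity)]
          rw [lintegral_const_mul _ m1]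
    · apply setLIntegral_mono m2
      intro r hr
      apply ENNReal.ofReal_le_ofReal
      calc ((Real.exp (r * f ξ) * r ^ (α + 1) / (Real.exp r - 1) ^ (α + 1)) ^ ((1:ℝ)/2) - 1) ^ 2
            * r ^ (-(α + 1))
          ≤ 8 * Real.exp (r * (f ξ - (α + 1))) + r ^ (-(α + 1)) :=
            aux_large α (f ξ) r hα0.le hα2.le (le_of_lt hr)
      _ ≤ 8 * Real.exp (-((α + 1) - γ) * r) + r ^ (-(α + 1)) := by
          have hr0 : (0:ℝ) ≤ r := le_trans zero_le_one (le_of_lt hr)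
          have hexp : r * (f ξ - (α + 1)) ≤ -((α + 1) - γ) * r := by
            nlinarith [mul_le_mul_of_nonneg_left (hcle ξ) hr0]
          have := Real.exp_le_exp.mpr hexp
          linarith
  have meas : Measurable fun ξ => ENNReal.ofReal (9/2 + Real.exp 3 / 2 * (f ξ)^2) :=
    (measurable_const.add (measurable_const.mul (hf.pow_const 2))).ennreal_ofReal
  calc ∫⁻ ξ, (∫⁻ r in Set.Ioi (0:ℝ),
        ENNReal.ofReal
          (((Real.exp (r * f ξ) * r ^ (α + 1) / (Real.exp r - 1) ^ (α + 1)) ^ ((1:ℝ)/2) - 1) ^ 2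
            * r ^ (-(α + 1)))) ∂σ
      ≤ ∫⁻ ξ, (ENNReal.ofReal (9/2 + Real.exp 3 / 2 * (f ξ)^2) * J1 + J2) ∂σ :=
        lintegral_mono hinner
  _ = (∫⁻ ξ, ENNReal.ofReal (9/2 + Real.exp 3 / 2 * (f ξ)^2) ∂σ) * J1 + J2 * σ univ := by
      rw [lintegral_add_right _ measurable_const, lintegral_const,
        lintegral_mul_const _ meas]
  _ < ⊤ := by
      have hK : (∫⁻ ξ, ENNReal.ofReal (9/2 + Real.exp 3 / 2 * (f ξ)^2) ∂σ) < ⊤ := by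
        have heq : ∀ ξ, ENNReal.ofReal (9/2 + Real.exp 3 / 2 * (f ξ)^2)
            = ENNReal.ofReal (9/2) + ENNReal.ofReal (Real.exp 3 / 2) * ENNReal.ofReal ((f ξ)^2) := by
          intro ξ
          rw [ENNReal.ofReal_add (by norm_num) (by positivity),
            ENNReal.ofReal_mul (by positivity)]
        simp_rw [heq]
        rw [lintegral_add_left measurable_const,
          lintegral_const, lintegral_const_mul _ ((hf.pow_const 2).ennreal_ofReal)]
        exact ENNReal.add_lt_top.mpr
          ⟨ENNReal.mul_lt_top ENNReal.ofReal_lt_top (measure_lt_top σ univ),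
           ENNReal.mul_lt_top ENNReal.ofReal_lt_top hf2⟩
      exact ENNReal.add_lt_top.mpr
        ⟨ENNReal.mul_lt_top hK hJ1top,
         ENNReal.mul_lt_top hJ2top (measure_lt_top σ univ)⟩
end

section
/- Let α ∈ (0,2) and β < α + 1, and let g : ℝ → ℝ be a bounded continuous function that vanishes on a neighborhood of 0 (i.e. there is δ > 0 with g ≡ 0 on (−δ, δ)). Then lim_{h → ∞} h · ∫_0^∞ g(h^{−1/2} r) · e^{β r}(e^r − 1)^{−(α+1)} dr = 0. (This is the vague convergence to zero of the rescaled Lamperti stable Lévy measures h·T_{h^{−1/2}}ν, the key step in proving that a Lamperti stable process rescaled by h^{−1/2} converges in long time to a Brownian motion.) -/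
open MeasureTheory Set Filter

set_option maxHeartbeats 1000000 in
theorem lamperti_stable_rescaled_levy_measure_vague_limit
    (α β : ℝ) (hα : α ∈ Set.Ioo (0:ℝ) 2) (hβ : β < α + 1)
    (g : ℝ → ℝ) (hg : Continuous g) (hgbdd : ∃ C : ℝ, ∀ x : ℝ, |g x| ≤ C)
    (hgvan : ∃ δ > (0:ℝ), ∀ x : ℝ, |x| < δ → g x = 0) :
    Filter.Tendsto
      (fun h : ℝ => h * ∫ r in Set.Ioi (0:ℝ),
        g (h ^ (-(1:ℝ)/2) * r) * Real.exp (β * r) * (Real.exp r - 1) ^ (-(α + 1)))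
      Filter.atTop (nhds 0) := by
  obtain ⟨hα0, hα2⟩ := hα
  obtain ⟨C, hC⟩ := hgbdd
  obtain ⟨δ, hδ, hvan⟩ := hgvan
  have hC0 : 0 ≤ C := (abs_nonneg _).trans (hC 0)
  set ε : ℝ := α + 1 - β with hεdef
  have hε : 0 < ε := by simp only [hεdef]; linarith
  set M : ℝ := C * 2 ^ (α + 1) with hMdef
  have hM0 : 0 ≤ M := mul_nonneg hC0 (Real.rpow_nonneg (by norm_num) _)
  set I : ℝ := ∫ r in Ioi (0:ℝ), Real.exp ((-(ε / 2) * r)) with hIdef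
  have hIint : IntegrableOn (fun r => Real.exp ((-(ε / 2) * r))) (Ioi (0:ℝ)) :=
    exp_neg_integrableOn_Ioi 0 (by positivity)
  have hI0 : 0 ≤ I := integral_nonneg fun r => (Real.exp_pos _).le
  set c : ℝ := ε * δ / 2 with hcdef
  have hc : 0 < c := by positivity
  have key : ∀ᶠ h in atTop,
      ‖h * ∫ r in Ioi (0:ℝ),
        g (h ^ (-(1:ℝ)/2) * r) * Real.exp (β * r) * (Real.exp r - 1) ^ (-(α + 1))‖
      ≤ (M * I) * (h * Real.exp (-(c * h ^ ((1:ℝ)/2)))) := by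
    filter_upwards [eventually_ge_atTop (max 1 (δ⁻¹ ^ 2))] with h hh
    have h1 : (1:ℝ) ≤ h := le_trans (le_max_left _ _) hh
    have h0 : (0:ℝ) < h := lt_of_lt_of_le one_pos h1
    set s : ℝ := h ^ ((1:ℝ)/2) with hs
    have hs0 : 0 < s := Real.rpow_pos_of_pos h0 _
    have hss : s * s = h := by
      rw [hs, ← Real.rpow_add h0]
      norm_num
    have hsinv : h ^ (-(1:ℝ)/2) = s⁻¹ := by
      rw [neg_div, Real.rpow_neg h0.le, hs]
    have hds : δ⁻¹ ≤ s := by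
      have h2 : δ⁻¹ ^ 2 ≤ s * s := by rw [hss]; exact le_trans (le_max_right _ _) hh
      nlinarith [inv_pos.mpr hδ]
    have ha1 : 1 ≤ δ * s :=
      calc (1:ℝ) = δ * δ⁻¹ := (mul_inv_cancel₀ hδ.ne').symm
        _ ≤ δ * s := by gcongr
    have hbound : ∀ r ∈ Ioi (0:ℝ),
        ‖g (h ^ (-(1:ℝ)/2) * r) * Real.exp (β * r) * (Real.exp r - 1) ^ (-(α + 1))‖
        ≤ M * Real.exp ((-(ε / 2) * (δ * s))) * Real.exp ((-(ε / 2) * r)) := by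
      intro r hr
      have hr0 : (0:ℝ) < r := hr
      rcases lt_or_ge r (δ * s) with hlt | hge
      · have hzero : g (h ^ (-(1:ℝ)/2) * r) = 0 := by
          apply hvan
          rw [hsinv, abs_of_nonneg (by positivity), inv_mul_eq_div, div_lt_iff₀ hs0]
          linarith [hlt]
        rw [hzero, zero_mul, zero_mul, norm_zero]
        positivity
      · have hr1 : (1:ℝ) ≤ r := le_trans ha1 hge
        have e1 : (2:ℝ) ≤ Real.exp r := by
          have := Real.add_one_le_exp (1:ℝ)
          have h2 := Real.exp_le_exp.mpr hr1
          linarith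
        have hpos : (0:ℝ) < Real.exp r - 1 := by linarith
        have step1 : (Real.exp r - 1) ^ (-(α + 1)) ≤ (Real.exp r / 2) ^ (-(α + 1)) := by
          apply Real.rpow_le_rpow_of_nonpos (by positivity) (by linarith) (by linarith)
        have step2 : (Real.exp r / 2) ^ (-(α + 1))
            = 2 ^ (α + 1) * Real.exp (-(α + 1) * r) := by
          rw [Real.div_rpow (Real.exp_pos r).le (by norm_num),
            ← Real.exp_mul, Real.rpow_neg (by norm_num : (0:ℝ) ≤ 2)]
          rw [div_eq_mul_inv, inv_inv, mul_comm, mul_comm r]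
        have habs : ‖g (h ^ (-(1:ℝ)/2) * r) * Real.exp (β * r) * (Real.exp r - 1) ^ (-(α + 1))‖
            = |g (h ^ (-(1:ℝ)/2) * r)| * Real.exp (β * r) * (Real.exp r - 1) ^ (-(α + 1)) := by
          rw [Real.norm_eq_abs, abs_mul, abs_mul, abs_of_nonneg (Real.exp_pos _).le,
            abs_of_nonneg (Real.rpow_nonneg hpos.le _)]
        rw [habs]
        calc |g (h ^ (-(1:ℝ)/2) * r)| * Real.exp (β * r) * (Real.exp r - 1) ^ (-(α + 1))
            ≤ C * Real.exp (β * r) * (2 ^ (α + 1) * Real.exp (-(α + 1) * r)) := by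
              rw [← step2]
              exact mul_le_mul (mul_le_mul_of_nonneg_right (hC _) (Real.exp_pos _).le)
                step1 (Real.rpow_nonneg hpos.le _)
                (mul_nonneg hC0 (Real.exp_pos _).le)
          _ = M * Real.exp (-(ε * r)) := by
              rw [hMdef, hεdef]
              rw [mul_mul_mul_comm, ← Real.exp_add]
              ring_nf
          _ ≤ M * Real.exp ((-(ε / 2) * (δ * s)) + (-(ε / 2) * r)) := by
              gcongr
              nlinarith
          _ = M * Real.exp ((-(ε / 2) * (δ * s))) * Real.exp ((-(ε / 2) * r)) := by
              rw [Real.exp_add]; ring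
    have hintle : ‖∫ r in Ioi (0:ℝ),
        g (h ^ (-(1:ℝ)/2) * r) * Real.exp (β * r) * (Real.exp r - 1) ^ (-(α + 1))‖
        ≤ ∫ r in Ioi (0:ℝ), M * Real.exp ((-(ε / 2) * (δ * s))) * Real.exp ((-(ε / 2) * r)) := by
      apply norm_integral_le_of_norm_le (hIint.const_mul _)
      exact (ae_restrict_iff' measurableSet_Ioi).mpr (ae_of_all _ hbound)
    have hIval : (∫ r in Ioi (0:ℝ), M * Real.exp ((-(ε / 2) * (δ * s))) * Real.exp ((-(ε / 2) * r)))
        = M * Real.exp ((-(ε / 2) * (δ * s))) * I := by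
      rw [hIdef, ← integral_const_mul]
    rw [hIval] at hintle
    rw [norm_mul, Real.norm_eq_abs, Real.norm_eq_abs, abs_of_pos h0]
    calc h * |∫ r in Ioi (0:ℝ),
          g (h ^ (-(1:ℝ)/2) * r) * Real.exp (β * r) * (Real.exp r - 1) ^ (-(α + 1))|
        ≤ h * (M * Real.exp ((-(ε / 2) * (δ * s))) * I) := by
          apply mul_le_mul_of_nonneg_left _ h0.le
          simpa [Real.norm_eq_abs] using hintle
      _ = (M * I) * (h * Real.exp (-(c * s))) := by
          rw [hcdef]; ring_nf
  have hlim : Tendsto (fun h : ℝ => (M * I) * (h * Real.exp (-(c * h ^ ((1:ℝ)/2)))))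
      atTop (nhds 0) := by
    have h1 : Tendsto (fun t : ℝ => t ^ 2 * Real.exp (-t)) atTop (nhds 0) :=
      Real.tendsto_pow_mul_exp_neg_atTop_nhds_zero 2
    have h2 : Tendsto (fun h : ℝ => c * h ^ ((1:ℝ)/2)) atTop atTop :=
      (tendsto_rpow_atTop (by norm_num)).const_mul_atTop hc
    have h3 := h1.comp h2
    have h4 : Tendsto (fun h : ℝ =>
        (M * I / c ^ 2) * ((c * h ^ ((1:ℝ)/2)) ^ 2 * Real.exp (-(c * h ^ ((1:ℝ)/2)))))
        atTop (nhds 0) := by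
      simpa using h3.const_mul (M * I / c ^ 2)
    apply h4.congr'
    filter_upwards [eventually_ge_atTop (0:ℝ)] with h hh
    have hss : h ^ ((1:ℝ)/2) * h ^ ((1:ℝ)/2) = h := by
      rw [← Real.rpow_add']
      · norm_num
      · exact hh
      · norm_num
    have hsq : (c * h ^ ((1:ℝ)/2)) ^ 2 = c ^ 2 * h := by rw [mul_pow, pow_two (h ^ ((1:ℝ)/2)), hss]
    rw [hsq]
    field_simp
  exact squeeze_zero_norm' key hlim
end
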